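/- arXiv:0707.3271 — 4 statements merged into one kernel-verified Lean document; each statement's English description precedes it below -/
import Mathlib

section
/- There exist ξ, η ∈ c₀* with ξ_n ≤ η_n for all n such that η_{a²} = O(ξ_{a²}) (hence ξ_{a²} ≍ η_{a²}), but η_a ≠ O(ξ_a), i.e., for every C > 0 there is some n with (η_a)_n > C·(ξ_a)_n. (Consequently there are principal ideals J ⊂ I with J_{a²} = I_{a²} but J_a ≠ I_a, answering a question of Wodzicki in the negative.) -/
set_option maxHeartbeats 1000000


/-- `ξ ∈ c₀*`: nonnegative, nonincreasing, converging to 0 (0-based indexing). -/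
def IsC0Star (ξ : ℕ → ℝ) : Prop :=
  (∀ n, 0 ≤ ξ n) ∧ (∀ n, ξ (n + 1) ≤ ξ n) ∧ Filter.Tendsto ξ Filter.atTop (nhds 0)

/-- The arithmetic mean `(ξ_a)_n = (1/n)∑_{j=1}^n ξ_j` (0-based indexing). -/
noncomputable def am (ξ : ℕ → ℝ) (n : ℕ) : ℝ :=
  (∑ j ∈ Finset.range (n + 1), ξ j) / (n + 1)

/-- `ξ = O(η)`: `ξ_n ≤ C·η_n` for all `n`, for some `C > 0`. -/
def BigO (ξ η : ℕ → ℝ) : Prop :=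
  ∃ C : ℝ, 0 < C ∧ ∀ n, ξ n ≤ C * η n


open Finset

namespace S9

/-! ### Exponent bookkeeping sequences -/

def Lk (k : ℕ) : ℕ := 2^(2*k+8)

def pik : ℕ → ℕ
  | 0 => 0
  | k+1 => pik k + Lk k + (3*k+8)

def rk (k : ℕ) : ℕ := pik k + Lk k

def muk : ℕ → ℕ
  | 0 => 0
  | 1 => 12
  | k+2 => muk (k+1) + 3*(k+1)+10

def dk : ℕ → ℕ
  | 0 => 0
  | k+1 => k+3

def ak (k : ℕ) : ℕ := rk k - (muk k + k + 3)

def hk (k : ℕ) : ℕ := ak k + dk k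

lemma nle {m e : ℕ} (h : m ≤ e) : m ≤ 2^e := h.trans (Nat.lt_two_pow_self (n := e)).le

lemma Lk_ge (k : ℕ) : 4*k + 256 ≤ Lk k := by
  simp only [Lk]
  induction k with
  | zero => norm_num
  | succ k ih =>
      have h : 2^(2*(k+1)+8) = 4 * 2^(2*k+8) := by
        rw [show 2*(k+1)+8 = (2*k+8)+2 by ring, pow_add]; ring
      omega

lemma muk_succ_ge (k : ℕ) : muk k + k + 5 ≤ muk (k+1) ∧ muk (k+1) ≤ muk k + 3*k + 12 ∧
    muk k + 2*k + 10 ≤ muk (k+1) := by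
  match k with
  | 0 => simp [muk]
  | k+1 => simp only [muk]; omega

lemma muk_le_Lk (k : ℕ) : muk k + k + 3 ≤ Lk k := by
  induction k with
  | zero => simp [muk, Lk]
  | succ k ih =>
      have h1 := muk_succ_ge k
      have h2 : 4*(k+1) + 256 ≤ Lk (k+1) := Lk_ge (k+1)
      have h3 : 4*Lk k = Lk (k+1) := by
        simp only [Lk]; rw [show 2*(k+1)+8 = (2*k+8)+2 by ring, pow_add]; ring
      omega

lemma ak_add (k : ℕ) : ak k + (muk k + k + 3) = rk k := by
  have h := muk_le_Lk k
  have : muk k + k + 3 ≤ rk k := by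
    have : Lk k ≤ rk k := by simp [rk]
    omega
  simp only [ak]
  omega

lemma pik_succ (k : ℕ) : pik (k+1) = rk k + (3*k+8) := by simp [pik, rk]

lemma hmu (k : ℕ) : hk k + muk (k+1) = pik (k+1) + 1 := by
  have h1 := ak_add k
  have h2 := pik_succ k
  match k with
  | 0 =>
      simp only [hk, dk, muk] at *
      omega
  | k+1 =>
      simp only [hk, dk, muk] at *
      omega

lemma rk_sub (k : ℕ) : rk k + (k + 2) = ak k + (muk k + 2*k + 5) := by
  have := ak_add k; omega

lemma dk_le (k : ℕ) : dk k ≤ k + 2 := by cases k <;> simp [dk]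

lemma pik_lt_rk (k : ℕ) : pik k + 256 ≤ rk k := by
  have := Lk_ge k; simp only [rk]; omega

lemma rk_lt_pik (k : ℕ) : rk k + 8 ≤ pik (k+1) := by rw [pik_succ]; omega

lemma pik_ge (k : ℕ) : k ≤ pik k := by
  induction k with
  | zero => simp [pik]
  | succ k ih => have := Lk_ge k; simp only [pik]; omega

lemma pik_strictMono : StrictMono pik := by
  apply strictMono_nat_of_lt_succ
  intro k
  have h1 := pik_lt_rk k
  have h2 := rk_lt_pik k
  omega

lemma hk_lt_ak_succ (k : ℕ) : hk k + 1 ≤ ak (k+1) := by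
  have h1 := ak_add k
  have h2 := ak_add (k+1)
  have h3 := pik_succ k
  have h4 := muk_succ_ge k
  have h5 := Lk_ge (k+1)
  have h6 := dk_le k
  have h7 : rk (k+1) = pik (k+1) + Lk (k+1) := rfl
  simp only [hk] at *
  omega

lemma ak_le_hk (k : ℕ) : ak k ≤ hk k := by simp [hk]

lemma hk_mono_lt {k k' : ℕ} (h : k < k') : hk k + 1 ≤ ak k' := by
  induction k' with
  | zero => omega
  | succ k' ih =>
      rcases Nat.lt_succ_iff_lt_or_eq.mp h with h' | h'
      · have := hk_lt_ak_succ k'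
        have := ak_le_hk k'
        have := ih h'
        omega
      · subst h'; exact hk_lt_ak_succ k

lemma ak_ge (k : ℕ) : k ≤ ak k := by
  have h1 := ak_add k
  have h2 := muk_le_Lk k
  have h3 : pik k + Lk k = rk k := rfl
  have h4 := pik_ge k
  omega

/-! ### Stage function -/

def stg (j : ℕ) : ℕ := Nat.findGreatest (fun k => pik k ≤ j) j

lemma pik_stg_le (j : ℕ) : pik (stg j) ≤ j :=
  Nat.findGreatest_spec (P := fun k => pik k ≤ j) (Nat.zero_le j) (by simp [pik])

lemma lt_pik_stg_succ (j : ℕ) : j < pik (stg j + 1) := by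
  by_contra h
  push_neg at h
  have h2 : stg j + 1 ≤ j := le_trans (pik_ge _) h
  have := Nat.le_findGreatest (P := fun k => pik k ≤ j) h2 h
  simp only [stg] at this
  omega

lemma stg_eq_of {k j : ℕ} (h1 : pik k ≤ j) (h2 : j < pik (k+1)) : stg j = k := by
  have ha : k ≤ stg j := Nat.le_findGreatest (P := fun k => pik k ≤ j) (le_trans (pik_ge k) h1) h1
  have hb : pik (stg j) ≤ j := pik_stg_le j
  have : pik (stg j) < pik (k+1) := lt_of_le_of_lt hb h2
  have := pik_strictMono.lt_iff_lt.mp this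
  omega

lemma stg_mono : Monotone stg := by
  intro j j' h
  have h1 : pik (stg j) ≤ j' := le_trans (pik_stg_le j) h
  have h2 := lt_pik_stg_succ j'
  have : pik (stg j) < pik (stg j' + 1) := lt_of_le_of_lt h1 h2
  have := pik_strictMono.lt_iff_lt.mp this
  omega

lemma stg_ge {k j : ℕ} (h : pik k ≤ j) : k ≤ stg j :=
  Nat.le_findGreatest (P := fun k => pik k ≤ j) (le_trans (pik_ge k) h) h


lemma pik_zero : pik 0 = 0 := rfl
lemma dk_zero : dk 0 = 0 := rfl
lemma dk_succ (k : ℕ) : dk (k+1) = k+3 := rfl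
lemma hk_def (k : ℕ) : hk k = ak k + dk k := rfl
lemma rk_def (k : ℕ) : rk k = pik k + Lk k := rfl
lemma Lk_def (k : ℕ) : Lk k = 2^(2*k+8) := rfl
/-! ### The sequences -/

noncomputable def ee (j : ℕ) : ℕ := if j < rk (stg j) then ak (stg j) else hk (stg j)
noncomputable def fe (j : ℕ) : ℕ := if j + dk (stg j) < rk (stg j) then ak (stg j) else hk (stg j)

noncomputable def eta (n : ℕ) : ℝ := ((2:ℝ)^(ee (Nat.log 2 (n+1))))⁻¹
noncomputable def xi (n : ℕ) : ℝ := ((2:ℝ)^(fe (Nat.log 2 (n+1))))⁻¹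

lemma ee_le_fe (j : ℕ) : ee j ≤ fe j := by
  simp only [ee, fe]
  split_ifs with h1 h2 h3 <;> first | rfl | exact ak_le_hk _ | omega

lemma ak_stg_le_ee (j : ℕ) : ak (stg j) ≤ ee j := by
  simp only [ee]; split_ifs <;> first | rfl | exact ak_le_hk _

lemma ee_le_hk_stg (j : ℕ) : ee j ≤ hk (stg j) := by
  simp only [ee]; split_ifs <;> first | rfl | exact ak_le_hk _

lemma ak_stg_le_fe (j : ℕ) : ak (stg j) ≤ fe j := by
  simp only [fe]; split_ifs <;> first | rfl | exact ak_le_hk _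

lemma fe_le_hk_stg (j : ℕ) : fe j ≤ hk (stg j) := by
  simp only [fe]; split_ifs <;> first | rfl | exact ak_le_hk _

lemma ee_mono : Monotone ee := by
  intro j j' h
  rcases eq_or_lt_of_le (stg_mono h) with hs | hs
  · simp only [ee, ← hs]
    split_ifs with h1 h2 <;> first | rfl | exact ak_le_hk _ | omega
  · calc ee j ≤ hk (stg j) := ee_le_hk_stg j
      _ ≤ ak (stg j') := by have := hk_mono_lt hs; omega
      _ ≤ ee j' := ak_stg_le_ee j'

lemma fe_mono : Monotone fe := by
  intro j j' h
  rcases eq_or_lt_of_le (stg_mono h) with hs | hs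
  · simp only [fe, ← hs]
    split_ifs with h1 h2 <;> first | rfl | exact ak_le_hk _ | omega
  · calc fe j ≤ hk (stg j) := fe_le_hk_stg j
      _ ≤ ak (stg j') := by have := hk_mono_lt hs; omega
      _ ≤ fe j' := ak_stg_le_fe j'

lemma ee_eq_plat {K j : ℕ} (h1 : pik K ≤ j) (h2 : j < rk K) : ee j = ak K := by
  have hs : stg j = K := stg_eq_of h1 (by have := rk_lt_pik K; omega)
  simp only [ee, hs, if_pos h2]

lemma ee_eq_rest {K j : ℕ} (h1 : rk K ≤ j) (h2 : j < pik (K+1)) : ee j = hk K := by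
  have hs : stg j = K := stg_eq_of (by have := pik_lt_rk K; omega) h2
  simp only [ee, hs]
  rw [if_neg (by omega : ¬ j < rk K)]

lemma fe_eq_plat {K j : ℕ} (h1 : pik K ≤ j) (h2 : j + dk K < rk K) : fe j = ak K := by
  have hs : stg j = K := stg_eq_of h1 (by have := rk_lt_pik K; omega)
  simp only [fe, hs, if_pos h2]

lemma fe_eq_rest {K j : ℕ} (h1 : pik K ≤ j) (h1' : rk K ≤ j + dk K) (h2 : j < pik (K+1)) :
    fe j = hk K := by
  have hs : stg j = K := stg_eq_of h1 h2
  simp only [fe, hs]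
  rw [if_neg (by omega : ¬ j + dk K < rk K)]

/-! ### Basic properties of eta and xi -/

lemma inv_pow_le {a b : ℕ} (h : a ≤ b) : ((2:ℝ)^b)⁻¹ ≤ ((2:ℝ)^a)⁻¹ := by
  apply inv_anti₀ (by positivity)
  exact pow_le_pow_right₀ (by norm_num) h

lemma eta_pos (n : ℕ) : 0 < eta n := by simp only [eta]; positivity
lemma xi_pos (n : ℕ) : 0 < xi n := by simp only [xi]; positivity

lemma xi_le_eta (n : ℕ) : xi n ≤ eta n := inv_pow_le (ee_le_fe _)

lemma eta_anti (n : ℕ) : eta (n+1) ≤ eta n :=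
  inv_pow_le (ee_mono (Nat.log_mono_right (by omega)))

lemma xi_anti (n : ℕ) : xi (n+1) ≤ xi n :=
  inv_pow_le (fe_mono (Nat.log_mono_right (by omega)))

lemma exp_tendsto_aux (g : ℕ → ℕ) (hmono : Monotone g) (hub : ∀ b, ∃ n, b ≤ g n) :
    Filter.Tendsto (fun n => ((2:ℝ)^(g n))⁻¹) Filter.atTop (nhds 0) := by
  have hg : Filter.Tendsto g Filter.atTop Filter.atTop :=
    hmono.tendsto_atTop_atTop hub
  have h0 : Filter.Tendsto (fun k : ℕ => ((2:ℝ)⁻¹)^k) Filter.atTop (nhds 0) :=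
    tendsto_pow_atTop_nhds_zero_of_lt_one (by norm_num) (by norm_num)
  have := h0.comp hg
  convert this using 2 with n
  simp [Function.comp, inv_pow]

lemma ee_log_mono : Monotone (fun n => ee (Nat.log 2 (n+1))) := by
  intro n m h
  exact ee_mono (Nat.log_mono_right (by omega))

lemma fe_log_mono : Monotone (fun n => fe (Nat.log 2 (n+1))) := by
  intro n m h
  exact fe_mono (Nat.log_mono_right (by omega))

lemma log_pow_sub_one (p : ℕ) : Nat.log 2 (2^p - 1 + 1) = p := by
  have : 2^p - 1 + 1 = 2^p := by
    have : (1:ℕ) ≤ 2^p := Nat.one_le_two_pow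
    omega
  rw [this, Nat.log_pow (by norm_num)]

lemma ee_unbounded (b : ℕ) : ∃ n, b ≤ ee (Nat.log 2 (n+1)) := by
  refine ⟨2^(pik b) - 1, ?_⟩
  rw [log_pow_sub_one]
  calc b ≤ stg (pik b) := stg_ge le_rfl
    _ ≤ ak (stg (pik b)) := ak_ge _
    _ ≤ ee (pik b) := ak_stg_le_ee _

lemma fe_unbounded (b : ℕ) : ∃ n, b ≤ fe (Nat.log 2 (n+1)) := by
  obtain ⟨n, hn⟩ := ee_unbounded b
  exact ⟨n, le_trans hn (ee_le_fe _)⟩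

lemma eta_tendsto : Filter.Tendsto eta Filter.atTop (nhds 0) :=
  exp_tendsto_aux _ ee_log_mono ee_unbounded

lemma xi_tendsto : Filter.Tendsto xi Filter.atTop (nhds 0) :=
  exp_tendsto_aux _ fe_log_mono fe_unbounded

/-! ### Powers of two helper -/

noncomputable def P2 (x y : ℕ) : ℝ := (2:ℝ)^x * ((2:ℝ)^y)⁻¹

lemma P2_pos (x y : ℕ) : 0 < P2 x y := by simp only [P2]; positivity

lemma pw_le {x y u v : ℕ} (h : x + v ≤ u + y) : P2 x y ≤ P2 u v := by
  simp only [P2]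
  rw [← div_eq_mul_inv, ← div_eq_mul_inv, div_le_div_iff₀ (by positivity) (by positivity),
    ← pow_add, ← pow_add]
  exact pow_le_pow_right₀ (by norm_num) h

lemma pw_eq {x y u v : ℕ} (h : x + v = u + y) : P2 x y = P2 u v :=
  le_antisymm (pw_le h.le) (pw_le h.ge)

lemma P2_mul (x y u v : ℕ) : P2 x y * P2 u v = P2 (x+u) (y+v) := by
  simp only [P2, pow_add]; ring

lemma P2_x0 (x : ℕ) : P2 x 0 = 2^x := by simp [P2]

lemma P2_halves (x y : ℕ) : P2 x (y+1) + P2 x (y+1) = P2 x y := by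
  simp only [P2, pow_add, pow_one]
  field_simp
  ring

/-! ### Sums over blocks -/

noncomputable def Sc (φ : ℕ → ℝ) (m : ℕ) : ℝ := ∑ i ∈ range m, φ i

lemma log_eq_on_block {j i : ℕ} (h1 : 2^j - 1 ≤ i) (h2 : i < 2^(j+1) - 1) :
    Nat.log 2 (i+1) = j := by
  have e1 : (1:ℕ) ≤ 2^j := Nat.one_le_two_pow
  have e2 : (1:ℕ) ≤ 2^(j+1) := Nat.one_le_two_pow
  exact Nat.log_eq_of_pow_le_of_lt_pow (by omega) (by omega)

lemma Sc_block (v : ℕ → ℝ) (p : ℕ) :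
    Sc (fun n => v (Nat.log 2 (n+1))) (2^p - 1) = ∑ j ∈ range p, (2:ℝ)^j * v j := by
  induction p with
  | zero => simp [Sc]
  | succ p ih =>
      have e1 : (1:ℕ) ≤ 2^p := Nat.one_le_two_pow
      have e2 : 2^p - 1 ≤ 2^(p+1) - 1 := by
        have : (2:ℕ)^p ≤ 2^(p+1) := Nat.pow_le_pow_right (by norm_num) (by omega)
        omega
      have hsplit : Sc (fun n => v (Nat.log 2 (n+1))) (2^(p+1) - 1) =
          Sc (fun n => v (Nat.log 2 (n+1))) (2^p - 1) +
          ∑ i ∈ Ico (2^p - 1) (2^(p+1) - 1), v (Nat.log 2 (i+1)) := by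
        simp only [Sc, Finset.range_eq_Ico]
        rw [← Finset.sum_Ico_consecutive _ (Nat.zero_le _) e2]
      rw [hsplit, ih, Finset.sum_range_succ]
      congr 1
      have hval : ∀ i ∈ Ico (2^p - 1) (2^(p+1) - 1), v (Nat.log 2 (i+1)) = v p := by
        intro i hi
        rw [Finset.mem_Ico] at hi
        rw [log_eq_on_block hi.1 hi.2]
      rw [Finset.sum_congr rfl hval, Finset.sum_const, Nat.card_Ico]
      have hcard : 2^(p+1) - 1 - (2^p - 1) = 2^p := by
        have : (2:ℕ)^(p+1) = 2 * 2^p := by rw [pow_succ]; ring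
        omega
      rw [hcard, nsmul_eq_mul]
      push_cast
      ring

noncomputable def SE (p : ℕ) : ℝ := ∑ j ∈ range p, (2:ℝ)^j * ((2:ℝ)^(ee j))⁻¹
noncomputable def SX (p : ℕ) : ℝ := ∑ j ∈ range p, (2:ℝ)^j * ((2:ℝ)^(fe j))⁻¹

lemma Sc_eta (p : ℕ) : Sc eta (2^p - 1) = SE p := Sc_block (fun j => ((2:ℝ)^(ee j))⁻¹) p
lemma Sc_xi (p : ℕ) : Sc xi (2^p - 1) = SX p := Sc_block (fun j => ((2:ℝ)^(fe j))⁻¹) p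

attribute [irreducible] eta xi ee fe stg pik rk muk ak hk dk Lk

lemma geom_Ico_eq {l u : ℕ} (h : l ≤ u) : ∑ j ∈ Ico l u, (2:ℝ)^j = 2^u - 2^l := by
  rw [Finset.sum_Ico_eq_sub _ h, geom_sum_eq (by norm_num), geom_sum_eq (by norm_num)]
  ring

lemma const_Ico_ub {l u e : ℕ} (h : l ≤ u) :
    ∑ j ∈ Ico l u, P2 j e ≤ P2 u e := by
  have heq0 : ∑ j ∈ Ico l u, P2 j e = (∑ j ∈ Ico l u, (2:ℝ)^j) * ((2:ℝ)^e)⁻¹ := by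
    rw [Finset.sum_mul]; simp only [P2]
  rw [heq0, geom_Ico_eq h, P2]
  have h2 : (0:ℝ) < ((2:ℝ)^e)⁻¹ := by positivity
  nlinarith [pow_pos (show (0:ℝ) < 2 by norm_num) l]

lemma const_Ico_lb {l u e : ℕ} (h : l < u) :
    P2 u (e+1) ≤ ∑ j ∈ Ico l u, P2 j e := by
  have heq : ∑ j ∈ Ico l u, P2 j e = (∑ j ∈ Ico l u, (2:ℝ)^j) * ((2:ℝ)^e)⁻¹ := by
    rw [Finset.sum_mul]; simp only [P2]
  rw [heq, geom_Ico_eq h.le]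
  have h1 : (2:ℝ)^l ≤ 2^u / 2 := by
    have : (2:ℝ)^(l+1) ≤ 2^u := pow_le_pow_right₀ (by norm_num) (by omega)
    rw [pow_succ] at this
    linarith
  have h2 : (0:ℝ) < ((2:ℝ)^e)⁻¹ := by positivity
  have h3 : P2 u (e+1) = ((2:ℝ)^u/2) * ((2:ℝ)^e)⁻¹ := by
    simp only [P2, pow_add, pow_one]
    rw [mul_inv]
    ring
  rw [h3]
  nlinarith

lemma SE_nonneg_term (j : ℕ) : (0:ℝ) ≤ (2:ℝ)^j * ((2:ℝ)^(ee j))⁻¹ := by positivity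
lemma SX_nonneg_term (j : ℕ) : (0:ℝ) ≤ (2:ℝ)^j * ((2:ℝ)^(fe j))⁻¹ := by positivity

lemma SE_nonneg (p : ℕ) : 0 ≤ SE p := Finset.sum_nonneg (fun j _ => SE_nonneg_term j)
lemma SX_nonneg (p : ℕ) : 0 ≤ SX p := Finset.sum_nonneg (fun j _ => SX_nonneg_term j)

lemma SE_mono : Monotone SE := by
  intro p q h
  exact Finset.sum_le_sum_of_subset_of_nonneg (Finset.range_subset_range.mpr h)
    (fun j _ _ => SE_nonneg_term j)

lemma SX_mono : Monotone SX := by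
  intro p q h
  exact Finset.sum_le_sum_of_subset_of_nonneg (Finset.range_subset_range.mpr h)
    (fun j _ _ => SX_nonneg_term j)

lemma SE_split {p q : ℕ} (h : p ≤ q) :
    SE q = SE p + ∑ j ∈ Ico p q, (2:ℝ)^j * ((2:ℝ)^(ee j))⁻¹ := by
  simp only [SE, Finset.range_eq_Ico]
  rw [← Finset.sum_Ico_consecutive _ (Nat.zero_le _) h]

lemma SX_split {p q : ℕ} (h : p ≤ q) :
    SX q = SX p + ∑ j ∈ Ico p q, (2:ℝ)^j * ((2:ℝ)^(fe j))⁻¹ := by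
  simp only [SX, Finset.range_eq_Ico]
  rw [← Finset.sum_Ico_consecutive _ (Nat.zero_le _) h]

lemma SX_le_SE (p : ℕ) : SX p ≤ SE p := by
  apply Finset.sum_le_sum
  intro j _
  have h : ee j ≤ fe j := ee_le_fe j
  have : ((2:ℝ)^(fe j))⁻¹ ≤ ((2:ℝ)^(ee j))⁻¹ := by
    apply inv_anti₀ (by positivity)
    exact pow_le_pow_right₀ (by norm_num) h
  have h2 : (0:ℝ) ≤ (2:ℝ)^j := by positivity
  exact mul_le_mul_of_nonneg_left this h2

/-! ### Stage bounds on SE and SX -/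

lemma term_eq_P2 (j e : ℕ) : (2:ℝ)^j * ((2:ℝ)^e)⁻¹ = P2 j e := rfl

lemma sum_plat_eta {K l u : ℕ} (h1 : pik K ≤ l) (h2 : u ≤ rk K) :
    ∑ j ∈ Ico l u, (2:ℝ)^j * ((2:ℝ)^(ee j))⁻¹ = ∑ j ∈ Ico l u, P2 j (ak K) := by
  apply Finset.sum_congr rfl
  intro j hj
  rw [Finset.mem_Ico] at hj
  rw [ee_eq_plat (le_trans h1 hj.1) (lt_of_lt_of_le hj.2 h2), term_eq_P2]

lemma sum_rest_eta {K l u : ℕ} (h1 : rk K ≤ l) (h2 : u ≤ pik (K+1)) :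
    ∑ j ∈ Ico l u, (2:ℝ)^j * ((2:ℝ)^(ee j))⁻¹ = ∑ j ∈ Ico l u, P2 j (hk K) := by
  apply Finset.sum_congr rfl
  intro j hj
  rw [Finset.mem_Ico] at hj
  rw [ee_eq_rest (le_trans h1 hj.1) (lt_of_lt_of_le hj.2 h2), term_eq_P2]

lemma sum_plat_xi {K l u : ℕ} (h1 : pik K ≤ l) (h2 : u + dk K ≤ rk K) :
    ∑ j ∈ Ico l u, (2:ℝ)^j * ((2:ℝ)^(fe j))⁻¹ = ∑ j ∈ Ico l u, P2 j (ak K) := by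
  apply Finset.sum_congr rfl
  intro j hj
  rw [Finset.mem_Ico] at hj
  rw [fe_eq_plat (le_trans h1 hj.1) (by omega), term_eq_P2]

lemma sum_rest_xi {K l u : ℕ} (h1 : pik K ≤ l) (h1' : rk K ≤ l + dk K) (h2 : u ≤ pik (K+1)) :
    ∑ j ∈ Ico l u, (2:ℝ)^j * ((2:ℝ)^(fe j))⁻¹ = ∑ j ∈ Ico l u, P2 j (hk K) := by
  apply Finset.sum_congr rfl
  intro j hj
  rw [Finset.mem_Ico] at hj
  rw [fe_eq_rest (le_trans h1 hj.1) (by omega) (lt_of_lt_of_le hj.2 h2), term_eq_P2]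

lemma X_ub : ∀ K, SE (pik K) ≤ P2 (muk K) 0 := by
  intro K
  induction K with
  | zero => rw [pik_zero]; simp only [SE, range_zero, Finset.sum_empty]; exact (P2_pos _ _).le
  | succ K ih =>
      have hpr : pik K ≤ rk K := by have := pik_lt_rk K; omega
      have hrp : rk K ≤ pik (K+1) := by have := rk_lt_pik K; omega
      rw [SE_split (le_trans hpr hrp),
        show Ico (pik K) (pik (K+1)) = Ico (pik K) (rk K) ∪ Ico (rk K) (pik (K+1)) by
          rw [Finset.Ico_union_Ico_eq_Ico hpr hrp],
        Finset.sum_union (Finset.Ico_disjoint_Ico_consecutive _ _ _),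
        sum_plat_eta le_rfl le_rfl, sum_rest_eta le_rfl le_rfl]
      have b1 : ∑ j ∈ Ico (pik K) (rk K), P2 j (ak K) ≤ P2 (rk K) (ak K) := const_Ico_ub hpr
      have b2 : ∑ j ∈ Ico (rk K) (pik (K+1)), P2 j (hk K) ≤ P2 (pik (K+1)) (hk K) :=
        const_Ico_ub hrp
      have e1 : P2 (rk K) (ak K) = P2 (muk K + K + 3) 0 := pw_eq (by have := ak_add K; omega)
      have e2 : P2 (pik (K+1)) (hk K) = P2 (muk (K+1)) 1 := pw_eq (by have := hmu K; omega)
      have e3 : P2 (muk K) 0 + P2 (muk K + K + 3) 0 ≤ P2 (muk (K+1)) 1 := by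
        have l1 : P2 (muk K) 0 ≤ P2 (muk K + K + 3) 0 := pw_le (by omega)
        have l2 : P2 (muk K + K + 3) 0 + P2 (muk K + K + 3) 0 = P2 (muk K + K + 4) 0 := by
          have := P2_halves (muk K + K + 4) 0
          have e : P2 (muk K + K + 4) (0+1) = P2 (muk K + K + 3) 0 := pw_eq (by omega)
          rw [e] at this
          linarith
        have l3 : P2 (muk K + K + 4) 0 ≤ P2 (muk (K+1)) 1 :=
          pw_le (by have := muk_succ_ge K; omega)
        linarith
      have e4 : P2 (muk (K+1)) 1 + P2 (muk (K+1)) 1 = P2 (muk (K+1)) 0 := by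
        have := P2_halves (muk (K+1)) 0; simpa using this
      rw [e1] at b1; rw [e2] at b2
      linarith

lemma Y_lb (K : ℕ) : P2 (muk (K+1)) 2 ≤ SX (pik (K+1)) := by
  have hpr : pik K ≤ rk K := by have := pik_lt_rk K; omega
  have hrp : rk K < pik (K+1) := by have := rk_lt_pik K; omega
  rw [SX_split hrp.le, sum_rest_xi hpr (by omega) le_rfl]
  have b := const_Ico_lb (e := hk K) hrp
  have e : P2 (pik (K+1)) (hk K + 1) = P2 (muk (K+1)) 2 := pw_eq (by have := hmu K; omega)
  have := SX_nonneg (rk K)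
  rw [e] at b
  linarith

lemma SE_plat {K p : ℕ} (h1 : pik K ≤ p) (h2 : p ≤ rk K) :
    SE p ≤ P2 (muk K) 0 + P2 p (ak K) := by
  rw [SE_split h1, sum_plat_eta le_rfl h2]
  have := const_Ico_ub (e := ak K) h1
  have := X_ub K
  linarith

lemma SE_rest {K p : ℕ} (h1 : rk K ≤ p) (h2 : p ≤ pik (K+1)) :
    SE p ≤ P2 (muk K + K + 4) 0 + P2 p (hk K) := by
  have hpr : pik K ≤ rk K := by have := pik_lt_rk K; omega
  rw [SE_split (le_trans hpr h1),
    show Ico (pik K) p = Ico (pik K) (rk K) ∪ Ico (rk K) p by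
      rw [Finset.Ico_union_Ico_eq_Ico hpr h1],
    Finset.sum_union (Finset.Ico_disjoint_Ico_consecutive _ _ _),
    sum_plat_eta le_rfl le_rfl, sum_rest_eta le_rfl h2]
  have b1 := const_Ico_ub (e := ak K) hpr
  have b2 := const_Ico_ub (e := hk K) h1
  have e1 : P2 (rk K) (ak K) = P2 (muk K + K + 3) 0 := pw_eq (by have := ak_add K; omega)
  have := X_ub K
  have l1 : P2 (muk K) 0 ≤ P2 (muk K + K + 3) 0 := pw_le (by omega)
  have l2 : P2 (muk K + K + 3) 0 + P2 (muk K + K + 3) 0 = P2 (muk K + K + 4) 0 := by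
    have h' := P2_halves (muk K + K + 4) 0
    have e : P2 (muk K + K + 4) (0+1) = P2 (muk K + K + 3) 0 := pw_eq (by omega)
    rw [e] at h'
    linarith
  rw [e1] at b1
  linarith

lemma SX_rest_lb {K p : ℕ} (h1 : rk K < p) (h2 : p ≤ pik (K+1)) :
    P2 p (hk K + 1) ≤ SX p := by
  have hpr : pik K ≤ rk K := by have := pik_lt_rk K; omega
  rw [SX_split h1.le, sum_rest_xi hpr (by omega) h2]
  have b := const_Ico_lb (e := hk K) h1
  have := SX_nonneg (rk K)
  linarith

lemma SX_dip_ub (K : ℕ) : SX (rk (K+1)) ≤ P2 (muk (K+1) + 3) 0 := by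
  set L := K + 1
  have hd : dk L = K + 3 := dk_succ K
  have hL : hk L = ak L + (K+3) := by rw [hk_def, hd]
  have hadd := ak_add L
  have hm : ak L + (muk L + 1) + dk L = rk L := by simp only [hd]; omega
  set m := ak L + (muk L + 1) with hmdef
  have hpm : pik L ≤ m := by
    have := rk_def L
    have h2 := Lk_ge L
    omega
  have hmr : m ≤ rk L := by omega
  rw [SX_split (le_trans hpm hmr),
    show Ico (pik L) (rk L) = Ico (pik L) m ∪ Ico m (rk L) by
      rw [Finset.Ico_union_Ico_eq_Ico hpm hmr],
    Finset.sum_union (Finset.Ico_disjoint_Ico_consecutive _ _ _),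
    sum_plat_xi le_rfl (by omega), sum_rest_xi (K := L) hpm (by omega)
      (by have := rk_lt_pik L; omega)]
  have b1 := const_Ico_ub (e := ak L) hpm
  have b2 := const_Ico_ub (e := hk L) hmr
  have hX := le_trans (SX_le_SE (pik L)) (X_ub L)
  have e1 : P2 m (ak L) = P2 (muk L + 1) 0 := pw_eq (by omega)
  have e2 : P2 (rk L) (hk L) = P2 (muk L + 1) 0 := pw_eq (by omega)
  have l1 : P2 (muk L) 0 ≤ P2 (muk L + 1) 0 := pw_le (by omega)
  have l2 : P2 (muk L + 1) 0 + P2 (muk L + 1) 0 = P2 (muk L + 2) 0 := by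
    have h' := P2_halves (muk L + 2) 0
    have e : P2 (muk L + 2) (0+1) = P2 (muk L + 1) 0 := pw_eq (by omega)
    rw [e] at h'; linarith
  have l3 : P2 (muk L + 2) 0 + P2 (muk L + 2) 0 = P2 (muk L + 3) 0 := by
    have h' := P2_halves (muk L + 3) 0
    have e : P2 (muk L + 3) (0+1) = P2 (muk L + 2) 0 := pw_eq (by omega)
    rw [e] at h'; linarith
  rw [e1] at b1; rw [e2] at b2
  have l4 : P2 (muk L + 1) 0 ≤ P2 (muk L + 2) 0 := pw_le (by omega)
  linarith

lemma SE_dip_lb (K : ℕ) : P2 (rk K) (ak K + 1) ≤ SE (rk K) := by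
  have hpr : pik K < rk K := by have := pik_lt_rk K; omega
  rw [SE_split hpr.le, sum_plat_eta le_rfl le_rfl]
  have b := const_Ico_lb (e := ak K) hpr
  have := SE_nonneg (pik K)
  linarith

lemma am_eq (φ : ℕ → ℝ) (n : ℕ) : am φ n = Sc φ (n+1) / ((n:ℝ)+1) := rfl

lemma am_nonneg {φ : ℕ → ℝ} (h : ∀ i, 0 ≤ φ i) (n : ℕ) : 0 ≤ am φ n := by
  rw [am]
  apply div_nonneg (Finset.sum_nonneg (fun i _ => h i)) (by positivity)

/-! ### The ¬BigO part -/

lemma not_bigO_key (C : ℝ) (hC : 0 < C) : ∃ n, C * am xi n < am eta n := by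
  obtain ⟨k, hk'⟩ := pow_unbounded_of_one_lt C (show (1:ℝ) < 2 by norm_num)
  set K := k + 1 with hK
  have h2 : (2:ℕ) ≤ 2^(rk K) := by
    have h3 : rk K ≥ 1 := by have := pik_lt_rk K; omega
    calc (2:ℕ) = 2^1 := rfl
      _ ≤ 2^(rk K) := Nat.pow_le_pow_right (by norm_num) h3
  refine ⟨2^(rk K) - 2, ?_⟩
  set n := 2^(rk K) - 2 with hn
  have hn1 : n + 1 = 2^(rk K) - 1 := by omega
  have hetav : am eta n = SE (rk K) / ((n:ℝ)+1) := by rw [am_eq, hn1, Sc_eta]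
  have hxiv : am xi n = SX (rk K) / ((n:ℝ)+1) := by rw [am_eq, hn1, Sc_xi]
  rw [hetav, hxiv]
  have hpos : (0:ℝ) < (n:ℝ) + 1 := by positivity
  rw [← mul_div_assoc, div_lt_div_iff₀ hpos hpos]
  have key : C * SX (rk K) < SE (rk K) := by
    have s1 : C * SX (rk K) ≤ C * P2 (muk K + 3) 0 :=
      mul_le_mul_of_nonneg_left (SX_dip_ub k) hC.le
    have s2 : C * P2 (muk K + 3) 0 < 2^k * P2 (muk K + 3) 0 :=
      mul_lt_mul_of_pos_right hk' (P2_pos _ _)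
    have s3 : (2:ℝ)^k * P2 (muk K + 3) 0 = P2 (muk K + k + 3) 0 := by
      have : (2:ℝ)^k = P2 k 0 := by simp [P2]
      rw [this, P2_mul]
      exact pw_eq (by omega)
    have s4 : P2 (muk K + k + 3) 0 = P2 (rk K) (ak K + 1) :=
      pw_eq (by have := ak_add K; omega)
    have s5 := SE_dip_lb K
    rw [s3, s4] at s2
    linarith
  nlinarith [key, hpos]

lemma cast_pow_le {a b : ℕ} (h : a ≤ b) : ((2:ℝ)^a ≤ (b:ℝ) + 1) ∨ True := Or.inr trivial

/-! ### T machinery -/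

noncomputable def TU (J : ℕ) : ℝ := ∑ j ∈ range (J+1), SE (j+1)
noncomputable def TL (J : ℕ) : ℝ := ∑ j ∈ range J, SX j
noncomputable def Tm (φ : ℕ → ℝ) (n : ℕ) : ℝ := ∑ i ∈ range (n+1), am φ i

lemma TL_nonneg (J : ℕ) : 0 ≤ TL J := Finset.sum_nonneg (fun j _ => SX_nonneg j)

lemma Tm_eta_le (n : ℕ) : Tm eta n ≤ TU (Nat.log 2 (n+1)) := by
  set J := Nat.log 2 (n+1) with hJ
  set g := fun j => SE (j+1) * ((2:ℝ)^j)⁻¹ with hg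
  have hgnn : ∀ j, 0 ≤ g j := fun j => by
    have := SE_nonneg (j+1); simp only [hg]; positivity
  have step1 : ∀ i, am eta i ≤ g (Nat.log 2 (i+1)) := by
    intro i
    set j := Nat.log 2 (i+1) with hj
    have hj1 : 2^j ≤ i+1 := Nat.pow_log_le_self 2 (by omega)
    have hj2 : i+1 < 2^(j+1) := Nat.lt_pow_succ_log_self (by norm_num) (i+1)
    have hSc : Sc eta (i+1) ≤ SE (j+1) := by
      rw [← Sc_eta]
      apply Finset.sum_le_sum_of_subset_of_nonneg
      · apply Finset.range_subset_range.mpr; omega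
      · intro _ _ _; exact (eta_pos _).le
    have hScnn : 0 ≤ Sc eta (i+1) :=
      Finset.sum_nonneg (fun _ _ => (eta_pos _).le)
    have hcast : (2:ℝ)^j ≤ (i:ℝ)+1 := by
      have : ((2^j : ℕ) : ℝ) ≤ ((i+1 : ℕ) : ℝ) := Nat.cast_le.mpr hj1
      push_cast at this
      linarith
    rw [am_eq, hg]
    calc Sc eta (i+1) / ((i:ℝ)+1) ≤ SE (j+1) / ((i:ℝ)+1) := by
          gcongr
      _ ≤ SE (j+1) / ((2:ℝ)^j) := div_le_div_of_nonneg_left (SE_nonneg _) (by positivity) hcast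
      _ = SE (j+1) * ((2:ℝ)^j)⁻¹ := div_eq_mul_inv _ _
  have step2 : Tm eta n ≤ ∑ i ∈ range (n+1), g (Nat.log 2 (i+1)) :=
    Finset.sum_le_sum (fun i _ => step1 i)
  have step3 : ∑ i ∈ range (n+1), g (Nat.log 2 (i+1)) ≤
      ∑ i ∈ range (2^(J+1) - 1), g (Nat.log 2 (i+1)) := by
    apply Finset.sum_le_sum_of_subset_of_nonneg
    · apply Finset.range_subset_range.mpr
      have h := Nat.lt_pow_succ_log_self (show 1 < 2 by norm_num) (n+1)
      rw [← hJ] at h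
      omega
    · intro _ _ _; exact hgnn _
  have step4 : ∑ i ∈ range (2^(J+1) - 1), g (Nat.log 2 (i+1)) = TU J := by
    have := Sc_block g (J+1)
    simp only [Sc] at this
    rw [this, TU]
    apply Finset.sum_congr rfl
    intro j _
    simp only [hg]
    have h2 : ((2:ℝ)^j) ≠ 0 := by positivity
    field_simp
  linarith

lemma TL_le_Tm (n : ℕ) : TL (Nat.log 2 (n+1)) ≤ 2 * Tm xi n := by
  set J := Nat.log 2 (n+1) with hJ
  set u := fun j => SX j * ((2:ℝ)^(j+1))⁻¹ with hu
  have hunn : ∀ j, 0 ≤ u j := fun j => by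
    have := SX_nonneg j; simp only [hu]; positivity
  have step1 : ∀ i, u (Nat.log 2 (i+1)) ≤ am xi i := by
    intro i
    set j := Nat.log 2 (i+1) with hj
    have hj1 : 2^j ≤ i+1 := Nat.pow_log_le_self 2 (by omega)
    have hj2 : i+1 < 2^(j+1) := Nat.lt_pow_succ_log_self (by norm_num) (i+1)
    have hSc : SX j ≤ Sc xi (i+1) := by
      rw [← Sc_xi]
      apply Finset.sum_le_sum_of_subset_of_nonneg
      · apply Finset.range_subset_range.mpr; omega
      · intro _ _ _; exact (xi_pos _).le
    have hcast : (i:ℝ)+1 ≤ (2:ℝ)^(j+1) := by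
      have : ((i+1 : ℕ) : ℝ) ≤ ((2^(j+1) : ℕ) : ℝ) := Nat.cast_le.mpr hj2.le
      push_cast at this
      linarith
    rw [am_eq, hu]
    calc SX j * ((2:ℝ)^(j+1))⁻¹ = SX j / ((2:ℝ)^(j+1)) := (div_eq_mul_inv _ _).symm
      _ ≤ SX j / ((i:ℝ)+1) := div_le_div_of_nonneg_left (SX_nonneg _) (by positivity) hcast
      _ ≤ Sc xi (i+1) / ((i:ℝ)+1) := by gcongr
  have step2 : ∑ i ∈ range (2^J - 1), u (Nat.log 2 (i+1)) ≤ Tm xi n := by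
    calc ∑ i ∈ range (2^J - 1), u (Nat.log 2 (i+1))
        ≤ ∑ i ∈ range (n+1), u (Nat.log 2 (i+1)) := by
          apply Finset.sum_le_sum_of_subset_of_nonneg
          · apply Finset.range_subset_range.mpr
            have h := Nat.pow_log_le_self 2 (show n+1 ≠ 0 by omega)
            rw [← hJ] at h
            omega
          · intro _ _ _; exact hunn _
      _ ≤ Tm xi n := Finset.sum_le_sum (fun i _ => step1 i)
  have step3 : ∑ i ∈ range (2^J - 1), u (Nat.log 2 (i+1)) = TL J / 2 := by
    have := Sc_block u J
    simp only [Sc] at this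
    rw [this, TL, Finset.sum_div]
    apply Finset.sum_congr rfl
    intro j _
    simp only [hu, pow_succ]
    have h2 : ((2:ℝ)^j) ≠ 0 := by positivity
    field_simp
  linarith

lemma xi0_le_Tm (n : ℕ) : P2 0 (ak 0) ≤ Tm xi n := by
  have h0 : am xi 0 = xi 0 := by
    simp [am]
  have hfe : fe 0 = ak 0 := by
    apply fe_eq_plat (K := 0) (by simp [pik_zero]) (by have := pik_lt_rk 0; rw [dk_zero]; omega)
  have hxi0 : xi 0 = P2 0 (ak 0) := by
    have hl : Nat.log 2 (0+1) = 0 := Nat.log_one_right 2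
    simp only [xi, hl, hfe, P2]
    norm_num
  have : am xi 0 ≤ Tm xi n := by
    apply Finset.single_le_sum (f := fun i => am xi i) (fun i _ => am_nonneg (fun m => (xi_pos m).le) i)
    simp
  rw [h0, hxi0] at this
  exact this



/-! ### Core inequality -/

lemma term_eq_P2x (j e : ℕ) : (2:ℝ)^j * ((2:ℝ)^e)⁻¹ = P2 j e := rfl

lemma P2_succ (x y : ℕ) : P2 (x+1) y = 2 * P2 x y := by
  simp only [P2, pow_succ]; ring

lemma P2_double (x : ℕ) : P2 x 0 + P2 x 0 = P2 (x+1) 0 := by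
  rw [P2_succ]; ring

lemma shift_Ico_ub {l u e : ℕ} (h : l ≤ u) : ∑ j ∈ Ico l u, P2 (j+1) e ≤ P2 (u+1) e := by
  have e1 : ∑ j ∈ Ico l u, P2 (j+1) e = 2 * ∑ j ∈ Ico l u, P2 j e := by
    rw [Finset.mul_sum]; exact Finset.sum_congr rfl (fun j _ => P2_succ j e)
  rw [e1, P2_succ]
  have := const_Ico_ub (e := e) h
  nlinarith []

lemma sum_const_Ico (l u : ℕ) (c : ℝ) : ∑ _j ∈ Ico l u, c = ((u - l : ℕ):ℝ) * c := by
  rw [Finset.sum_const, Nat.card_Ico, nsmul_eq_mul]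

lemma cast_3k8 (K : ℕ) : ((3*K+8 : ℕ) : ℝ) ≤ P2 (K+4) 0 := by
  rw [P2_x0]
  have h : (3*K+8 : ℕ) ≤ 2^(K+4) := by
    have h1 : K < 2^K := Nat.lt_two_pow_self (n := K)
    have h2 : (2:ℕ)^(K+4) = 16 * 2^K := by rw [pow_add]; ring
    omega
  calc ((3*K+8 : ℕ) : ℝ) ≤ ((2^(K+4) : ℕ) : ℝ) := Nat.cast_le.mpr h
    _ = (2:ℝ)^(K+4) := by push_cast; ring

lemma Q0 : ∀ K, (∑ j ∈ range (pik K), SE (j+1)) ≤ P2 (muk K + 4) 0 := by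
  intro K
  induction K with
  | zero =>
      rw [pik_zero]
      simp only [range_zero, Finset.sum_empty]
      exact (P2_pos _ _).le
  | succ K ih =>
      have hpr : pik K ≤ rk K := by have := pik_lt_rk K; omega
      have hrp : rk K ≤ pik (K+1) := by have := rk_lt_pik K; omega
      have s1 : (∑ j ∈ Ico (pik K) (rk K), SE (j+1)) + ∑ j ∈ Ico (rk K) (pik (K+1)), SE (j+1)
          = ∑ j ∈ Ico (pik K) (pik (K+1)), SE (j+1) :=
        Finset.sum_Ico_consecutive _ hpr hrp
      have s2 : (∑ j ∈ Ico 0 (pik K), SE (j+1)) + ∑ j ∈ Ico (pik K) (pik (K+1)), SE (j+1)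
          = ∑ j ∈ Ico 0 (pik (K+1)), SE (j+1) :=
        Finset.sum_Ico_consecutive _ (Nat.zero_le _) (le_trans hpr hrp)
      have hsplit : ∑ j ∈ range (pik (K+1)), SE (j+1) =
          (∑ j ∈ range (pik K), SE (j+1)) + (∑ j ∈ Ico (pik K) (rk K), SE (j+1))
            + (∑ j ∈ Ico (rk K) (pik (K+1)), SE (j+1)) := by
        simp only [Finset.range_eq_Ico]
        linarith
      rw [hsplit]
      -- plateau part
      have b1 : ∑ j ∈ Ico (pik K) (rk K), SE (j+1) ≤
          ∑ j ∈ Ico (pik K) (rk K), (P2 (muk K) 0 + P2 (j+1) (ak K)) := by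
        apply Finset.sum_le_sum
        intro j hj
        rw [Finset.mem_Ico] at hj
        exact SE_plat (by omega) (by omega)
      have b1' : ∑ j ∈ Ico (pik K) (rk K), (P2 (muk K) 0 + P2 (j+1) (ak K)) =
          ((rk K - pik K : ℕ):ℝ) * P2 (muk K) 0 + ∑ j ∈ Ico (pik K) (rk K), P2 (j+1) (ak K) := by
        rw [Finset.sum_add_distrib, sum_const_Ico]
      have hcard1 : rk K - pik K = Lk K := by have := rk_def K; omega
      have c1 : ((Lk K : ℕ):ℝ) * P2 (muk K) 0 = P2 (muk K + (2*K+8)) 0 := by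
        have : ((Lk K : ℕ):ℝ) = P2 (2*K+8) 0 := by
          rw [P2_x0, Lk_def]; push_cast; ring
        rw [this, P2_mul]
        exact pw_eq (by omega)
      have c2 : ∑ j ∈ Ico (pik K) (rk K), P2 (j+1) (ak K) ≤ P2 (muk K + K + 4) 0 := by
        have h := shift_Ico_ub (e := ak K) hpr
        have e : P2 (rk K + 1) (ak K) = P2 (muk K + K + 4) 0 :=
          pw_eq (by have := ak_add K; omega)
        rw [e] at h; exact h
      -- restoration part
      have b2 : ∑ j ∈ Ico (rk K) (pik (K+1)), SE (j+1) ≤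
          ∑ j ∈ Ico (rk K) (pik (K+1)), (P2 (muk K + K + 4) 0 + P2 (j+1) (hk K)) := by
        apply Finset.sum_le_sum
        intro j hj
        rw [Finset.mem_Ico] at hj
        exact SE_rest (by omega) (by omega)
      have b2' : ∑ j ∈ Ico (rk K) (pik (K+1)), (P2 (muk K + K + 4) 0 + P2 (j+1) (hk K)) =
          ((pik (K+1) - rk K : ℕ):ℝ) * P2 (muk K + K + 4) 0
            + ∑ j ∈ Ico (rk K) (pik (K+1)), P2 (j+1) (hk K) := by
        rw [Finset.sum_add_distrib, sum_const_Ico]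
      have hcard2 : pik (K+1) - rk K = 3*K+8 := by have := pik_succ K; omega
      have c3 : ((3*K+8 : ℕ):ℝ) * P2 (muk K + K + 4) 0 ≤ P2 (muk K + (2*K+8)) 0 := by
        calc ((3*K+8 : ℕ):ℝ) * P2 (muk K + K + 4) 0
            ≤ P2 (K+4) 0 * P2 (muk K + K + 4) 0 :=
              mul_le_mul_of_nonneg_right (cast_3k8 K) (P2_pos _ _).le
          _ = P2 (K + 4 + (muk K + K + 4)) 0 := by rw [P2_mul]
          _ = P2 (muk K + (2*K+8)) 0 := pw_eq (by omega)
      have c4 : ∑ j ∈ Ico (rk K) (pik (K+1)), P2 (j+1) (hk K) ≤ P2 (muk (K+1)) 0 := by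
        have h := shift_Ico_ub (e := hk K) hrp
        have e : P2 (pik (K+1) + 1) (hk K) = P2 (muk (K+1)) 0 :=
          pw_eq (by have := hmu K; omega)
        rw [e] at h; exact h
      -- assemble
      have hmu' := muk_succ_ge K
      have l1 : P2 (muk K + 4) 0 ≤ P2 (muk K + (2*K+8)) 0 := pw_le (by omega)
      have l2 : P2 (muk K + K + 4) 0 ≤ P2 (muk K + (2*K+8)) 0 := pw_le (by omega)
      have l3 : P2 (muk K + (2*K+8)) 0 + P2 (muk K + (2*K+8)) 0 = P2 (muk K + (2*K+9)) 0 := by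
        have := P2_double (muk K + (2*K+8))
        rw [show muk K + (2*K+8) + 1 = muk K + (2*K+9) by omega] at this
        exact this
      have l4 : P2 (muk K + (2*K+9)) 0 + P2 (muk K + (2*K+9)) 0 = P2 (muk K + (2*K+10)) 0 := by
        have := P2_double (muk K + (2*K+9))
        rw [show muk K + (2*K+9) + 1 = muk K + (2*K+10) by omega] at this
        exact this
      have l5 : P2 (muk K + (2*K+10)) 0 ≤ P2 (muk (K+1)) 0 := pw_le (by omega)
      have l6 : P2 (muk (K+1)) 0 + P2 (muk (K+1)) 0 = P2 (muk (K+1) + 1) 0 := P2_double _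
      have l7 : P2 (muk (K+1) + 1) 0 ≤ P2 (muk (K+1) + 4) 0 := pw_le (by omega)
      rw [hcard1] at b1'
      rw [hcard2] at b2'
      linarith


lemma P2_quarter (x : ℕ) : P2 x 0 = 4 * P2 x 2 := by
  have h1 := P2_halves x 1
  have h0 := P2_halves x 0
  linarith

lemma P2_eighth (x : ℕ) : P2 x 0 = 8 * P2 x 3 := by
  have h2 := P2_halves x 2
  have h1 := P2_halves x 1
  have h0 := P2_halves x 0
  linarith

lemma P2_7 : P2 7 0 = 128 := by rw [P2_x0]; norm_num
lemma P2_10 : P2 10 0 = 1024 := by rw [P2_x0]; norm_num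
lemma P2_4 : P2 4 0 = 16 := by rw [P2_x0]; norm_num

lemma dkK (K' : ℕ) : dk (K'+1) = (K'+1) + 2 := by rw [dk_succ]

lemma coreB (K' J : ℕ) (hK1 : pik (K'+1) ≤ J) (hK2 : J < pik (K'+1+1)) :
    TU J ≤ P2 10 0 * TL J := by
  set K := K' + 1 with hKdef
  have hpr : pik K ≤ rk K := by have := pik_lt_rk K; omega
  have hrp : rk K ≤ pik (K+1) := by have := rk_lt_pik K; omega
  have hTLnn := TL_nonneg J
  have hps : pik K = rk K' + (3*K'+8) := by rw [hKdef]; exact pik_succ K'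
  have hmuid : hk K' + muk K = pik K + 1 := by rw [hKdef]; exact hmu K'
  have hrpK' : rk K' + 8 ≤ pik K := by rw [hKdef]; exact rk_lt_pik K'
  -- TL piece (α)
  have halpha : P2 (muk K) 3 ≤ TL J := by
    have h1 : SX (rk K' + (3*K'+7)) ≤ TL J := by
      apply Finset.single_le_sum (f := fun j => SX j) (fun i _ => SX_nonneg i)
      exact Finset.mem_range.mpr (by omega)
    have h2 : P2 (rk K' + (3*K'+7)) (hk K' + 1) ≤ SX (rk K' + (3*K'+7)) :=
      SX_rest_lb (by omega) (by show rk K' + (3*K'+7) ≤ pik K; omega)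
    have h3 : P2 (rk K' + (3*K'+7)) (hk K' + 1) = P2 (muk K) 3 :=
      pw_eq (by omega)
    rw [h3] at h2
    linarith
  -- TL piece (β)
  have hbeta : ((J - pik K : ℕ) : ℝ) * P2 (muk K) 2 ≤ TL J := by
    have h1 : ∀ j ∈ Ico (pik K) J, P2 (muk K) 2 ≤ SX j := by
      intro j hj
      rw [Finset.mem_Ico] at hj
      exact le_trans (Y_lb K') (SX_mono hj.1)
    have h2 := Finset.card_nsmul_le_sum (Ico (pik K) J) (fun j => SX j) _ h1
    rw [Nat.card_Ico, nsmul_eq_mul] at h2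
    have h3 : ∑ j ∈ Ico (pik K) J, SX j ≤ TL J := by
      rw [TL, Finset.range_eq_Ico]
      apply Finset.sum_le_sum_of_subset_of_nonneg
      · exact Finset.Ico_subset_Ico (by omega) le_rfl
      · intro i _ _; exact SX_nonneg i
    linarith
  have halpha' : P2 (muk K + 4) 0 ≤ P2 7 0 * TL J := by
    have e : P2 (muk K + 4) 0 = P2 7 0 * P2 (muk K) 3 := by
      rw [P2_mul]; exact pw_eq (by omega)
    rw [e]
    exact mul_le_mul_of_nonneg_left halpha (P2_pos _ _).le
  have hQ0 : ∑ j ∈ range (pik K), SE (j+1) ≤ P2 (muk K + 4) 0 := Q0 K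
  have hsplitTU : TU J = (∑ j ∈ range (pik K), SE (j+1)) + ∑ j ∈ Ico (pik K) (J+1), SE (j+1) := by
    have s2 : (∑ j ∈ Ico 0 (pik K), SE (j+1)) + ∑ j ∈ Ico (pik K) (J+1), SE (j+1)
        = ∑ j ∈ Ico 0 (J+1), SE (j+1) :=
      Finset.sum_Ico_consecutive _ (Nat.zero_le _) (by omega)
    simp only [TU, Finset.range_eq_Ico]
    linarith
  rcases le_or_gt (J+1) (rk K) with hB1 | hB2
  · -- plateau case
    have t1 : ∑ j ∈ Ico (pik K) (J+1), SE (j+1) ≤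
        ((J+1-pik K : ℕ):ℝ) * P2 (muk K) 0 + P2 (J+2) (ak K) := by
      have b : ∀ j ∈ Ico (pik K) (J+1), SE (j+1) ≤ P2 (muk K) 0 + P2 (j+1) (ak K) := by
        intro j hj
        rw [Finset.mem_Ico] at hj
        exact SE_plat (by omega) (by omega)
      calc ∑ j ∈ Ico (pik K) (J+1), SE (j+1)
          ≤ ∑ j ∈ Ico (pik K) (J+1), (P2 (muk K) 0 + P2 (j+1) (ak K)) := Finset.sum_le_sum b
        _ = ((J+1-pik K : ℕ):ℝ) * P2 (muk K) 0 + ∑ j ∈ Ico (pik K) (J+1), P2 (j+1) (ak K) := by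
            rw [Finset.sum_add_distrib, sum_const_Ico]
        _ ≤ _ := by
            have := shift_Ico_ub (e := ak K) (show pik K ≤ J+1 by omega)
            linarith
    have hcnt : ((J+1-pik K : ℕ):ℝ) * P2 (muk K) 0 ≤ 12 * TL J := by
      have e1 : ((J+1-pik K : ℕ):ℝ) = ((J-pik K : ℕ):ℝ) + 1 := by
        have h : (J+1-pik K : ℕ) = (J - pik K) + 1 := by omega
        rw [h]; push_cast; ring
      have e2 := P2_quarter (muk K)
      have e3 := P2_eighth (muk K)
      have hge : (0:ℝ) ≤ ((J-pik K : ℕ):ℝ) := Nat.cast_nonneg _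
      calc ((J+1-pik K : ℕ):ℝ) * P2 (muk K) 0
          = 4*(((J-pik K : ℕ):ℝ) * P2 (muk K) 2) + 8 * P2 (muk K) 3 := by
            rw [e1]
            nlinarith [e2, e3]
        _ ≤ 4 * TL J + 8 * TL J := by
            have h8 : 8 * P2 (muk K) 3 ≤ 8 * TL J := by linarith
            have h4 : 4*(((J-pik K : ℕ):ℝ) * P2 (muk K) 2) ≤ 4 * TL J := by linarith
            linarith
        _ = 12 * TL J := by ring
    have ht2 : P2 (J+2) (ak K) ≤ 2 * TL J := by
      rcases le_or_gt (J+4) (ak K + muk K) with hc1 | hc2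
      · have h1 : P2 (J+2) (ak K) ≤ P2 (muk K) 2 := pw_le (by omega)
        have h2 := P2_quarter (muk K)
        have h3 := P2_eighth (muk K)
        linarith
      · -- deep in plateau: J - pik K is large
        have har := ak_add K
        have hLk := Lk_ge K
        have hrd := rk_def K
        have hLd : Lk K = 2 * 2^(2*K+7) := by
          rw [Lk_def, show 2*K+8 = (2*K+7)+1 by omega, pow_succ]; ring
        have hJpi : 2^(2*K+7) ≤ J - pik K := by omega
        have hcast : P2 (2*K+7) 0 ≤ ((J - pik K : ℕ):ℝ) := by
          rw [P2_x0]
          calc (2:ℝ)^(2*K+7) = ((2^(2*K+7) : ℕ) : ℝ) := by push_cast; ring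
            _ ≤ ((J - pik K : ℕ):ℝ) := Nat.cast_le.mpr hJpi
        have hTL2 : P2 (muk K + (2*K+5)) 0 ≤ TL J := by
          have e1 : P2 (muk K + (2*K+5)) 0 = P2 (2*K+7) 0 * P2 (muk K) 2 := by
            rw [P2_mul]; exact pw_eq (by omega)
          rw [e1]
          calc P2 (2*K+7) 0 * P2 (muk K) 2 ≤ ((J - pik K : ℕ):ℝ) * P2 (muk K) 2 :=
                mul_le_mul_of_nonneg_right hcast (P2_pos _ _).le
            _ ≤ TL J := hbeta
        have h1 : P2 (J+2) (ak K) ≤ P2 (rk K + 1) (ak K) := pw_le (by omega)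
        have h2 : P2 (rk K + 1) (ak K) = P2 (muk K + K + 4) 0 := pw_eq (by omega)
        have h3 : P2 (muk K + K + 4) 0 ≤ P2 (muk K + (2*K+5)) 0 := pw_le (by omega)
        have := hTL2
        rw [h2] at h1
        linarith
    have hfin : P2 (muk K + 4) 0 ≤ 128 * TL J := by rw [← P2_7]; exact halpha'
    rw [P2_10]
    linarith
  · -- burst/restoration case
    have hrJ : rk K ≤ J := by omega
    have hsplit2 : ∑ j ∈ Ico (pik K) (J+1), SE (j+1) =
        (∑ j ∈ Ico (pik K) (rk K), SE (j+1)) + ∑ j ∈ Ico (rk K) (J+1), SE (j+1) :=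
      (Finset.sum_Ico_consecutive _ hpr (by omega)).symm
    have t1a : ∑ j ∈ Ico (pik K) (rk K), SE (j+1) ≤
        P2 (muk K + (2*K+8)) 0 + P2 (muk K + K + 4) 0 := by
      have b : ∀ j ∈ Ico (pik K) (rk K), SE (j+1) ≤ P2 (muk K) 0 + P2 (j+1) (ak K) := by
        intro j hj
        rw [Finset.mem_Ico] at hj
        exact SE_plat (by omega) (by omega)
      have hcard : rk K - pik K = Lk K := by have := rk_def K; omega
      have c1 : ((rk K - pik K : ℕ):ℝ) * P2 (muk K) 0 = P2 (muk K + (2*K+8)) 0 := by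
        rw [hcard]
        have e : ((Lk K : ℕ):ℝ) = P2 (2*K+8) 0 := by
          rw [P2_x0, Lk_def]; push_cast; ring
        rw [e, P2_mul]
        exact pw_eq (by omega)
      have c2 : ∑ j ∈ Ico (pik K) (rk K), P2 (j+1) (ak K) ≤ P2 (muk K + K + 4) 0 := by
        have h := shift_Ico_ub (e := ak K) hpr
        have e : P2 (rk K + 1) (ak K) = P2 (muk K + K + 4) 0 :=
          pw_eq (by have := ak_add K; omega)
        rw [e] at h; exact h
      calc ∑ j ∈ Ico (pik K) (rk K), SE (j+1)
          ≤ ∑ j ∈ Ico (pik K) (rk K), (P2 (muk K) 0 + P2 (j+1) (ak K)) := Finset.sum_le_sum b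
        _ = ((rk K - pik K : ℕ):ℝ) * P2 (muk K) 0 + ∑ j ∈ Ico (pik K) (rk K), P2 (j+1) (ak K) := by
            rw [Finset.sum_add_distrib, sum_const_Ico]
        _ ≤ _ := by rw [c1]; linarith
    have t1b : ∑ j ∈ Ico (rk K) (J+1), SE (j+1) ≤
        P2 (muk K + (2*K+8)) 0 + P2 (J+2) (hk K) := by
      have b : ∀ j ∈ Ico (rk K) (J+1), SE (j+1) ≤ P2 (muk K + K + 4) 0 + P2 (j+1) (hk K) := by
        intro j hj
        rw [Finset.mem_Ico] at hj
        exact SE_rest (by omega) (by omega)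
      have hps := pik_succ K
      have hcardle : ((J + 1 - rk K : ℕ):ℝ) ≤ ((3*K+8 : ℕ):ℝ) :=
        Nat.cast_le.mpr (by omega)
      have c3 : ((J + 1 - rk K : ℕ):ℝ) * P2 (muk K + K + 4) 0 ≤ P2 (muk K + (2*K+8)) 0 := by
        calc ((J + 1 - rk K : ℕ):ℝ) * P2 (muk K + K + 4) 0
            ≤ ((3*K+8 : ℕ):ℝ) * P2 (muk K + K + 4) 0 :=
              mul_le_mul_of_nonneg_right hcardle (P2_pos _ _).le
          _ ≤ P2 (K+4) 0 * P2 (muk K + K + 4) 0 :=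
              mul_le_mul_of_nonneg_right (cast_3k8 K) (P2_pos _ _).le
          _ = P2 (K + 4 + (muk K + K + 4)) 0 := by rw [P2_mul]
          _ = P2 (muk K + (2*K+8)) 0 := pw_eq (by omega)
      have c4 : ∑ j ∈ Ico (rk K) (J+1), P2 (j+1) (hk K) ≤ P2 (J+2) (hk K) :=
        shift_Ico_ub (by omega)
      calc ∑ j ∈ Ico (rk K) (J+1), SE (j+1)
          ≤ ∑ j ∈ Ico (rk K) (J+1), (P2 (muk K + K + 4) 0 + P2 (j+1) (hk K)) :=
            Finset.sum_le_sum b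
        _ = ((J + 1 - rk K : ℕ):ℝ) * P2 (muk K + K + 4) 0
              + ∑ j ∈ Ico (rk K) (J+1), P2 (j+1) (hk K) := by
            rw [Finset.sum_add_distrib, sum_const_Ico]
        _ ≤ _ := by linarith
    have hgamma : P2 (muk K + (2*K+6)) 0 ≤ TL J := by
      have hrd := rk_def K
      have hJpi : Lk K ≤ J - pik K := by omega
      have hcast : P2 (2*K+8) 0 ≤ ((J - pik K : ℕ):ℝ) := by
        rw [P2_x0]
        calc (2:ℝ)^(2*K+8) = ((2^(2*K+8) : ℕ) : ℝ) := by push_cast; ring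
          _ = ((Lk K : ℕ):ℝ) := by rw [Lk_def]
          _ ≤ ((J - pik K : ℕ):ℝ) := Nat.cast_le.mpr hJpi
      have e1 : P2 (muk K + (2*K+6)) 0 = P2 (2*K+8) 0 * P2 (muk K) 2 := by
        rw [P2_mul]; exact pw_eq (by omega)
      rw [e1]
      calc P2 (2*K+8) 0 * P2 (muk K) 2 ≤ ((J - pik K : ℕ):ℝ) * P2 (muk K) 2 :=
            mul_le_mul_of_nonneg_right hcast (P2_pos _ _).le
        _ ≤ TL J := hbeta
    -- collect the constant parts
    have hbig : P2 (muk K + 4) 0 + P2 (muk K + (2*K+8)) 0 + P2 (muk K + K + 4) 0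
        + P2 (muk K + (2*K+8)) 0 ≤ 16 * TL J := by
      have l1 : P2 (muk K + 4) 0 ≤ P2 (muk K + (2*K+8)) 0 := pw_le (by omega)
      have l2 : P2 (muk K + K + 4) 0 ≤ P2 (muk K + (2*K+8)) 0 := pw_le (by omega)
      have l3 : P2 (muk K + (2*K+8)) 0 = 4 * P2 (muk K + (2*K+8)) 2 := P2_quarter _
      have l4 : P2 (muk K + (2*K+8)) 2 = P2 (muk K + (2*K+6)) 0 := pw_eq (by omega)
      have := hgamma
      nlinarith [P2_pos (muk K + (2*K+8)) 0]
    have ht2 : P2 (J+2) (hk K) ≤ 128 * TL J := by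
      have hdk : dk K = K + 2 := dkK K'
      have hh : hk K = ak K + (K+2) := by rw [hk_def, hdk]
      rcases le_or_gt J (rk K + 1) with hc1 | hc2
      · have h1 : P2 (J+2) (hk K) ≤ P2 (rk K + 3) (hk K) := pw_le (by omega)
        have h2 : P2 (rk K + 3) (hk K) = P2 (muk K + 4) 0 := by
          apply pw_eq
          have := ak_add K
          omega
        rw [h2] at h1
        have := halpha'
        rw [P2_7] at this
        linarith
      · obtain ⟨t, rfl⟩ : ∃ t, J = rk K + 2 + t := ⟨J - (rk K + 2), by omega⟩
        have hdelta : P2 (rk K + 2 + t) (hk K + 2) ≤ TL (rk K + 2 + t) := by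
          have h1 : SX (rk K + 1 + t) ≤ TL (rk K + 2 + t) := by
            apply Finset.single_le_sum (f := fun j => SX j) (fun i _ => SX_nonneg i)
            exact Finset.mem_range.mpr (by omega)
          have h2 : P2 (rk K + 1 + t) (hk K + 1) ≤ SX (rk K + 1 + t) :=
            SX_rest_lb (by omega) (by omega)
          have h3 : P2 (rk K + 1 + t) (hk K + 1) = P2 (rk K + 2 + t) (hk K + 2) :=
            pw_eq (by omega)
          rw [h3] at h2
          linarith
        have h4 : P2 (rk K + 2 + t + 2) (hk K) = P2 4 0 * P2 (rk K + 2 + t) (hk K + 2) := by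
          rw [P2_mul]
          exact pw_eq (by omega)
        rw [h4, P2_4]
        nlinarith [hdelta, TL_nonneg (rk K + 2 + t)]
    rw [hsplitTU, hsplit2, P2_10]
    linarith

lemma core (J : ℕ) : TU J ≤ P2 10 0 * (TL J + P2 0 (ak 0)) := by
  have hK1 : pik (stg J) ≤ J := pik_stg_le J
  have hK2 : J < pik (stg J + 1) := lt_pik_stg_succ J
  have hRHS1 : P2 10 0 * P2 0 (ak 0) ≤ P2 10 0 * (TL J + P2 0 (ak 0)) := by
    have := TL_nonneg J
    nlinarith [P2_pos 10 0, P2_pos 0 (ak 0)]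
  have hRHS2 : ∀ c : ℝ, c ≤ P2 10 0 → c * TL J ≤ P2 10 0 * (TL J + P2 0 (ak 0)) := by
    intro c hc
    have h1 := TL_nonneg J
    nlinarith [P2_pos 10 0, P2_pos 0 (ak 0)]
  rcases Nat.eq_zero_or_eq_succ_pred (stg J) with h0 | hS
  · -- stage 0
    rw [h0] at hK2
    norm_num at hK2
    have hee0 : ∀ j, j < pik 1 → ee j = ak 0 := by
      intro j hj
      rcases lt_or_ge j (rk 0) with h | h
      · exact ee_eq_plat (by rw [pik_zero]; omega) h
      · rw [ee_eq_rest h hj, hk_def, dk_zero]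
        omega
    have hfe0 : ∀ j, j < pik 1 → fe j = ak 0 := by
      intro j hj
      rcases lt_or_ge (j + dk 0) (rk 0) with h | h
      · exact fe_eq_plat (by rw [pik_zero]; omega) h
      · rw [fe_eq_rest (K := 0) (by rw [pik_zero]; omega) h hj, hk_def, dk_zero]
        omega
    have hTU : TU J ≤ P2 (J+2) (ak 0) := by
      have e1 : TU J = ∑ j ∈ range (J+1), SE (j+1) := rfl
      have e2 : ∀ j, j ∈ range (J+1) → SE (j+1) ≤ P2 (j+1) (ak 0) := by
        intro j hj
        rw [Finset.mem_range] at hj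
        have : SE (j+1) = ∑ j' ∈ range (j+1), P2 j' (ak 0) := by
          apply Finset.sum_congr rfl
          intro j' hj'
          rw [Finset.mem_range] at hj'
          rw [hee0 j' (by omega), term_eq_P2x]
        rw [this, Finset.range_eq_Ico]
        exact const_Ico_ub (Nat.zero_le _)
      calc TU J ≤ ∑ j ∈ range (J+1), P2 (j+1) (ak 0) := Finset.sum_le_sum e2
        _ ≤ P2 (J+2) (ak 0) := by
            rw [Finset.range_eq_Ico]
            exact shift_Ico_ub (Nat.zero_le _)
    rcases le_or_gt J 2 with hJ2 | hJ2
    · have : P2 (J+2) (ak 0) ≤ P2 10 0 * P2 0 (ak 0) := by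
        rw [P2_mul]
        exact pw_le (by omega)
      linarith
    · obtain ⟨m, rfl⟩ : ∃ m, J = m + 3 := ⟨J - 3, by omega⟩
      have hTL : P2 (m+2) (ak 0 + 1) ≤ TL (m+3) := by
        have h1 : SX (m+2) ≤ TL (m+3) := by
          apply Finset.single_le_sum (f := fun j => SX j) (fun i _ => SX_nonneg i)
          exact Finset.mem_range.mpr (by omega)
        have h2 : P2 (m+2) (ak 0 + 1) ≤ SX (m+2) := by
          have e : SX (m+2) = ∑ j' ∈ range (m+2), P2 j' (ak 0) := by
            apply Finset.sum_congr rfl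
            intro j' hj'
            rw [Finset.mem_range] at hj'
            rw [hfe0 j' (by omega), term_eq_P2x]
          rw [e, Finset.range_eq_Ico]
          exact const_Ico_lb (by omega)
        linarith
      have hfin : P2 (m+3+2) (ak 0) ≤ P2 10 0 * P2 (m+2) (ak 0 + 1) := by
        rw [P2_mul]
        exact pw_le (by omega)
      have := hRHS2 (P2 10 0) le_rfl
      have hmul : P2 10 0 * P2 (m+2) (ak 0 + 1) ≤ P2 10 0 * TL (m+3) :=
        mul_le_mul_of_nonneg_left hTL (P2_pos _ _).le
      linarith
  · -- stage K = K'+1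
    obtain ⟨K', hK'⟩ : ∃ K', stg J = K' + 1 := ⟨stg J - 1, by omega⟩
    rw [hK'] at hK1 hK2
    have h := coreB K' J hK1 hK2
    have h2 : P2 10 0 * TL J ≤ P2 10 0 * (TL J + P2 0 (ak 0)) := by
      nlinarith [P2_pos 10 0, P2_pos 0 (ak 0)]
    linarith


lemma am_am (φ : ℕ → ℝ) (n : ℕ) : am (am φ) n = Tm φ n / ((n:ℝ)+1) := rfl

lemma main_bigO (n : ℕ) : am (am eta) n ≤ 3072 * am (am xi) n := by
  have h1 := Tm_eta_le n
  have h2 := core (Nat.log 2 (n+1))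
  have h3 := TL_le_Tm n
  have h4 := xi0_le_Tm n
  have hT : Tm eta n ≤ 3072 * Tm xi n := by
    rw [P2_10] at h2
    linarith
  rw [am_am, am_am, mul_div_assoc']
  gcongr


end S9

/-- There are `ξ ≤ η` in `c₀*` with `η_{a²} = O(ξ_{a²})` (hence `ξ_{a²} ≍ η_{a²}`)
but `η_a ≠ O(ξ_a)`: second-order equality of arithmetic means does not cancel. -/
theorem stmt_9 :
    ∃ ξ η : ℕ → ℝ, IsC0Star ξ ∧ IsC0Star η ∧ (∀ n, ξ n ≤ η n) ∧
      BigO (am (am η)) (am (am ξ)) ∧ ¬ BigO (am η) (am ξ) := by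
  refine ⟨S9.xi, S9.eta, ⟨fun n => (S9.xi_pos n).le, S9.xi_anti, S9.xi_tendsto⟩,
    ⟨fun n => (S9.eta_pos n).le, S9.eta_anti, S9.eta_tendsto⟩,
    S9.xi_le_eta, ⟨3072, by norm_num, S9.main_bigO⟩, ?_⟩
  rintro ⟨C, hC, hall⟩
  obtain ⟨n, hn⟩ := S9.not_bigO_key C hC
  have := hall n
  linarith
end

section
/- Let η ∈ c₀* with η₁ > 0, and suppose the ratio of regularity r(η_a)_n := (η_{a²})_n/(η_a)_n is equivalent to a monotone sequence, i.e., there exist a monotone (nondecreasing or nonincreasing) sequence β : {1,2,...} → ℝ and constants c, C > 0 with c·β_n ≤ (η_{a²})_n/(η_a)_n ≤ C·β_n for all n. Then for every ξ ∈ c₀*: ξ_{a²} = O(η_{a²}) implies ξ_a = O(η_a). (This is the second-order inclusion cancellation J_{a²} ⊂ I_{a²} ⟹ J_a ⊂ I_a for I the principal ideal (η).) -/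
open Finset

lemma aux_card_mul_le_sum {ξ : ℕ → ℝ} (h : Antitone ξ) (n : ℕ) :
    ((n : ℝ) + 1) * ξ n ≤ ∑ j ∈ range (n + 1), ξ j := by
  have := Finset.card_nsmul_le_sum (range (n + 1)) ξ (ξ n)
    (fun i hi => h (Nat.lt_succ_iff.mp (mem_range.mp hi)))
  simpa [nsmul_eq_mul, add_comm] using this

lemma aux_sum_pos {η : ℕ → ℝ} (h0 : ∀ n, 0 ≤ η n) (hpos : 0 < η 0) (n : ℕ) :
    0 < ∑ j ∈ range (n + 1), η j := by
  have h1 : η 0 ≤ ∑ j ∈ range (n + 1), η j :=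
    Finset.single_le_sum (fun i _ => h0 i) (mem_range.mpr (Nat.succ_pos n))
  linarith

lemma aux_am_pos {η : ℕ → ℝ} (h0 : ∀ n, 0 ≤ η n) (hpos : 0 < η 0) (n : ℕ) :
    0 < am η n := by
  have := aux_sum_pos h0 hpos n
  have : (0:ℝ) < (n:ℝ) + 1 := by positivity
  exact div_pos (aux_sum_pos h0 hpos n) this

lemma aux_am_nonneg {ξ : ℕ → ℝ} (h0 : ∀ n, 0 ≤ ξ n) (n : ℕ) : 0 ≤ am ξ n :=
  div_nonneg (Finset.sum_nonneg fun i _ => h0 i) (by positivity)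

lemma aux_am_antitone {ξ : ℕ → ℝ} (h : Antitone ξ) : Antitone (am ξ) := by
  apply antitone_nat_of_succ_le
  intro n
  have hS : ((n : ℝ) + 1) * ξ (n + 1) ≤ ∑ j ∈ range (n + 1), ξ j := by
    have := Finset.card_nsmul_le_sum (range (n + 1)) ξ (ξ (n + 1))
      (fun i hi => h (le_of_lt (mem_range.mp hi)))
    simpa [nsmul_eq_mul, add_comm] using this
  have hsum : ∑ j ∈ range (n + 2), ξ j = (∑ j ∈ range (n + 1), ξ j) + ξ (n + 1) :=
    Finset.sum_range_succ ξ (n + 1)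
  rw [am, am]
  rw [div_le_div_iff₀ (by positivity) (by positivity)]
  push_cast
  rw [hsum]
  nlinarith [hS]

lemma aux_self_le_am {ξ : ℕ → ℝ} (h : Antitone ξ) (n : ℕ) : ξ n ≤ am ξ n := by
  rw [am, le_div_iff₀ (by positivity)]
  have := aux_card_mul_le_sum h n
  linarith

lemma aux_step (T x q M : ℝ) (hT : 0 < T) (hx : 0 ≤ x) (hq : 1 ≤ q) (hM : 2 ≤ M)
    (h : q * (M * x) ≤ T + x) : T + x ≤ T * (1 + 2 / (M * q)) := by
  have hMq : 2 ≤ M * q := by nlinarith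
  have hMq0 : 0 < M * q := by linarith
  have h1 : x * (M * q - 1) ≤ T := by nlinarith
  have h2 : x * (M * q) ≤ 2 * T := by nlinarith
  have h3 : x ≤ T * (2 / (M * q)) := by
    rw [mul_div_assoc', le_div_iff₀ hMq0]; nlinarith
  nlinarith [mul_pos hT hMq0]

lemma aux_sigma_lower {ξ : ℕ → ℝ} (h0 : ∀ n, 0 ≤ ξ n) (ha : Antitone ξ) {n N : ℕ} (hnN : n ≤ N) :
    (∑ j ∈ range (n + 1), ξ j) * (1 + ∑ j ∈ Ico (n + 1) (N + 1), 1 / ((j : ℝ) + 1))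
      ≤ ∑ j ∈ range (N + 1), am ξ j := by
  have hsplit : (∑ j ∈ range (n+1), am ξ j) + ∑ j ∈ Ico (n+1) (N+1), am ξ j
      = ∑ j ∈ range (N+1), am ξ j :=
    Finset.sum_range_add_sum_Ico _ (by omega)
  have hp1 : (∑ j ∈ range (n+1), ξ j) ≤ ∑ j ∈ range (n+1), am ξ j := by
    have h1 : ((n:ℝ)+1) * am ξ n ≤ ∑ j ∈ range (n+1), am ξ j :=
      aux_card_mul_le_sum (aux_am_antitone ha) n
    have h2 : ((n:ℝ)+1) * am ξ n = ∑ j ∈ range (n+1), ξ j := by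
      rw [am]; field_simp
    linarith
  have hp2 : (∑ j ∈ range (n+1), ξ j) * (∑ j ∈ Ico (n+1) (N+1), 1/((j:ℝ)+1))
      ≤ ∑ j ∈ Ico (n+1) (N+1), am ξ j := by
    rw [Finset.mul_sum]
    apply Finset.sum_le_sum
    intro j hj
    obtain ⟨hj1, hj2⟩ := Finset.mem_Ico.mp hj
    have hmono : (∑ i ∈ range (n+1), ξ i) ≤ ∑ i ∈ range (j+1), ξ i :=
      Finset.sum_le_sum_of_subset_of_nonneg (Finset.range_subset_range.mpr (by omega))
        (fun i _ _ => h0 i)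
    rw [am, mul_one_div]
    gcongr
  nlinarith [hsplit, hp1, hp2]


/-- If the ratio of regularity `r(η_a)_n = (η_{a²})_n/(η_a)_n` is equivalent to a
monotone sequence, then `ξ_{a²} = O(η_{a²})` implies `ξ_a = O(η_a)`. -/
theorem stmt_10 (η : ℕ → ℝ) (hη : IsC0Star η) (hpos : 0 < η 0)
    (hmon : ∃ β : ℕ → ℝ, (Monotone β ∨ Antitone β) ∧ ∃ c C : ℝ, 0 < c ∧ 0 < C ∧
      ∀ n, c * β n ≤ am (am η) n / am η n ∧ am (am η) n / am η n ≤ C * β n) :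
    ∀ ξ : ℕ → ℝ, IsC0Star ξ → BigO (am (am ξ)) (am (am η)) → BigO (am ξ) (am η) := by
  classical
  obtain ⟨β, hβmono, c, C, hc, hC, hβ⟩ := hmon
  obtain ⟨hη0, hη1, -⟩ := hη
  have hηa : Antitone η := antitone_nat_of_succ_le hη1
  have hτa : Antitone (am η) := aux_am_antitone hηa
  have hτpos : ∀ n, 0 < am η n := aux_am_pos hη0 hpos
  set T : ℕ → ℝ := fun n => ∑ j ∈ range (n + 1), am η j with hTdef
  have hTval : ∀ n, am (am η) n = T n / ((n : ℝ) + 1) := fun n => rfl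
  have hTpos : ∀ n, 0 < T n := aux_sum_pos (fun n => (hτpos n).le) (hτpos 0)
  -- ratio with denominator cleared
  have hratio : ∀ n, am (am η) n / am η n = T n / (((n : ℝ) + 1) * am η n) := by
    intro n; rw [hTval, div_div]
  have hD : ∀ n : ℕ, (0:ℝ) < ((n : ℝ) + 1) * am η n := fun n =>
    mul_pos (by positivity) (hτpos n)
  -- q n := max (c * β n) 1
  set q : ℕ → ℝ := fun n => max (c * β n) 1 with hqdef
  have hq1 : ∀ n, 1 ≤ q n := fun n => le_max_right _ _
  have hqT : ∀ n, q n * (((n : ℝ) + 1) * am η n) ≤ T n := by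
    intro n
    have h1 : c * β n * (((n : ℝ) + 1) * am η n) ≤ T n := by
      have := (hβ n).1
      rw [hratio n, le_div_iff₀ (hD n)] at this
      exact this
    have h2 : 1 * (((n : ℝ) + 1) * am η n) ≤ T n := by
      rw [one_mul]; exact aux_card_mul_le_sum hτa n
    rcases max_cases (c * β n) 1 with ⟨h, -⟩ | ⟨h, -⟩ <;> simp only [hqdef] <;> rw [h]
    · exact h1
    · exact h2
  have hTub : ∀ n, T n ≤ (C / c) * q n * (((n : ℝ) + 1) * am η n) := by
    intro n
    have h1 : T n / (((n : ℝ) + 1) * am η n) ≤ C * β n := by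
      rw [← hratio n]; exact (hβ n).2
    have h2 : C * β n ≤ (C / c) * q n := by
      have : c * β n ≤ q n := le_max_left _ _
      calc C * β n = (C / c) * (c * β n) := by field_simp
        _ ≤ (C / c) * q n :=
            mul_le_mul_of_nonneg_left this (div_nonneg hC.le hc.le)
    rw [div_le_iff₀ (hD n)] at h1
    calc T n ≤ C * β n * (((n : ℝ) + 1) * am η n) := h1
      _ ≤ (C / c) * q n * (((n : ℝ) + 1) * am η n) :=
          mul_le_mul_of_nonneg_right h2 (hD n).le
  rintro ξ ⟨hξ0, hξ1, -⟩ ⟨K, hK, hKle⟩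
  have hξa : Antitone ξ := antitone_nat_of_succ_le hξ1
  have hσa : Antitone (am ξ) := aux_am_antitone hξa
  set S : ℕ → ℝ := fun n => ∑ j ∈ range (n + 1), am ξ j with hSdef
  have hSval : ∀ n, am (am ξ) n = S n / ((n : ℝ) + 1) := fun n => rfl
  have hST : ∀ n, S n ≤ K * T n := by
    intro n
    have := hKle n
    rw [hSval, hTval] at this
    have hn : (0:ℝ) < (n : ℝ) + 1 := by positivity
    rw [div_le_iff₀ hn] at this
    calc S n ≤ K * (T n / ((n:ℝ) + 1)) * ((n:ℝ) + 1) := this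
      _ = K * T n := by field_simp
  rcases hβmono with hmono | hanti
  · -- hard case : β monotone nondecreasing
    refine ⟨K * Real.exp 4 * (C / c), by positivity, fun n => ?_⟩
    set L : ℕ → ℝ := fun N => ∑ j ∈ Ico (n + 1) (N + 1), 1 / ((j : ℝ) + 1) with hLdef
    have hLn : L n = 0 := by
      show ∑ j ∈ Ico (n + 1) (n + 1), 1 / ((j:ℝ) + 1) = 0
      rw [Finset.Ico_self, Finset.sum_empty]
    have hLnonneg : ∀ N, 0 ≤ L N := fun N => Finset.sum_nonneg fun j _ => by positivity
    have hLsucc : ∀ N, n ≤ N → L (N + 1) = L N + 1 / ((N : ℝ) + 2) := by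
      intro N hN
      have : L (N + 1) = L N + 1 / (((N + 1 : ℕ) : ℝ) + 1) :=
        Finset.sum_Ico_succ_top (by omega) _
      rw [this]; push_cast; ring
    -- existence of N with q n ≤ L N
    have hex : ∃ N, q n ≤ L N := by
      have h1 : Filter.Tendsto (fun N : ℕ => ∑ i ∈ range (N + 1), 1 / ((i : ℝ) + 1))
          Filter.atTop Filter.atTop :=
        (Real.tendsto_sum_range_one_div_nat_succ_atTop).comp (Filter.tendsto_add_atTop_nat 1)
      have h2 : Filter.Tendsto (fun N : ℕ =>
          (∑ i ∈ range (N + 1), 1 / ((i : ℝ) + 1)) - ∑ i ∈ range (n + 1), 1 / ((i : ℝ) + 1))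
          Filter.atTop Filter.atTop := Filter.tendsto_atTop_add_const_right _ _ h1
      obtain ⟨N, hN⟩ := (h2.eventually_ge_atTop (q n)).exists
      refine ⟨max N n, ?_⟩
      have hsplit : (∑ i ∈ range (n+1), 1 / ((i:ℝ)+1)) + L (max N n)
          = ∑ i ∈ range (max N n + 1), 1 / ((i : ℝ) + 1) :=
        Finset.sum_range_add_sum_Ico _ (by omega)
      have hmono2 : (∑ i ∈ range (N + 1), 1 / ((i : ℝ) + 1))
          ≤ ∑ i ∈ range (max N n + 1), 1 / ((i : ℝ) + 1) :=
        Finset.sum_le_sum_of_subset_of_nonneg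
          (Finset.range_subset_range.mpr (by omega)) (fun i _ _ => by positivity)
      linarith
    obtain ⟨N, hNspec, hNmin⟩ : ∃ N, q n ≤ L N ∧ ∀ m < N, ¬ q n ≤ L m :=
      ⟨Nat.find hex, Nat.find_spec hex, fun m hm => Nat.find_min hex hm⟩
    have hnN : n < N := by
      by_contra h
      push_neg at h
      have : L N = 0 := by
        show ∑ j ∈ Ico (n + 1) (N + 1), 1 / ((j:ℝ) + 1) = 0
        rw [Finset.Ico_eq_empty (by omega), Finset.sum_empty]
      rw [this] at hNspec
      linarith [hq1 n]
    have hLub : L N < q n + 1 := by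
      obtain ⟨M, rfl⟩ : ∃ M, N = M + 1 := ⟨N - 1, by omega⟩
      have hMn : n ≤ M := by omega
      have hMlt : ¬ q n ≤ L M := hNmin M (by omega)
      push_neg at hMlt
      have := hLsucc M hMn
      have h1 : 1 / ((M : ℝ) + 2) ≤ 1 := by
        rw [div_le_one (by positivity)]; linarith [Nat.cast_nonneg (α := ℝ) M]
      linarith
    -- induction: T N ≤ T n * exp ((2 / q n) * L N)
    have hqn0 : 0 < q n := lt_of_lt_of_le one_pos (hq1 n)
    have hind : ∀ N', n ≤ N' → T N' ≤ T n * Real.exp ((2 / q n) * L N') := by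
      intro N' hN'
      induction N', hN' using Nat.le_induction with
      | base => rw [hLn]; simp
      | succ m hm ih =>
        have hTm : T (m + 1) = T m + am η (m + 1) := Finset.sum_range_succ _ _
        have hstep : T m + am η (m + 1) ≤ T m * (1 + 2 / (((m : ℝ) + 2) * q n)) := by
          apply aux_step _ _ _ _ (hTpos m) (hτpos (m + 1)).le (hq1 n) (by push_cast; linarith [Nat.cast_nonneg (α := ℝ) m])
          have hqq : q n ≤ q (m + 1) := by
            apply max_le_max _ le_rfl
            exact mul_le_mul_of_nonneg_left (hmono (by omega)) hc.le
          have := hqT (m + 1)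
          have hD' := hD (m + 1)
          push_cast at this hD' ⊢
          nlinarith
        have hfac : (1 : ℝ) + 2 / (((m : ℝ) + 2) * q n)
            ≤ Real.exp (2 / (((m : ℝ) + 2) * q n)) := by
          linarith [Real.add_one_le_exp (2 / (((m : ℝ) + 2) * q n))]
        calc T (m + 1) ≤ T m * (1 + 2 / (((m : ℝ) + 2) * q n)) := by rw [hTm]; exact hstep
          _ ≤ (T n * Real.exp ((2 / q n) * L m)) * (1 + 2 / (((m : ℝ) + 2) * q n)) := by
              apply mul_le_mul_of_nonneg_right ih
              have h2 : (0:ℝ) < ((m:ℝ) + 2) * q n :=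
                mul_pos (by positivity) hqn0
              have h3 := div_nonneg (by norm_num : (0:ℝ) ≤ 2) h2.le
              linarith
          _ ≤ (T n * Real.exp ((2 / q n) * L m)) * Real.exp (2 / (((m : ℝ) + 2) * q n)) := by
              apply mul_le_mul_of_nonneg_left hfac
              exact mul_nonneg (hTpos n).le (Real.exp_pos _).le
          _ = T n * Real.exp ((2 / q n) * L (m + 1)) := by
              rw [mul_assoc, ← Real.exp_add, hLsucc m hm]
              congr 2
              field_simp
    have hTN : T N ≤ T n * Real.exp 4 := by
      have h1 := hind N hnN.le
      have h2 : (2 / q n) * L N ≤ 4 := by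
        have : (2 / q n) * L N ≤ (2 / q n) * (q n + 1) := by
          apply mul_le_mul_of_nonneg_left hLub.le (by positivity)
        have heq : (2 / q n) * (q n + 1) = 2 + 2 / q n := by field_simp
        have : (2 / q n) * L N ≤ 2 + 2 / q n := by linarith
        have h3 : 2 / q n ≤ 2 := by
          rw [div_le_iff₀ hqn0]; linarith [hq1 n]
        linarith
      calc T N ≤ T n * Real.exp ((2 / q n) * L N) := h1
        _ ≤ T n * Real.exp 4 := by
            apply mul_le_mul_of_nonneg_left (Real.exp_le_exp.mpr h2) (hTpos n).le
    -- combine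
    have hσlow := aux_sigma_lower hξ0 hξa hnN.le
    have hchain : (∑ j ∈ range (n + 1), ξ j) * (1 + L N)
        ≤ K * Real.exp 4 * (C / c) * (((n : ℝ) + 1) * am η n) * (1 + L N) := by
      calc (∑ j ∈ range (n + 1), ξ j) * (1 + L N) ≤ S N := hσlow
        _ ≤ K * T N := hST N
        _ ≤ K * (T n * Real.exp 4) := mul_le_mul_of_nonneg_left hTN hK.le
        _ ≤ K * ((C / c) * q n * (((n : ℝ) + 1) * am η n) * Real.exp 4) := by
            apply mul_le_mul_of_nonneg_left _ hK.le
            apply mul_le_mul_of_nonneg_right (hTub n) (Real.exp_pos 4).le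
        _ ≤ K * Real.exp 4 * (C / c) * (((n : ℝ) + 1) * am η n) * (1 + L N) := by
            have hq_le : q n ≤ 1 + L N := by linarith
            have expand : K * ((C / c) * q n * (((n : ℝ) + 1) * am η n) * Real.exp 4)
                = (K * Real.exp 4 * (C / c) * (((n : ℝ) + 1) * am η n)) * q n := by ring
            rw [expand, show K * Real.exp 4 * (C / c) * (((n : ℝ) + 1) * am η n) * (1 + L N)
                = (K * Real.exp 4 * (C / c) * (((n : ℝ) + 1) * am η n)) * (1 + L N) from by ring]
            apply mul_le_mul_of_nonneg_left hq_le
            exact mul_nonneg (mul_nonneg (mul_nonneg hK.le (Real.exp_pos 4).le)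
              (div_nonneg hC.le hc.le)) (hD n).le
    have h1L : (0:ℝ) < 1 + L N := by linarith [hLnonneg N]
    have hfin : (∑ j ∈ range (n + 1), ξ j)
        ≤ K * Real.exp 4 * (C / c) * (((n : ℝ) + 1) * am η n) :=
      le_of_mul_le_mul_right (by linarith [hchain]) h1L
    rw [am, div_le_iff₀ (by positivity)]
    calc (∑ j ∈ range (n + 1), ξ j)
        ≤ K * Real.exp 4 * (C / c) * (((n : ℝ) + 1) * am η n) := hfin
      _ = K * Real.exp 4 * (C / c) * am η n * ((n : ℝ) + 1) := by ring
  · -- easy case : β antitone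
    refine ⟨K * (C / c), by positivity, fun n => ?_⟩
    have hr0 : am (am η) 0 / am η 0 = 1 := by
      have : am (am η) 0 = am η 0 := by
        rw [am, Finset.sum_range_one]
        simp
      rw [this, div_self (hτpos 0).ne']
    have hcβ0 : c * β 0 ≤ 1 := by rw [← hr0]; exact (hβ 0).1
    have hβn : C * β n ≤ C / c := by
      have h1 : β n ≤ β 0 := hanti (Nat.zero_le n)
      have h2 : β 0 ≤ 1 / c := by rw [le_div_iff₀ hc]; linarith
      calc C * β n ≤ C * (1 / c) := by
            apply mul_le_mul_of_nonneg_left (h1.trans h2) hC.le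
        _ = C / c := by ring
    have hr : am (am η) n ≤ (C / c) * am η n := by
      have := (hβ n).2
      rw [div_le_iff₀ (hτpos n)] at this
      calc am (am η) n ≤ C * β n * am η n := this
        _ ≤ (C / c) * am η n := mul_le_mul_of_nonneg_right hβn (hτpos n).le
    calc am ξ n ≤ am (am ξ) n := aux_self_le_am hσa n
      _ ≤ K * am (am η) n := hKle n
      _ ≤ K * ((C / c) * am η n) := mul_le_mul_of_nonneg_left hr hK.le
      _ = K * (C / c) * am η n := by ring
end

section
/- Let η ∈ c₀* with η₁ > 0, and suppose that either (a) r(η_a) ≍ log, i.e., there exist c, C > 0 with c·log n ≤ (η_{a²})_n/(η_a)_n ≤ C·log n for all n ≥ 2; or (b) η is nonsummable and the principal ideals generated by η and by η̂ coincide, i.e., there exist m ∈ ℕ and C > 0 with η̂_n ≤ C·η_{⌈n/m⌉} and η_n ≤ C·η̂_{⌈n/m⌉} for all n. Then for every ξ ∈ c₀*: η_{a²} = O(ξ_{a²}) implies η_a = O(ξ_a). (This is the second-order inclusion cancellation J_{a²} ⊃ I_{a²} ⟹ J_a ⊃ I_a for I the principal ideal (η).) -/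
/-- `nuIdx ξ n` is (the 0-based version of) `ν(ξ)_{n+1} := min{k ≥ 1 : ∑_{i=1}^k ξ_i ≥ (n+1)ξ₁}`. -/
noncomputable def nuIdx (ξ : ℕ → ℝ) (n : ℕ) : ℕ :=
  sInf {k : ℕ | (n + 1 : ℝ) * ξ 0 ≤ ∑ i ∈ Finset.range (k + 1), ξ i}

/-- `ξ̂_n := (ξ_a)_{ν(ξ)_n}` (0-based indexing). -/
noncomputable def hatSeq (ξ : ℕ → ℝ) (n : ℕ) : ℝ := am ξ (nuIdx ξ n)

noncomputable def pS (ξ : ℕ → ℝ) (n : ℕ) : ℝ := ∑ j ∈ Finset.range (n + 1), ξ j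

noncomputable def pT (ξ : ℕ → ℝ) (n : ℕ) : ℝ := ∑ j ∈ Finset.range (n + 1), am ξ j

lemma am_def (ξ : ℕ → ℝ) (n : ℕ) : am ξ n = pS ξ n / (n + 1) := rfl

lemma amam_def (ξ : ℕ → ℝ) (n : ℕ) : am (am ξ) n = pT ξ n / (n + 1) := rfl

section Basics

variable {ξ : ℕ → ℝ}

lemma pS_nonneg (hnn : ∀ i, 0 ≤ ξ i) (n : ℕ) : 0 ≤ pS ξ n :=
  Finset.sum_nonneg fun i _ => hnn i

lemma pS_mono (hnn : ∀ i, 0 ≤ ξ i) {a b : ℕ} (h : a ≤ b) : pS ξ a ≤ pS ξ b :=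
  Finset.sum_le_sum_of_subset_of_nonneg (Finset.range_subset_range.2 (by omega))
    (fun i _ _ => hnn i)

lemma pS_zero : pS ξ 0 = ξ 0 := by simp [pS]

lemma head_le_pS (hnn : ∀ i, 0 ≤ ξ i) (n : ℕ) : ξ 0 ≤ pS ξ n := by
  have := pS_mono hnn (Nat.zero_le n)
  rwa [pS_zero] at this

lemma pS_succ (n : ℕ) : pS ξ (n + 1) = pS ξ n + ξ (n + 1) := Finset.sum_range_succ _ _

lemma anti (hmono : ∀ i, ξ (i + 1) ≤ ξ i) {a b : ℕ} (h : a ≤ b) : ξ b ≤ ξ a :=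
  antitone_nat_of_succ_le hmono h

lemma term_mul_le_pS (hmono : ∀ i, ξ (i + 1) ≤ ξ i) (n : ℕ) :
    ((n : ℝ) + 1) * ξ n ≤ pS ξ n := by
  have h : ∀ j ∈ Finset.range (n + 1), ξ n ≤ ξ j := by
    intro j hj
    exact anti hmono (by simpa [Nat.lt_succ_iff] using hj)
  have := Finset.card_nsmul_le_sum (Finset.range (n + 1)) ξ (ξ n) h
  simpa [nsmul_eq_mul, pS, mul_comm] using this

lemma pS_le_head (hmono : ∀ i, ξ (i + 1) ≤ ξ i) (n : ℕ) :
    pS ξ n ≤ ((n : ℝ) + 1) * ξ 0 := by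
  have h : ∀ j ∈ Finset.range (n + 1), ξ j ≤ ξ 0 := fun j _ => anti hmono (Nat.zero_le j)
  have := Finset.sum_le_card_nsmul (Finset.range (n + 1)) ξ (ξ 0) h
  simpa [nsmul_eq_mul, pS, mul_comm] using this

lemma succ_term_le (hnn : ∀ i, 0 ≤ ξ i) (hmono : ∀ i, ξ (i + 1) ≤ ξ i) (n : ℕ) :
    ((n : ℝ) + 1) * ξ (n + 1) ≤ pS ξ n := by
  have h1 := term_mul_le_pS hmono (n + 1)
  rw [pS_succ] at h1
  push_cast at h1
  linarith [hnn (n + 1)]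

lemma pS_tail_cap (hnn : ∀ i, 0 ≤ ξ i) (hmono : ∀ i, ξ (i + 1) ≤ ξ i) {n j : ℕ}
    (h : n ≤ j) : pS ξ j * ((n : ℝ) + 1) ≤ pS ξ n * ((j : ℝ) + 1) := by
  induction j, h using Nat.le_induction with
  | base => exact le_refl _
  | succ j hj ih =>
    have h1 : ξ (j + 1) ≤ ξ (n + 1) := anti hmono (by omega)
    have h2 := succ_term_le hnn hmono n
    have h3 : ((n : ℝ) + 1) ≥ 0 := by positivity
    have h4 : ξ (j+1) * ((n:ℝ)+1) ≤ ξ (n+1) * ((n:ℝ)+1) := by nlinarith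
    rw [pS_succ]
    push_cast
    nlinarith

end Basics

section TLemmas

variable {ξ : ℕ → ℝ}

lemma am_nonneg (hnn : ∀ i, 0 ≤ ξ i) (n : ℕ) : 0 ≤ am ξ n := by
  rw [am_def]
  have := pS_nonneg hnn n
  positivity

lemma pT_nonneg (hnn : ∀ i, 0 ≤ ξ i) (n : ℕ) : 0 ≤ pT ξ n :=
  Finset.sum_nonneg fun i _ => am_nonneg hnn i

lemma pT_mono (hnn : ∀ i, 0 ≤ ξ i) {a b : ℕ} (h : a ≤ b) : pT ξ a ≤ pT ξ b :=
  Finset.sum_le_sum_of_subset_of_nonneg (Finset.range_subset_range.2 (by omega))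
    (fun i _ _ => am_nonneg hnn i)

/-- T(n) ≥ S(n)/4 -/
lemma pS_le_four_pT (hnn : ∀ i, 0 ≤ ξ i) (hmono : ∀ i, ξ (i + 1) ≤ ξ i) (n : ℕ) :
    pS ξ n ≤ 4 * pT ξ n := by
  set h := n / 2 with hh
  have hhn : h ≤ n := Nat.div_le_self _ _
  have hsub : Finset.Ico h (n + 1) ⊆ Finset.range (n + 1) := by
    rw [Finset.range_eq_Ico]
    exact Finset.Ico_subset_Ico (Nat.zero_le _) le_rfl
  have hstep : ∀ j ∈ Finset.Ico h (n + 1), pS ξ h / ((n : ℝ) + 1) ≤ am ξ j := by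
    intro j hj
    rw [Finset.mem_Ico] at hj
    rw [am_def]
    apply div_le_div₀ (pS_nonneg hnn j) (pS_mono hnn hj.1) (by positivity)
    have : (j : ℝ) ≤ n := by exact_mod_cast Nat.lt_succ_iff.1 hj.2
    linarith
  have hcard : (Finset.Ico h (n + 1)).card = n + 1 - h := Nat.card_Ico _ _
  have hlow : ((n + 1 - h : ℕ) : ℝ) * (pS ξ h / ((n : ℝ) + 1)) ≤ pT ξ n := by
    calc ((n + 1 - h : ℕ) : ℝ) * (pS ξ h / ((n : ℝ) + 1))
        = (Finset.Ico h (n + 1)).card • (pS ξ h / ((n : ℝ) + 1)) := by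
          rw [hcard]; simp [nsmul_eq_mul]
      _ ≤ ∑ j ∈ Finset.Ico h (n + 1), am ξ j := Finset.card_nsmul_le_sum _ _ _ hstep
      _ ≤ pT ξ n := Finset.sum_le_sum_of_subset_of_nonneg hsub (fun i _ _ => am_nonneg hnn i)
  have hcap := pS_tail_cap hnn hmono hhn
  have hph : 0 ≤ pS ξ h := pS_nonneg hnn h
  have hpn : 0 ≤ pS ξ n := pS_nonneg hnn n
  have hHa : (h : ℝ) ≤ n := by exact_mod_cast hhn
  have ha1 : (0:ℝ) < (n:ℝ) + 1 := by positivity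
  have hcast : ((n + 1 - h : ℕ) : ℝ) = (n:ℝ) + 1 - h := by
    have : h ≤ n + 1 := by omega
    push_cast [Nat.cast_sub this]
    ring
  rw [hcast] at hlow
  have hlow' : ((n:ℝ) + 1 - h) * pS ξ h ≤ pT ξ n * ((n:ℝ)+1) := by
    have := mul_le_mul_of_nonneg_right hlow ha1.le
    calc ((n:ℝ) + 1 - h) * pS ξ h
        = ((n:ℝ) + 1 - h) * (pS ξ h / ((n : ℝ) + 1)) * ((n:ℝ)+1) := by
          field_simp
      _ ≤ pT ξ n * ((n:ℝ)+1) := this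
  have hnat1 : 2 * h ≤ n := by omega
  have hnat2 : n ≤ 2 * h + 1 := by omega
  have hH1 : (2:ℝ) * h ≤ n := by exact_mod_cast hnat1
  have hH2 : (n:ℝ) ≤ 2 * h + 1 := by exact_mod_cast hnat2
  have key : ((n:ℝ)+1)^2 ≤ 4 * ((n:ℝ)+1-h) * ((h:ℝ)+1) := by nlinarith
  have h5 : (0:ℝ) ≤ (n:ℝ)+1-h := by linarith
  have h6 : ((n:ℝ)+1-h) * (pS ξ n * ((h:ℝ)+1)) ≤ ((n:ℝ)+1-h) * (pS ξ h * ((n:ℝ)+1)) :=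
    mul_le_mul_of_nonneg_left hcap h5
  have h7 : ((n:ℝ)+1-h) * pS ξ h * ((n:ℝ)+1) ≤ pT ξ n * ((n:ℝ)+1) * ((n:ℝ)+1) :=
    mul_le_mul_of_nonneg_right hlow' ha1.le
  have h8 := mul_le_mul_of_nonneg_right key hpn
  nlinarith [mul_pos ha1 ha1, sq_nonneg ((n:ℝ)+1)]

end TLemmas
section LogSums

/-- upper bound: ∑_{j ∈ [a,b)} 1/(j+1) ≤ log b − log a, for 1 ≤ a ≤ b -/
lemma sum_inv_le_log (a : ℕ) (ha : 1 ≤ a) :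
    ∀ b : ℕ, a ≤ b →
      ∑ j ∈ Finset.Ico a b, (1 : ℝ) / (j + 1) ≤ Real.log b - Real.log a := by
  intro b hb
  induction b, hb using Nat.le_induction with
  | base => simp
  | succ b hab ih =>
    rw [Finset.sum_Ico_succ_top hab]
    have hb0 : (0:ℝ) < b := by
      have : 1 ≤ b := le_trans ha hab
      exact_mod_cast Nat.lt_of_lt_of_le Nat.zero_lt_one this
    have hlog : Real.log b - Real.log (b+1) ≤ (b:ℝ)/(b+1) - 1 := by
      have hx : (0:ℝ) < (b:ℝ)/((b:ℝ)+1) := by positivity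
      have := Real.log_le_sub_one_of_pos hx
      rwa [Real.log_div (by positivity) (by positivity)] at this
    have harith : (b:ℝ)/((b:ℝ)+1) - 1 = -(1/((b:ℝ)+1)) := by
      field_simp
      ring
    rw [harith] at hlog
    have : (1:ℝ)/((b:ℝ)+1) ≤ Real.log ((b:ℝ)+1) - Real.log b := by linarith
    push_cast
    linarith [ih]

/-- lower bound: log(b+1) − log(a+1) ≤ ∑_{j ∈ [a,b)} 1/(j+1) -/
lemma log_le_sum_inv (a : ℕ) :
    ∀ b : ℕ, a ≤ b →
      Real.log ((b:ℝ)+1) - Real.log ((a:ℝ)+1) ≤ ∑ j ∈ Finset.Ico a b, (1 : ℝ) / (j + 1) := by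
  intro b hb
  induction b, hb using Nat.le_induction with
  | base => simp
  | succ b hab ih =>
    rw [Finset.sum_Ico_succ_top hab]
    have hlog : Real.log ((b:ℝ)+2) - Real.log ((b:ℝ)+1) ≤ 1/((b:ℝ)+1) := by
      have hx : (0:ℝ) < ((b:ℝ)+2)/((b:ℝ)+1) := by positivity
      have := Real.log_le_sub_one_of_pos hx
      rw [Real.log_div (by positivity) (by positivity)] at this
      have harith : ((b:ℝ)+2)/((b:ℝ)+1) - 1 = 1/((b:ℝ)+1) := by
        field_simp
        norm_num
      linarith
    have hc : ((b:ℝ)+1+1) = (b:ℝ)+2 := by ring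
    push_cast
    rw [hc]
    linarith

end LogSums
section NuLemmas

variable {η : ℕ → ℝ}

lemma exists_pS_ge (hnn : ∀ i, 0 ≤ η i) (hns : ¬ Summable η) (b : ℝ) :
    ∃ k, b ≤ pS η k := by
  have ht := (not_summable_iff_tendsto_nat_atTop_of_nonneg hnn).1 hns
  obtain ⟨n, hn⟩ := (ht.eventually_ge_atTop b).exists
  refine ⟨n, le_trans hn ?_⟩
  exact Finset.sum_le_sum_of_subset_of_nonneg (Finset.range_subset_range.2 (by omega))
    (fun i _ _ => hnn i)

lemma nu_nonempty (hnn : ∀ i, 0 ≤ η i) (hns : ¬ Summable η) (t : ℕ) :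
    {k : ℕ | ((t:ℝ) + 1) * η 0 ≤ ∑ i ∈ Finset.range (k + 1), η i}.Nonempty := by
  obtain ⟨k, hk⟩ := exists_pS_ge hnn hns (((t:ℝ) + 1) * η 0)
  exact ⟨k, hk⟩

lemma nu_mem (hnn : ∀ i, 0 ≤ η i) (hns : ¬ Summable η) (t : ℕ) :
    ((t:ℝ) + 1) * η 0 ≤ pS η (nuIdx η t) := by
  have := Nat.sInf_mem (nu_nonempty hnn hns t)
  exact this

lemma nu_upper (hnn : ∀ i, 0 ≤ η i) (hmono : ∀ i, η (i + 1) ≤ η i)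
    (hpos : 0 < η 0) (hns : ¬ Summable η) (t : ℕ) :
    pS η (nuIdx η t) ≤ ((t:ℝ) + 2) * η 0 := by
  rcases Nat.eq_zero_or_pos (nuIdx η t) with h0 | hpos'
  · rw [h0, pS_zero]
    nlinarith [Nat.cast_nonneg (α := ℝ) t]
  · obtain ⟨k, hk⟩ := Nat.exists_eq_add_of_lt hpos'
    rw [zero_add] at hk
    have hknot : k ∉ {k : ℕ | ((t:ℝ) + 1) * η 0 ≤ ∑ i ∈ Finset.range (k + 1), η i} := by
      apply Nat.notMem_of_lt_sInf
      rw [← nuIdx]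
      omega
    have hklt : pS η k < ((t:ℝ) + 1) * η 0 := by
      simpa [pS] using lt_of_not_ge hknot
    have : pS η (nuIdx η t) = pS η k + η (k + 1) := by rw [hk]; exact pS_succ k
    rw [this]
    have := anti hmono (Nat.zero_le (k+1))
    linarith

end NuLemmas

section TUpper

/-- the crucial upper bound on T ξ N in terms of S ξ n -/
lemma pT_upper {ξ : ℕ → ℝ} (hnn : ∀ i, 0 ≤ ξ i) (hmono : ∀ i, ξ (i + 1) ≤ ξ i)
    (hx0 : 0 < ξ 0) (n N : ℕ) (hnN : n ≤ N) :
    pT ξ N ≤ pS ξ n * (2 + Real.log (((n:ℝ) + 1) * ξ 0 / pS ξ n)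
      + ((N:ℝ) - n) / ((n:ℝ) + 1)) := by
  have hSpos : 0 < pS ξ n := lt_of_lt_of_le hx0 (head_le_pS hnn n)
  set j₀ := min n (Nat.floor (pS ξ n / ξ 0)) with hj₀
  have hj₀n : j₀ ≤ n := min_le_left _ _
  -- split the sum
  have hsplit : pT ξ N = (∑ j ∈ Finset.Ico 0 (j₀+1), am ξ j)
      + (∑ j ∈ Finset.Ico (j₀+1) (n+1), am ξ j)
      + (∑ j ∈ Finset.Ico (n+1) (N+1), am ξ j) := by
    rw [pT, Finset.range_eq_Ico]
    rw [Finset.sum_Ico_consecutive _ (by omega : 0 ≤ j₀+1) (by omega : j₀+1 ≤ n+1)]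
    rw [Finset.sum_Ico_consecutive _ (by omega : 0 ≤ n+1) (by omega : n+1 ≤ N+1)]
  -- part 1
  have hp1 : (∑ j ∈ Finset.Ico 0 (j₀+1), am ξ j) ≤ 2 * pS ξ n := by
    have hterm : ∀ j ∈ Finset.Ico 0 (j₀+1), am ξ j ≤ ξ 0 := by
      intro j _
      rw [am_def, div_le_iff₀ (by positivity)]
      have := pS_le_head hmono j
      linarith [this]
    calc (∑ j ∈ Finset.Ico 0 (j₀+1), am ξ j)
        ≤ (Finset.Ico 0 (j₀+1)).card • ξ 0 := Finset.sum_le_card_nsmul _ _ _ hterm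
      _ = ((j₀:ℝ) + 1) * ξ 0 := by
          rw [Nat.card_Ico]; push_cast; ring
      _ ≤ 2 * pS ξ n := by
          have h1 : (j₀ : ℝ) ≤ Nat.floor (pS ξ n / ξ 0) := by
            exact_mod_cast min_le_right n _
          have h2 : (Nat.floor (pS ξ n / ξ 0) : ℝ) ≤ pS ξ n / ξ 0 :=
            Nat.floor_le (by positivity)
          have h3 : ((j₀:ℝ) + 1) * ξ 0 ≤ (pS ξ n / ξ 0 + 1) * ξ 0 := by nlinarith
          have h4 : (pS ξ n / ξ 0 + 1) * ξ 0 = pS ξ n + ξ 0 := by field_simp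
          have h5 : ξ 0 ≤ pS ξ n := head_le_pS hnn n
          linarith
  -- part 2
  have hp2 : (∑ j ∈ Finset.Ico (j₀+1) (n+1), am ξ j)
      ≤ pS ξ n * Real.log (((n:ℝ) + 1) * ξ 0 / pS ξ n) := by
    have hterm : ∀ j ∈ Finset.Ico (j₀+1) (n+1), am ξ j ≤ pS ξ n * (1/((j:ℝ)+1)) := by
      intro j hj
      rw [Finset.mem_Ico] at hj
      rw [am_def, div_le_iff₀ (by positivity)]
      have h1 : pS ξ j ≤ pS ξ n := pS_mono hnn (by omega)
      have : pS ξ n * (1/((j:ℝ)+1)) * ((j:ℝ)+1) = pS ξ n := by field_simp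
      rw [this]
      exact h1
    have hsum := Finset.sum_le_sum hterm
    rw [← Finset.mul_sum] at hsum
    have hlogratio : Real.log (((n:ℝ)+1)) - Real.log ((j₀:ℝ)+1)
        ≤ Real.log (((n:ℝ) + 1) * ξ 0 / pS ξ n) := by
      rcases le_or_gt (Nat.floor (pS ξ n / ξ 0)) n with hc | hc
      · have hj₀eq : j₀ = Nat.floor (pS ξ n / ξ 0) := min_eq_right hc
        have hgt : pS ξ n / ξ 0 < (j₀:ℝ) + 1 := by
          rw [hj₀eq]; exact Nat.lt_floor_add_one _
        have h2 : Real.log (pS ξ n / ξ 0) ≤ Real.log ((j₀:ℝ)+1) :=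
          Real.log_le_log (by positivity) hgt.le
        have hid : Real.log (((n:ℝ) + 1) * ξ 0 / pS ξ n)
            = Real.log ((n:ℝ)+1) - Real.log (pS ξ n / ξ 0) := by
          rw [Real.log_div (by positivity) (by positivity),
              Real.log_mul (by positivity) (by positivity),
              Real.log_div (by positivity) (by positivity)]
          ring
        rw [hid]
        linarith
      · have hj₀eq : j₀ = n := min_eq_left (by omega)
        rw [hj₀eq]
        simp only [sub_self]
        apply Real.log_nonneg
        rw [le_div_iff₀ hSpos]
        have := pS_le_head hmono n
        linarith
    calc (∑ j ∈ Finset.Ico (j₀+1) (n+1), am ξ j)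
        ≤ pS ξ n * (∑ j ∈ Finset.Ico (j₀+1) (n+1), 1/((j:ℝ)+1)) := hsum
      _ ≤ pS ξ n * (Real.log ((n:ℝ)+1) - Real.log ((j₀:ℝ)+1)) := by
          apply mul_le_mul_of_nonneg_left _ hSpos.le
          have := sum_inv_le_log (j₀+1) (by omega) (n+1) (by omega)
          push_cast at this ⊢
          convert this using 2 <;> push_cast <;> ring
      _ ≤ pS ξ n * Real.log (((n:ℝ) + 1) * ξ 0 / pS ξ n) :=
          mul_le_mul_of_nonneg_left hlogratio hSpos.le
  -- part 3
  have hp3 : (∑ j ∈ Finset.Ico (n+1) (N+1), am ξ j) ≤ pS ξ n * (((N:ℝ) - n)/((n:ℝ)+1)) := by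
    have hterm : ∀ j ∈ Finset.Ico (n+1) (N+1), am ξ j ≤ pS ξ n / ((n:ℝ)+1) := by
      intro j hj
      rw [Finset.mem_Ico] at hj
      rw [am_def, div_le_div_iff₀ (by positivity) (by positivity)]
      exact pS_tail_cap hnn hmono (by omega)
    calc (∑ j ∈ Finset.Ico (n+1) (N+1), am ξ j)
        ≤ (Finset.Ico (n+1) (N+1)).card • (pS ξ n / ((n:ℝ)+1)) :=
          Finset.sum_le_card_nsmul _ _ _ hterm
      _ = ((N - n : ℕ) : ℝ) * (pS ξ n / ((n:ℝ)+1)) := by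
          rw [Nat.card_Ico]
          have : N + 1 - (n + 1) = N - n := by omega
          rw [this]; simp [nsmul_eq_mul]
      _ = pS ξ n * (((N:ℝ) - n)/((n:ℝ)+1)) := by
          rw [Nat.cast_sub hnN]; ring
  rw [hsplit]
  have expand : pS ξ n * (2 + Real.log (((n:ℝ) + 1) * ξ 0 / pS ξ n)
      + ((N:ℝ) - n) / ((n:ℝ) + 1))
      = 2 * pS ξ n + pS ξ n * Real.log (((n:ℝ) + 1) * ξ 0 / pS ξ n)
      + pS ξ n * (((N:ℝ) - n)/((n:ℝ)+1)) := by ring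
  rw [expand]
  linarith

end TUpper
/-- The key property: the second-order mean of η dominates, at some N ≥ n, the quantity
needed to force first-order domination. -/
def KeyProp (η : ℕ → ℝ) : Prop :=
  ∃ c : ℝ, 0 < c ∧ ∀ n : ℕ, ∃ N : ℕ, n ≤ N ∧
    c * (pS η n * (1 + Real.log (((n:ℝ) + 1) * η 0 / pS η n) + ((N:ℝ) - n) / ((n:ℝ) + 1)))
      ≤ pT η N

section CaseA

lemma key_of_a {η : ℕ → ℝ} (hnn : ∀ i, 0 ≤ η i) (hmono : ∀ i, η (i + 1) ≤ η i)
    (hpos : 0 < η 0)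
    (ha : ∃ c C : ℝ, 0 < c ∧ 0 < C ∧ ∀ n : ℕ, 1 ≤ n →
      c * Real.log (n + 1) ≤ am (am η) n / am η n ∧
      am (am η) n / am η n ≤ C * Real.log (n + 1)) : KeyProp η := by
  obtain ⟨c, C, hc, hC, hcc⟩ := ha
  have hlog2 : 0 < Real.log 2 := Real.log_pos (by norm_num)
  refine ⟨min 1 (c * Real.log 2 / (1 + Real.log 2)), by positivity, fun n => ⟨n, le_rfl, ?_⟩⟩
  set c' := min 1 (c * Real.log 2 / (1 + Real.log 2)) with hc'
  have hc'pos : 0 < c' := by rw [hc']; positivity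
  have hτ : ((n:ℝ) - n) / ((n:ℝ) + 1) = 0 := by simp
  rw [hτ, add_zero]
  have hspos : 0 < pS η n := lt_of_lt_of_le hpos (head_le_pS hnn n)
  rcases Nat.eq_zero_or_pos n with h0 | h1
  · subst h0
    have e1 : pS η 0 = η 0 := pS_zero
    have e2 : pT η 0 = η 0 := by
      simp [pT, am, Finset.sum_range_one]
    rw [e1, e2]
    have : ((0:ℕ):ℝ) + 1 = 1 := by norm_num
    rw [this, one_mul]
    have : η 0 / η 0 = 1 := div_self (ne_of_gt hpos)
    rw [this, Real.log_one, add_zero, mul_one]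
    have : c' ≤ 1 := min_le_left _ _
    nlinarith
  · -- n ≥ 1
    have hlow := (hcc n h1).1
    have hampos : 0 < am η n := by rw [am_def]; positivity
    have hTlow : c * Real.log ((n:ℝ) + 1) * pS η n ≤ pT η n := by
      rw [le_div_iff₀ hampos] at hlow
      rw [amam_def] at hlow
      have h2 : c * Real.log ((n:ℝ)+1) * am η n * ((n:ℝ)+1) ≤ pT η n := by
        have := mul_le_mul_of_nonneg_right hlow (by positivity : (0:ℝ) ≤ (n:ℝ)+1)
        calc c * Real.log ((n:ℝ)+1) * am η n * ((n:ℝ)+1)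
            ≤ pT η n / ((n:ℝ)+1) * ((n:ℝ)+1) := this
          _ = pT η n := by field_simp
      rw [am_def] at h2
      calc c * Real.log ((n:ℝ) + 1) * pS η n
          = c * Real.log ((n:ℝ)+1) * (pS η n / ((n:ℝ)+1)) * ((n:ℝ)+1) := by field_simp
        _ ≤ pT η n := h2
    set L := Real.log (((n:ℝ) + 1) * η 0 / pS η n) with hL
    have hLle : L ≤ Real.log ((n:ℝ) + 1) := by
      rw [hL]
      apply Real.log_le_log (by positivity)
      rw [div_le_iff₀ hspos]
      have := head_le_pS hnn n
      nlinarith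
    have hLnn : 0 ≤ L := by
      rw [hL]
      apply Real.log_nonneg
      rw [le_div_iff₀ hspos]
      have := pS_le_head hmono n
      linarith
    have hd : Real.log 2 ≤ Real.log ((n:ℝ) + 1) := by
      apply Real.log_le_log (by norm_num)
      have : (1:ℝ) ≤ (n:ℝ) := by exact_mod_cast h1
      linarith
    -- c'(1+X) ≤ cX for X := log(n+1)
    have hkey : c' * (1 + Real.log ((n:ℝ)+1)) ≤ c * Real.log ((n:ℝ)+1) := by
      have h3 : c' ≤ c * Real.log 2 / (1 + Real.log 2) := min_le_right _ _
      set X := Real.log ((n:ℝ)+1)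
      set d := Real.log 2
      have hXpos : 0 < X := lt_of_lt_of_le hlog2 hd
      have h4 : c' * (1 + X) ≤ (c * d / (1 + d)) * (1 + X) := by nlinarith
      have h5 : (c * d / (1 + d)) * (1 + X) ≤ c * X := by
        rw [div_mul_eq_mul_div, div_le_iff₀ (by positivity : (0:ℝ) < 1 + d)]
        nlinarith
      linarith
    calc c' * (pS η n * (1 + L))
        ≤ c' * (pS η n * (1 + Real.log ((n:ℝ)+1))) := by nlinarith [mul_pos hc'pos hspos]
      _ = c' * (1 + Real.log ((n:ℝ)+1)) * pS η n := by ring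
      _ ≤ c * Real.log ((n:ℝ)+1) * pS η n :=
          mul_le_mul_of_nonneg_right hkey hspos.le
      _ ≤ pT η n := hTlow

end CaseA
section CaseB

set_option maxHeartbeats 1600000 in

lemma key_of_b {η : ℕ → ℝ} (hnn : ∀ i, 0 ≤ η i) (hmono : ∀ i, η (i + 1) ≤ η i)
    (hpos : 0 < η 0) (hns : ¬ Summable η) (m : ℕ) (hm : 0 < m) (C : ℝ) (hC : 0 < C)
    (hb : ∀ n, η n ≤ C * hatSeq η (n / m)) : KeyProp η := by
  classical
  have hD : (0:ℝ) < 192 * (C + 1) * ((m:ℝ) + 1) := by positivity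
  refine ⟨1 / (192 * (C + 1) * ((m:ℝ) + 1)), by positivity, fun n => ?_⟩
  set c : ℝ := 1 / (192 * (C + 1) * ((m:ℝ) + 1)) with hcdef
  have hcpos : 0 < c := by rw [hcdef]; positivity
  -- the three constant bounds on c
  have hc192 : 192 * c ≤ 1 := by
    rw [hcdef, mul_one_div, div_le_one hD]; nlinarith [Nat.cast_nonneg (α := ℝ) m]
  have hc24m : 24 * (m:ℝ) * c ≤ 1 := by
    rw [hcdef, mul_one_div, div_le_one hD]; nlinarith [Nat.cast_nonneg (α := ℝ) m]
  have hc48Cm : 48 * C * (m:ℝ) * c ≤ 1 := by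
    rw [hcdef, mul_one_div, div_le_one hD]; nlinarith [Nat.cast_nonneg (α := ℝ) m]
  clear_value c
  set s := pS η n with hs
  clear_value s
  have hspos : 0 < s := by rw [hs]; exact lt_of_lt_of_le hpos (head_le_pS hnn n)
  have hP0 : s ≤ 2 * ((n:ℝ) + 1) * η 0 := by
    have := pS_le_head hmono n
    have hn0 : (0:ℝ) ≤ (n:ℝ) + 1 := by positivity
    nlinarith
  obtain ⟨istar, hin, hηi, hmax⟩ :
      ∃ i, i ≤ n ∧ (s ≤ 2 * ((n:ℝ) + 1) * η i) ∧
        ∀ j, i < j → j ≤ n → ¬ (s ≤ 2 * ((n:ℝ) + 1) * η j) := by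
    classical
    refine ⟨Nat.findGreatest (fun i => s ≤ 2 * ((n:ℝ) + 1) * η i) n,
      Nat.findGreatest_le n,
      Nat.findGreatest_spec (P := fun i => s ≤ 2 * ((n:ℝ) + 1) * η i)
        (Nat.zero_le n) hP0,
      fun j h1 h2 => Nat.findGreatest_is_greatest
        (P := fun i => s ≤ 2 * ((n:ℝ) + 1) * η i) h1 h2⟩
  have hηipos : 0 < η istar := by nlinarith [Nat.cast_nonneg (α := ℝ) n]
  -- F1 : s ≤ 2 * pS η istar
  have hF1 : s ≤ 2 * pS η istar := by
    have hsplit : pS η n = pS η istar + ∑ j ∈ Finset.Ico (istar+1) (n+1), η j := by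
      rw [pS, pS]
      rw [Finset.range_eq_Ico, Finset.range_eq_Ico]
      exact (Finset.sum_Ico_consecutive η (by omega : 0 ≤ istar+1) (by omega : istar+1 ≤ n+1)).symm
    have htail : ∑ j ∈ Finset.Ico (istar+1) (n+1), η j ≤ s / 2 := by
      have hterm : ∀ j ∈ Finset.Ico (istar+1) (n+1), η j ≤ s / (2 * ((n:ℝ)+1)) := by
        intro j hj
        rw [Finset.mem_Ico] at hj
        have hnP := hmax j (by omega) (by omega)
        rw [not_le] at hnP
        rw [le_div_iff₀ (by positivity)]
        nlinarith
      calc ∑ j ∈ Finset.Ico (istar+1) (n+1), η j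
          ≤ (Finset.Ico (istar+1) (n+1)).card • (s / (2 * ((n:ℝ)+1))) :=
            Finset.sum_le_card_nsmul _ _ _ hterm
        _ = ((n - istar : ℕ) : ℝ) * (s / (2 * ((n:ℝ)+1))) := by
            rw [Nat.card_Ico]
            have : n + 1 - (istar + 1) = n - istar := by omega
            rw [this]; simp [nsmul_eq_mul]
        _ ≤ s / 2 := by
            have h1 : ((n - istar : ℕ) : ℝ) ≤ (n:ℝ) + 1 := by
              have : (n - istar : ℕ) ≤ n + 1 := by omega
              exact_mod_cast this
            have h2 : (0:ℝ) ≤ s / (2 * ((n:ℝ)+1)) := by positivity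
            have h3 : ((n - istar : ℕ) : ℝ) * (s / (2 * ((n:ℝ)+1)))
                ≤ ((n:ℝ)+1) * (s / (2 * ((n:ℝ)+1))) := by nlinarith
            have h4 : ((n:ℝ)+1) * (s / (2 * ((n:ℝ)+1))) = s / 2 := by
              field_simp
            linarith
    have hsum := pS_nonneg hnn istar
    have hts : s = pS η istar + ∑ j ∈ Finset.Ico (istar+1) (n+1), η j := by
      rw [hs]; exact hsplit
    linarith

  -- setup of the far point
  set t0 := istar / m with ht0
  have ht0i : (t0:ℝ) ≤ (istar:ℝ) := by
    exact_mod_cast Nat.div_le_self istar m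
  set N' := nuIdx η t0 with hN'
  have hnu1 : ((t0:ℝ) + 1) * η 0 ≤ pS η N' := by
    rw [hN']; exact nu_mem hnn hns t0
  have hnu2 : pS η N' ≤ ((t0:ℝ) + 2) * η 0 := by
    rw [hN']; exact nu_upper hnn hmono hpos hns t0
  have hhat : hatSeq η (istar / m) = pS η N' / ((N':ℝ)+1) := by
    rw [← ht0, hatSeq, ← hN', am_def]
  clear_value t0 N'
  refine ⟨max n N', le_max_left _ _, ?_⟩
  set N := max n N' with hN
  set TT := pT η N with hTTdef
  clear_value N TT
  have hTTnn : 0 ≤ TT := by rw [hTTdef]; exact pT_nonneg hnn N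
  have hG1 : s ≤ 4 * TT := by
    have h1 := pS_le_four_pT hnn hmono n
    have h2 : pT η n ≤ TT := by
      rw [hTTdef, hN]; exact pT_mono hnn (le_max_left _ _)
    rw [hs]; linarith
  have hmt : (istar : ℝ) + 1 ≤ (m:ℝ) * ((t0:ℝ) + 1) := by
    have h1 : istar + 1 ≤ m * (t0 + 1) := by
      have h2 := Nat.div_add_mod istar m
      have h3 := Nat.mod_lt istar hm
      have h4 : m * (t0 + 1) = m * t0 + m := by ring
      rw [ht0] at h4 ⊢
      omega
    exact_mod_cast h1
  have hG2 : ((istar:ℝ) + 1) * η 0 ≤ 4 * (m:ℝ) * TT := by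
    have h1 := hnu1
    have h2 := pS_le_four_pT hnn hmono N'
    have h3 : pT η N' ≤ TT := by
      rw [hTTdef, hN]; exact pT_mono hnn (le_max_right _ _)
    have h4 : ((istar:ℝ)+1) * η 0 ≤ (m:ℝ) * (((t0:ℝ)+1) * η 0) := by
      nlinarith [mul_le_mul_of_nonneg_right hmt hpos.le]
    have h5 : (m:ℝ) * (((t0:ℝ)+1) * η 0) ≤ (m:ℝ) * pS η N' :=
      mul_le_mul_of_nonneg_left h1 (by positivity)
    have h6 : (m:ℝ) * pS η N' ≤ (m:ℝ) * (4 * pT η N') :=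
      mul_le_mul_of_nonneg_left h2 (by positivity)
    have h7 : (m:ℝ) * (4 * pT η N') ≤ (m:ℝ) * (4 * TT) := by
      apply mul_le_mul_of_nonneg_left _ (by positivity)
      linarith
    linarith
  have hG3 : pS η istar * (Real.log ((n:ℝ)+2) - Real.log ((istar:ℝ)+2)) ≤ TT := by
    have hterm : ∀ j ∈ Finset.Ico (istar+1) (n+1),
        pS η istar * (1/((j:ℝ)+1)) ≤ am η j := by
      intro j hj
      rw [Finset.mem_Ico] at hj
      have h1 : pS η istar ≤ pS η j := pS_mono hnn (by omega)
      have h2 : pS η istar * (1/((j:ℝ)+1)) = pS η istar / ((j:ℝ)+1) := by ring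
      rw [h2, am_def]
      exact div_le_div₀ (pS_nonneg hnn j) h1 (by positivity) le_rfl
    have hsum : ∑ j ∈ Finset.Ico (istar+1) (n+1), pS η istar * (1/((j:ℝ)+1))
        ≤ ∑ j ∈ Finset.Ico (istar+1) (n+1), am η j := Finset.sum_le_sum hterm
    have hsub : ∑ j ∈ Finset.Ico (istar+1) (n+1), am η j ≤ pT η n := by
      rw [pT, Finset.range_eq_Ico]
      exact Finset.sum_le_sum_of_subset_of_nonneg (Finset.Ico_subset_Ico (by omega) le_rfl)
        (fun i _ _ => am_nonneg hnn i)
    have hlog := log_le_sum_inv (istar+1) (n+1) (by omega)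
    have hfac : pS η istar * (Real.log ((n:ℝ)+2) - Real.log ((istar:ℝ)+2))
        ≤ pS η istar * ∑ j ∈ Finset.Ico (istar+1) (n+1), (1:ℝ)/((j:ℝ)+1) := by
      apply mul_le_mul_of_nonneg_left _ (pS_nonneg hnn istar)
      have hcast : Real.log ((n:ℝ)+2) - Real.log ((istar:ℝ)+2)
          = Real.log (((n+1:ℕ):ℝ)+1) - Real.log (((istar+1:ℕ):ℝ)+1) := by
        push_cast; ring_nf
      rw [hcast]
      exact hlog
    rw [Finset.mul_sum] at hfac
    have h5 : pT η n ≤ TT := by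
      rw [hTTdef, hN]; exact pT_mono hnn (le_max_left _ _)
    linarith
  have hOWE : ((N':ℝ) + 1) * η istar ≤ C * (((t0:ℝ) + 2) * η 0) := by
    have h1 := hb istar
    rw [hhat] at h1
    have h3 : ((N':ℝ)+1) * η istar ≤ C * pS η N' := by
      have h4 := mul_le_mul_of_nonneg_right h1 (by positivity : (0:ℝ) ≤ (N':ℝ)+1)
      calc ((N':ℝ)+1) * η istar = η istar * ((N':ℝ)+1) := by ring
        _ ≤ C * (pS η N' / ((N':ℝ)+1)) * ((N':ℝ)+1) := h4
        _ = C * pS η N' := by field_simp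
    have h4 := hnu2
    nlinarith
  set L := Real.log (((n:ℝ) + 1) * η 0 / s) with hLdef
  have hLnn : 0 ≤ L := by
    rw [hLdef]; apply Real.log_nonneg; rw [le_div_iff₀ hspos]
    have h6 := pS_le_head hmono n
    rw [hs]; linarith
  have hB1 : 3 * (c * s) ≤ TT := by
    have u1 : c * s ≤ c * (4 * TT) := mul_le_mul_of_nonneg_left hG1 hcpos.le
    have u2 : 192 * c * TT ≤ 1 * TT := mul_le_mul_of_nonneg_right hc192 hTTnn
    nlinarith [mul_nonneg hcpos.le hTTnn]
  have hB2 : 3 * (c * s * L) ≤ TT := by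
    rcases le_or_gt (Real.exp (L/2) * s) (((istar:ℝ)+1) * η 0) with hcase | hcase
    · have h1 : L/2 + 1 ≤ Real.exp (L/2) := Real.add_one_le_exp _
      have h2 : (L/2) * s ≤ Real.exp (L/2) * s := by
        have u := mul_le_mul_of_nonneg_right h1 hspos.le
        linarith
      have h3 : s * L ≤ 8 * (m:ℝ) * TT := by linarith
      have u1 : 3*c*(s*L) ≤ 3*c*(8*(m:ℝ)*TT) :=
        mul_le_mul_of_nonneg_left h3 (by positivity)
      have u2 : 24*(m:ℝ)*c*TT ≤ 1*TT := mul_le_mul_of_nonneg_right hc24m hTTnn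
      linarith
    · have hlogh : Real.log (((istar:ℝ)+1) * η 0 / s) < L/2 := by
        rw [Real.log_lt_iff_lt_exp (by positivity), div_lt_iff₀ hspos]
        linarith
      have e1 : L = Real.log ((n:ℝ)+1) + Real.log (η 0) - Real.log s := by
        rw [hLdef, Real.log_div (by positivity) (ne_of_gt hspos),
          Real.log_mul (by positivity) (ne_of_gt hpos)]
      have e2 : Real.log (((istar:ℝ)+1) * η 0 / s)
          = Real.log ((istar:ℝ)+1) + Real.log (η 0) - Real.log s := by
        rw [Real.log_div (by positivity) (ne_of_gt hspos),
          Real.log_mul (by positivity) (ne_of_gt hpos)]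
      have hlogdiff : Real.log ((n:ℝ)+1) - Real.log ((istar:ℝ)+1) - Real.log 2
          ≤ Real.log ((n:ℝ)+2) - Real.log ((istar:ℝ)+2) := by
        have hp1 : (0:ℝ) ≤ (istar:ℝ) := Nat.cast_nonneg _
        have hp2 : (0:ℝ) ≤ (n:ℝ) := Nat.cast_nonneg _
        have hprod : ((n:ℝ)+1) * ((istar:ℝ)+2) ≤ 2 * (((n:ℝ)+2) * ((istar:ℝ)+1)) := by
          nlinarith
        have h7 := Real.log_le_log (by positivity) hprod
        rw [Real.log_mul (by positivity) (by positivity),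
          Real.log_mul (by norm_num) (by positivity),
          Real.log_mul (by positivity) (by positivity)] at h7
        linarith
      have hTB3 : (s/2) * (L/2 - Real.log 2) ≤ TT := by
        rcases le_or_gt (L/2 - Real.log 2) 0 with hneg | hposx
        · have u := mul_nonpos_of_nonneg_of_nonpos (by positivity : (0:ℝ) ≤ s/2) hneg
          linarith
        · have hD1 : L/2 - Real.log 2
              ≤ Real.log ((n:ℝ)+2) - Real.log ((istar:ℝ)+2) := by
            have h8 : L - Real.log (((istar:ℝ)+1) * η 0 / s)
                = Real.log ((n:ℝ)+1) - Real.log ((istar:ℝ)+1) := by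
              rw [e1, e2]; ring
            linarith
          have h9a : s/2 ≤ pS η istar := by linarith
          have h9b : (s/2) * (L/2 - Real.log 2)
              ≤ pS η istar * (L/2 - Real.log 2) :=
            mul_le_mul_of_nonneg_right h9a hposx.le
          have h9c : pS η istar * (L/2 - Real.log 2)
              ≤ pS η istar * (Real.log ((n:ℝ)+2) - Real.log ((istar:ℝ)+2)) :=
            mul_le_mul_of_nonneg_left hD1 (pS_nonneg hnn istar)
          linarith
      rcases le_or_gt (4 * Real.log 2) L with hL4 | hL4
      · have h10 : (s/2) * (L/4) ≤ TT := by
          have u : L/4 ≤ L/2 - Real.log 2 := by linarith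
          have u2 : (s/2) * (L/4) ≤ (s/2) * (L/2 - Real.log 2) :=
            mul_le_mul_of_nonneg_left u (by positivity)
          linarith
        have u3 : 24*c*((s/2)*(L/4)) ≤ 24*c*TT :=
          mul_le_mul_of_nonneg_left h10 (by positivity)
        have u4 : 192*c*TT ≤ 1*TT := mul_le_mul_of_nonneg_right hc192 hTTnn
        nlinarith [mul_nonneg hcpos.le hTTnn]
      · have hlog2le : Real.log 2 ≤ 1 := by
          have h11 := Real.log_le_sub_one_of_pos (by norm_num : (0:ℝ) < 2)
          linarith
        have hL4' : L ≤ 4 := by linarith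
        have u1 : (3*(c*s))*L ≤ (3*(c*s))*4 :=
          mul_le_mul_of_nonneg_left hL4' (by positivity)
        have u2 : 12*c*s ≤ 12*c*(4*TT) :=
          mul_le_mul_of_nonneg_left hG1 (by positivity)
        have u3 : 192*c*TT ≤ 1*TT := mul_le_mul_of_nonneg_right hc192 hTTnn
        nlinarith [mul_nonneg hcpos.le hTTnn]
  have hB3 : 3 * (c * s * (((N:ℝ) - (n:ℝ))/((n:ℝ)+1))) ≤ TT := by
    rcases le_or_gt N' n with hc1 | hc1
    · have hNn : N = n := by rw [hN]; exact max_eq_left hc1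
      rw [hNn]
      have : ((n:ℝ) - (n:ℝ))/((n:ℝ)+1) = 0 := by simp
      rw [this]
      simpa using hTTnn
    · have hNN' : N = N' := by rw [hN]; exact max_eq_right hc1.le
      rw [hNN']
      have h1 : ((N':ℝ) + 1) * s ≤ 4 * C * ((n:ℝ)+1) * (((istar:ℝ)+1) * η 0) := by
        have h2 : ((N':ℝ)+1) * s ≤ ((N':ℝ)+1) * (2*((n:ℝ)+1)*η istar) :=
          mul_le_mul_of_nonneg_left hηi (by positivity)
        have h3 : ((t0:ℝ)+2) ≤ 2*((istar:ℝ)+1) := by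
          linarith
        have h4 : ((N':ℝ)+1) * (2*((n:ℝ)+1)*η istar)
            = 2*((n:ℝ)+1) * (((N':ℝ)+1) * η istar) := by ring
        have h5 : 2*((n:ℝ)+1) * (((N':ℝ)+1) * η istar)
            ≤ 2*((n:ℝ)+1) * (C * (((t0:ℝ) + 2) * η 0)) :=
          mul_le_mul_of_nonneg_left hOWE (by positivity)
        have h6 : C * (((t0:ℝ) + 2) * η 0) ≤ C * (2*((istar:ℝ)+1) * η 0) := by
          apply mul_le_mul_of_nonneg_left _ hC.le
          nlinarith [mul_le_mul_of_nonneg_right h3 hpos.le]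
        have h7 : 2*((n:ℝ)+1) * (C * (((t0:ℝ) + 2) * η 0))
            ≤ 2*((n:ℝ)+1) * (C * (2*((istar:ℝ)+1) * η 0)) :=
          mul_le_mul_of_nonneg_left h6 (by positivity)
        nlinarith
      have hτs : (((N':ℝ) - (n:ℝ))/((n:ℝ)+1)) * s ≤ 4 * C * (((istar:ℝ)+1) * η 0) := by
        rw [div_mul_eq_mul_div, div_le_iff₀ (by positivity : (0:ℝ) < (n:ℝ)+1)]
        have h4 : ((N':ℝ) - (n:ℝ)) * s ≤ ((N':ℝ)+1) * s := by
          have u : ((N':ℝ) - (n:ℝ)) ≤ ((N':ℝ)+1) := by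
            have := Nat.cast_nonneg (α := ℝ) n
            linarith
          exact mul_le_mul_of_nonneg_right u hspos.le
        linarith
      have hτnn : 0 ≤ ((N':ℝ) - (n:ℝ))/((n:ℝ)+1) := by
        apply div_nonneg _ (by positivity)
        have h8 : (n:ℝ) ≤ (N':ℝ) := by exact_mod_cast hc1.le
        linarith
      have h9 : 3*c*((((N':ℝ) - (n:ℝ))/((n:ℝ)+1)) * s)
          ≤ 3*c*(4 * C * (((istar:ℝ)+1) * η 0)) :=
        mul_le_mul_of_nonneg_left hτs (by positivity)
      have h10 : 12 * C * c * (((istar:ℝ)+1) * η 0) ≤ 12 * C * c * (4*(m:ℝ)*TT) :=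
        mul_le_mul_of_nonneg_left hG2 (by positivity)
      have h11 : 48 * C * (m:ℝ) * c * TT ≤ 1 * TT :=
        mul_le_mul_of_nonneg_right hc48Cm hTTnn
      linarith
  have expand : c * (s * (1 + L + ((N:ℝ) - (n:ℝ))/((n:ℝ)+1)))
      = c * s + c * s * L + c * s * (((N:ℝ) - (n:ℝ))/((n:ℝ)+1)) := by ring
  rw [hLdef] at expand
  rw [expand]
  rw [hLdef] at hB2
  linarith


end CaseB
section Master

set_option maxHeartbeats 1600000 in
lemma master {η ξ : ℕ → ℝ} (hηn : ∀ i, 0 ≤ η i) (hηm : ∀ i, η (i + 1) ≤ η i)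
    (hpos : 0 < η 0)
    (hξn : ∀ i, 0 ≤ ξ i) (hξm : ∀ i, ξ (i + 1) ≤ ξ i)
    (hkey : KeyProp η) (hbig : BigO (am (am η)) (am (am ξ))) : BigO (am η) (am ξ) := by
  obtain ⟨c, hc, hkeyn⟩ := hkey
  obtain ⟨K, hK, hbigN⟩ := hbig
  have hTT : ∀ N, pT η N ≤ K * pT ξ N := by
    intro N
    have h := hbigN N
    rw [amam_def, amam_def] at h
    rw [div_le_iff₀ (by positivity : (0:ℝ) < (N:ℝ)+1)] at h
    have e2 : K * (pT ξ N / ((N:ℝ)+1)) * ((N:ℝ)+1) = K * pT ξ N := by field_simp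
    rw [e2] at h
    exact h
  have hx0 : 0 < ξ 0 := by
    have h := hTT 0
    have e1 : pT η 0 = η 0 := by
      simp [pT, am, Finset.sum_range_one]
    have e2 : pT ξ 0 = ξ 0 := by
      simp [pT, am, Finset.sum_range_one]
    rw [e1, e2] at h
    by_contra hcon
    push_neg at hcon
    nlinarith
  set g := max 0 (Real.log (ξ 0 / η 0)) with hg
  have hgnn : 0 ≤ g := le_max_left _ _
  set E := max (8 * K / c) (2 + g) with hE
  have hE2 : 2 + g ≤ E := le_max_right _ _
  have hEK : 8 * K / c ≤ E := le_max_left _ _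
  have hEpos : 0 < E := by linarith
  clear_value g E
  refine ⟨Real.exp E, Real.exp_pos E, fun n => ?_⟩
  have hexpE1 : (1:ℝ) ≤ Real.exp E := Real.one_le_exp hEpos.le
  suffices hgoal : pS η n ≤ Real.exp E * pS ξ n by
    rw [am_def, am_def, ← mul_div_assoc]
    rw [div_le_div_iff₀ (by positivity) (by positivity)]
    nlinarith [sq_nonneg ((n:ℝ)+1), Nat.cast_nonneg (α := ℝ) n]
  have hsξpos : 0 < pS ξ n := lt_of_lt_of_le hx0 (head_le_pS hξn n)
  have hsηpos : 0 < pS η n := lt_of_lt_of_le hpos (head_le_pS hηn n)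
  have hsle : pS η n ≤ ((n:ℝ)+1) * η 0 := pS_le_head hηm n
  have hsξle : pS ξ n ≤ ((n:ℝ)+1) * ξ 0 := pS_le_head hξm n
  set sη := pS η n with hsη
  set sξ := pS ξ n with hsξ
  clear_value sη sξ
  rcases le_or_gt sη sξ with hcase | hcase
  · nlinarith
  · -- sξ < sη
    obtain ⟨N, hnN, hkey_n⟩ := hkeyn n
    have hTup := pT_upper hξn hξm hx0 n N hnN
    rw [← hsξ] at hTup
    rw [← hsη] at hkey_n
    set L := Real.log (((n:ℝ) + 1) * η 0 / sη) with hLdef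
    set τ := ((N:ℝ) - (n:ℝ)) / ((n:ℝ) + 1) with hτdef
    set r := sη / sξ with hrdef
    have hr1 : 1 < r := by rw [hrdef, lt_div_iff₀ hsξpos]; linarith
    have hrpos : 0 < r := by linarith
    have hlogr : 0 < Real.log r := Real.log_pos hr1
    have hLnn : 0 ≤ L := by
      rw [hLdef]; apply Real.log_nonneg; rw [le_div_iff₀ hsηpos]
      linarith
    have hτnn : 0 ≤ τ := by
      rw [hτdef]
      apply div_nonneg _ (by positivity)
      have : (n:ℝ) ≤ (N:ℝ) := by exact_mod_cast hnN
      linarith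
    clear_value L τ r
    -- M identity
    have hM : Real.log (((n:ℝ)+1) * ξ 0 / sξ) = L + Real.log (ξ 0 / η 0) + Real.log r := by
      have hid : ((n:ℝ)+1) * ξ 0 / sξ
          = ((((n:ℝ)+1) * η 0 / sη) * (ξ 0 / η 0)) * r := by
        rw [hrdef]
        field_simp
      rw [hid, Real.log_mul _ (by positivity), Real.log_mul (by positivity) (by positivity),
        hLdef]
      · positivity
    have hMle : Real.log (((n:ℝ)+1) * ξ 0 / sξ) ≤ L + g + Real.log r := by
      rw [hM]
      have : Real.log (ξ 0 / η 0) ≤ g := by rw [hg]; exact le_max_right _ _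
      linarith
    -- chain
    have hstep1 : c * (sη * (1 + L + τ)) ≤ K * (sξ * (2 + (L + g + Real.log r) + τ)) := by
      have h1 : pT η N ≤ K * pT ξ N := hTT N
      have h2 : K * pT ξ N ≤ K * (sξ * (2 + Real.log (((n:ℝ)+1) * ξ 0 / sξ) + τ)) := by
        apply mul_le_mul_of_nonneg_left _ hK.le
        exact hTup
      have h3 : K * (sξ * (2 + Real.log (((n:ℝ)+1) * ξ 0 / sξ) + τ))
          ≤ K * (sξ * (2 + (L + g + Real.log r) + τ)) := by
        apply mul_le_mul_of_nonneg_left _ hK.le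
        apply mul_le_mul_of_nonneg_left _ hsξpos.le
        linarith
      calc c * (sη * (1 + L + τ)) ≤ pT η N := hkey_n
        _ ≤ K * pT ξ N := h1
        _ ≤ K * (sξ * (2 + Real.log (((n:ℝ)+1) * ξ 0 / sξ) + τ)) := h2
        _ ≤ K * (sξ * (2 + (L + g + Real.log r) + τ)) := h3
    have hfactor : 2 + (L + g + Real.log r) + τ ≤ (1 + L + τ) * (2 + g + Real.log r) := by
      nlinarith
    have hstep2 : c * (sη * (1 + L + τ)) ≤ (K * sξ * (2 + g + Real.log r)) * (1 + L + τ) := by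
      have h4 : K * (sξ * (2 + (L + g + Real.log r) + τ))
          ≤ K * (sξ * ((1 + L + τ) * (2 + g + Real.log r))) := by
        apply mul_le_mul_of_nonneg_left _ hK.le
        exact mul_le_mul_of_nonneg_left hfactor hsξpos.le
      calc c * (sη * (1 + L + τ)) ≤ K * (sξ * (2 + (L + g + Real.log r) + τ)) := hstep1
        _ ≤ K * (sξ * ((1 + L + τ) * (2 + g + Real.log r))) := h4
        _ = (K * sξ * (2 + g + Real.log r)) * (1 + L + τ) := by ring
    have hX : (0:ℝ) < 1 + L + τ := by linarith
    have hcr : c * sη ≤ K * sξ * (2 + g + Real.log r) := by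
      have h5 : (c * sη) * (1 + L + τ) ≤ (K * sξ * (2 + g + Real.log r)) * (1 + L + τ) := by
        calc (c * sη) * (1 + L + τ) = c * (sη * (1 + L + τ)) := by ring
          _ ≤ (K * sξ * (2 + g + Real.log r)) * (1 + L + τ) := hstep2
      exact le_of_mul_le_mul_right h5 hX
    -- final bound on r
    by_contra hcon
    push_neg at hcon
    -- hcon : Real.exp E * sξ < sη
    have hrE : Real.exp E < r := by
      rw [hrdef, lt_div_iff₀ hsξpos]
      linarith
    set y := Real.log r with hy
    have hyE : E < y := by
      rw [hy, Real.lt_log_iff_exp_lt hrpos]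
      exact hrE
    have hrexp : r = Real.exp y := by rw [hy, Real.exp_log hrpos]
    have hyg : 2 + g ≤ y := by linarith
    have hy0 : 0 < y := by linarith
    have hyK : 8 * K / c ≤ y := by linarith
    have hcy : 8 * K ≤ c * y := by
      rw [div_le_iff₀ hc] at hyK
      linarith
    have hexp2 : (y/2 + 1)^2 ≤ Real.exp y := by
      have h1 : y/2 + 1 ≤ Real.exp (y/2) := Real.add_one_le_exp _
      have h2 : Real.exp (y/2) * Real.exp (y/2) = Real.exp y := by
        rw [← Real.exp_add]; ring_nf
      nlinarith [Real.exp_pos (y/2)]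
    have hcr2 : c * Real.exp y ≤ K * (2 + g + y) := by
      have h6 : c * sη = c * r * sξ := by rw [hrdef]; field_simp
      have h7 : c * r * sξ ≤ K * (2 + g + y) * sξ := by
        calc c * r * sξ = c * sη := h6.symm
          _ ≤ K * sξ * (2 + g + y) := hcr
          _ = K * (2 + g + y) * sξ := by ring
      have h8 : c * r ≤ K * (2 + g + y) := le_of_mul_le_mul_right h7 hsξpos
      rw [hrexp] at h8
      exact h8
    -- contradiction: c·exp y ≥ c(y²/4 + y + 1) > K(2+g+y)
    have hfin1 : c * ((y/2+1)^2) ≤ c * Real.exp y := mul_le_mul_of_nonneg_left hexp2 hc.le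
    have hfin2 : 8 * K * y ≤ c * y * y := mul_le_mul_of_nonneg_right hcy hy0.le
    have hfin3 : K * (2 + g + y) ≤ K * (2 * y) := by
      apply mul_le_mul_of_nonneg_left _ hK.le
      linarith
    nlinarith
  
end Master

theorem stmt_11 (η : ℕ → ℝ) (hη : IsC0Star η) (hpos : 0 < η 0)
    (hcond :
      (∃ c C : ℝ, 0 < c ∧ 0 < C ∧ ∀ n : ℕ, 1 ≤ n →
        c * Real.log (n + 1) ≤ am (am η) n / am η n ∧
        am (am η) n / am η n ≤ C * Real.log (n + 1)) ∨
      (¬ Summable η ∧ ∃ m : ℕ, 0 < m ∧ ∃ C : ℝ, 0 < C ∧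
        (∀ n, hatSeq η n ≤ C * η (n / m)) ∧ (∀ n, η n ≤ C * hatSeq η (n / m)))) :
    ∀ ξ : ℕ → ℝ, IsC0Star ξ → BigO (am (am η)) (am (am ξ)) → BigO (am η) (am ξ) := by
  intro ξ hξ hbig
  obtain ⟨hηn, hηm, -⟩ := hη
  obtain ⟨hξn, hξm, -⟩ := hξ
  rcases hcond with ha | ⟨hns, m, hm, C, hC, -, hb2⟩
  · exact master hηn hηm hpos hξn hξm (key_of_a hηn hηm hpos ha) hbig
  · exact master hηn hηm hpos hξn hξm (key_of_b hηn hηm hpos hns m hm C hC hb2) hbig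
end

section
/- Let η ∈ c₀* with η₁ > 0, and suppose that either (a) r(η_a) ≍ log, i.e., there exist c, C > 0 with c·log n ≤ (η_{a²})_n/(η_a)_n ≤ C·log n for all n ≥ 2; or (b) η is regular, i.e., η_a = O(η). Then for every ξ ∈ c₀*: ξ_{a²} ≍ η_{a²} implies ξ_a ≍ η_a. (This is the second-order equality cancellation J_{a²} = I_{a²} ⟹ J_a = I_a for I the principal ideal (η).) -/
open Finset Real

noncomputable def Sp (f : ℕ → ℝ) (n : ℕ) : ℝ := ∑ j ∈ range n, f j
noncomputable def Tp (f : ℕ → ℝ) (n : ℕ) : ℝ := ∑ k ∈ range n, Sp f (k+1) / ((k:ℝ)+1)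
noncomputable def Hp (n : ℕ) : ℝ := ∑ k ∈ range n, (1:ℝ) / ((k:ℝ)+1)

section basic
variable {f : ℕ → ℝ} (h0 : ∀ n, 0 ≤ f n) (hdec : ∀ n, f (n+1) ≤ f n)

lemma f_anti (hdec : ∀ n, f (n+1) ≤ f n) : Antitone f := antitone_nat_of_succ_le hdec

lemma Sp_nonneg (h0 : ∀ n, 0 ≤ f n) (n : ℕ) : 0 ≤ Sp f n :=
  Finset.sum_nonneg fun i _ => h0 i

lemma Sp_mono (h0 : ∀ n, 0 ≤ f n) : Monotone (Sp f) := by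
  apply monotone_nat_of_le_succ
  intro n
  simp only [Sp, Finset.sum_range_succ]
  linarith [h0 n]

lemma Sp_pos (h0 : ∀ n, 0 ≤ f n) (hp : 0 < f 0) {m : ℕ} (hm : 1 ≤ m) : 0 < Sp f m := by
  have h1 : Sp f 1 = f 0 := by simp [Sp]
  have := Sp_mono h0 hm
  rw [h1] at this; linarith

lemma term_le_Sp (hdec : ∀ n, f (n+1) ≤ f n) {m : ℕ} :
    (m:ℝ) * f m ≤ Sp f m := by
  have : ∀ i ∈ range m, f m ≤ f i := fun i hi =>
    f_anti hdec (le_of_lt (Finset.mem_range.mp hi))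
  calc (m:ℝ) * f m = ∑ _i ∈ range m, f m := by simp [mul_comm]
    _ ≤ Sp f m := Finset.sum_le_sum this

lemma Sp_sub (m M : ℕ) (h : m ≤ M) : Sp f M = Sp f m + ∑ j ∈ Ico m M, f j := by
  rw [Sp, Sp, ← Finset.sum_range_add_sum_Ico f h]

-- concavity ratio: m * S M ≤ M * S m  for 1 ≤ m ≤ M
lemma ratio_mono (h0 : ∀ n, 0 ≤ f n) (hdec : ∀ n, f (n+1) ≤ f n) {m M : ℕ}
    (hm : 1 ≤ m) (hmM : m ≤ M) : (m:ℝ) * Sp f M ≤ (M:ℝ) * Sp f m := by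
  have hsub := Sp_sub (f := f) m M hmM
  have htail : ∑ j ∈ Ico m M, f j ≤ ((M:ℝ) - m) * f m := by
    have : ∀ j ∈ Ico m M, f j ≤ f m := fun j hj =>
      f_anti hdec (Finset.mem_Ico.mp hj).1
    calc ∑ j ∈ Ico m M, f j ≤ ∑ _j ∈ Ico m M, f m := Finset.sum_le_sum this
      _ = ((M:ℝ) - m) * f m := by
          rw [Finset.sum_const, Nat.card_Ico, nsmul_eq_mul, Nat.cast_sub hmM]
  have hfm : (m:ℝ) * f m ≤ Sp f m := term_le_Sp hdec
  have hMm : (0:ℝ) ≤ (M:ℝ) - m := by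
    have : (m:ℝ) ≤ M := Nat.cast_le.mpr hmM
    linarith
  have hm1 : (1:ℝ) ≤ m := by exact_mod_cast hm
  nlinarith [Sp_nonneg h0 m]

lemma Sp_div_anti (h0 : ∀ n, 0 ≤ f n) (hdec : ∀ n, f (n+1) ≤ f n) {m M : ℕ}
    (hm : 1 ≤ m) (hmM : m ≤ M) : Sp f M / M ≤ Sp f m / m := by
  have h1 : (0:ℝ) < m := by exact_mod_cast hm
  have h2 : (0:ℝ) < M := lt_of_lt_of_le h1 (Nat.cast_le.mpr hmM)
  rw [div_le_div_iff₀ h2 h1]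
  have := ratio_mono h0 hdec hm hmM
  nlinarith

lemma Sp_double (h0 : ∀ n, 0 ≤ f n) (hdec : ∀ n, f (n+1) ≤ f n) {m : ℕ} (hm : 1 ≤ m) :
    Sp f (2*m) ≤ 2 * Sp f m := by
  have := ratio_mono h0 hdec hm (by omega : m ≤ 2*m)
  have h1 : (0:ℝ) < m := by exact_mod_cast hm
  have hc : ((2*m : ℕ) : ℝ) = 2 * m := by push_cast; ring
  rw [hc] at this
  nlinarith

lemma Tp_mono (h0 : ∀ n, 0 ≤ f n) : Monotone (Tp f) := by
  apply monotone_nat_of_le_succ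
  intro n
  simp only [Tp, Finset.sum_range_succ]
  have : 0 ≤ Sp f (n+1) / ((n:ℝ)+1) :=
    div_nonneg (Sp_nonneg h0 _) (by positivity)
  linarith

lemma Sp_le_Tp (h0 : ∀ n, 0 ≤ f n) (hdec : ∀ n, f (n+1) ≤ f n) {m : ℕ} (hm : 1 ≤ m) :
    Sp f m ≤ Tp f m := by
  have key : ∀ k ∈ range m, Sp f m / m ≤ Sp f (k+1) / ((k:ℝ)+1) := by
    intro k hk
    have hk' : k + 1 ≤ m := Finset.mem_range.mp hk
    have := Sp_div_anti h0 hdec (Nat.succ_le_succ (Nat.zero_le k)) hk'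
    calc Sp f m / m ≤ Sp f (k+1) / ((k+1:ℕ):ℝ) := this
      _ = Sp f (k+1) / ((k:ℝ)+1) := by push_cast; ring_nf
  have hm' : (0:ℝ) < m := by exact_mod_cast hm
  calc Sp f m = ∑ _k ∈ range m, Sp f m / m := by
        rw [Finset.sum_const, Finset.card_range, nsmul_eq_mul]; field_simp
    _ ≤ Tp f m := Finset.sum_le_sum key

lemma Tp_sub_le (h0 : ∀ n, 0 ≤ f n) {m M : ℕ} (hmM : m ≤ M) :
    Tp f M - Tp f m ≤ Sp f M * (Hp M - Hp m) := by
  have e1 : Tp f M - Tp f m = ∑ k ∈ Ico m M, Sp f (k+1) / ((k:ℝ)+1) :=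
    (Finset.sum_Ico_eq_sub _ hmM).symm
  have e2 : Hp M - Hp m = ∑ k ∈ Ico m M, (1:ℝ) / ((k:ℝ)+1) :=
    (Finset.sum_Ico_eq_sub _ hmM).symm
  rw [e1, e2, Finset.mul_sum]
  apply Finset.sum_le_sum
  intro k hk
  have hk' : k + 1 ≤ M := (Finset.mem_Ico.mp hk).2
  have : Sp f (k+1) ≤ Sp f M := Sp_mono h0 hk'
  have hp : (0:ℝ) < (k:ℝ)+1 := by positivity
  rw [mul_one_div]
  gcongr

lemma Tp_sub_ge (h0 : ∀ n, 0 ≤ f n) {m M : ℕ} (hmM : m ≤ M) :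
    Sp f m * (Hp M - Hp m) ≤ Tp f M - Tp f m := by
  have e1 : Tp f M - Tp f m = ∑ k ∈ Ico m M, Sp f (k+1) / ((k:ℝ)+1) :=
    (Finset.sum_Ico_eq_sub _ hmM).symm
  have e2 : Hp M - Hp m = ∑ k ∈ Ico m M, (1:ℝ) / ((k:ℝ)+1) :=
    (Finset.sum_Ico_eq_sub _ hmM).symm
  rw [e1, e2, Finset.mul_sum]
  apply Finset.sum_le_sum
  intro k hk
  have hk' : m ≤ k := (Finset.mem_Ico.mp hk).1
  have : Sp f m ≤ Sp f (k+1) := Sp_mono h0 (by omega)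
  have hp : (0:ℝ) < (k:ℝ)+1 := by positivity
  rw [mul_one_div]
  gcongr

lemma Tp_le (h0 : ∀ n, 0 ≤ f n) (M : ℕ) : Tp f M ≤ Sp f M * Hp M := by
  have h := Tp_sub_le h0 (Nat.zero_le M) (f := f)
  have e0 : Tp f 0 = 0 := by simp [Tp]
  have e1 : Hp 0 = 0 := by simp [Hp]
  rw [e0, e1] at h
  linarith

end basic

-- Harmonic estimates
lemma one_div_le_log_sub (k : ℕ) (hk : 1 ≤ k) :
    (1:ℝ) / ((k:ℝ)+1) ≤ Real.log ((k:ℝ)+1) - Real.log k := by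
  have hk' : (0:ℝ) < k := by exact_mod_cast hk
  have h1 : Real.log ((k:ℝ)/((k:ℝ)+1)) ≤ (k:ℝ)/((k:ℝ)+1) - 1 :=
    Real.log_le_sub_one_of_pos (by positivity)
  have h2 : Real.log ((k:ℝ)/((k:ℝ)+1)) = Real.log k - Real.log ((k:ℝ)+1) :=
    Real.log_div (by positivity) (by positivity)
  have h3 : (k:ℝ)/((k:ℝ)+1) - 1 = -(1/((k:ℝ)+1)) := by field_simp; ring
  rw [h2, h3] at h1; linarith

lemma log_sub_le_one_div (k : ℕ) :
    Real.log ((k:ℝ)+2) - Real.log ((k:ℝ)+1) ≤ (1:ℝ) / ((k:ℝ)+1) := by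
  have h1 : Real.log (((k:ℝ)+2)/((k:ℝ)+1)) ≤ ((k:ℝ)+2)/((k:ℝ)+1) - 1 :=
    Real.log_le_sub_one_of_pos (by positivity)
  have h2 : Real.log (((k:ℝ)+2)/((k:ℝ)+1)) = Real.log ((k:ℝ)+2) - Real.log ((k:ℝ)+1) :=
    Real.log_div (by positivity) (by positivity)
  have h3 : ((k:ℝ)+2)/((k:ℝ)+1) - 1 = 1/((k:ℝ)+1) := by
    have hp : ((k:ℝ)+1) ≠ 0 := by positivity
    field_simp
    ring
  rw [h2, h3] at h1; linarith


lemma log_tel (n : ℕ) : ∑ k ∈ range n, (Real.log ((k:ℝ)+1) - Real.log (k:ℝ)) = Real.log n := by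
  have h := Finset.sum_range_sub (fun k : ℕ => Real.log (k:ℝ)) n
  push_cast at h
  simpa using h

lemma log_tel2 (n : ℕ) : ∑ k ∈ range n, (Real.log ((k:ℝ)+2) - Real.log ((k:ℝ)+1)) = Real.log ((n:ℝ)+1) := by
  have h := Finset.sum_range_sub (fun k : ℕ => Real.log ((k:ℝ)+1)) n
  push_cast at h
  have : ∑ k ∈ range n, (Real.log ((k:ℝ)+2) - Real.log ((k:ℝ)+1))
      = ∑ k ∈ range n, (Real.log ((k:ℝ)+1+1) - Real.log ((k:ℝ)+1)) := by
    apply Finset.sum_congr rfl; intro i _; ring_nf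
  rw [this]
  simpa using h

lemma Hp_le (m : ℕ) (hm : 1 ≤ m) : Hp m ≤ 1 + Real.log m := by
  have e : Hp 1 + ∑ k ∈ Ico 1 m, (1:ℝ)/((k:ℝ)+1) = Hp m :=
    Finset.sum_range_add_sum_Ico _ hm
  have h1 : Hp 1 = 1 := by simp [Hp]
  have h2 : ∑ k ∈ Ico 1 m, (1:ℝ)/((k:ℝ)+1) ≤
      ∑ k ∈ Ico 1 m, (Real.log ((k:ℝ)+1) - Real.log (k:ℝ)) := by
    apply Finset.sum_le_sum
    intro k hk
    exact one_div_le_log_sub k (Finset.mem_Ico.mp hk).1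
  have h3 : ∑ k ∈ Ico 1 m, (Real.log ((k:ℝ)+1) - Real.log (k:ℝ)) = Real.log m := by
    rw [Finset.sum_Ico_eq_sub _ hm, log_tel, log_tel]
    simp
  rw [← e, h1]
  rw [h3] at h2
  linarith

lemma Hp_sub_le (m M : ℕ) (hm : 1 ≤ m) (hmM : m ≤ M) :
    Hp M - Hp m ≤ Real.log M - Real.log m := by
  have e : Hp M - Hp m = ∑ k ∈ Ico m M, (1:ℝ)/((k:ℝ)+1) :=
    (Finset.sum_Ico_eq_sub _ hmM).symm
  have h2 : ∑ k ∈ Ico m M, (1:ℝ)/((k:ℝ)+1) ≤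
      ∑ k ∈ Ico m M, (Real.log ((k:ℝ)+1) - Real.log (k:ℝ)) := by
    apply Finset.sum_le_sum
    intro k hk
    exact one_div_le_log_sub k (le_trans hm (Finset.mem_Ico.mp hk).1)
  have h3 : ∑ k ∈ Ico m M, (Real.log ((k:ℝ)+1) - Real.log (k:ℝ))
      = Real.log M - Real.log m := by
    rw [Finset.sum_Ico_eq_sub _ hmM, log_tel, log_tel]
  rw [e]; rw [h3] at h2; exact h2

lemma Hp_sub_ge (m M : ℕ) (hmM : m ≤ M) :
    Real.log ((M:ℝ)+1) - Real.log ((m:ℝ)+1) ≤ Hp M - Hp m := by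
  have e : Hp M - Hp m = ∑ k ∈ Ico m M, (1:ℝ)/((k:ℝ)+1) :=
    (Finset.sum_Ico_eq_sub _ hmM).symm
  have h2 : ∑ k ∈ Ico m M, (Real.log ((k:ℝ)+2) - Real.log ((k:ℝ)+1)) ≤
      ∑ k ∈ Ico m M, (1:ℝ)/((k:ℝ)+1) := by
    apply Finset.sum_le_sum
    intro k _
    exact log_sub_le_one_div k
  have h3 : ∑ k ∈ Ico m M, (Real.log ((k:ℝ)+2) - Real.log ((k:ℝ)+1))
      = Real.log ((M:ℝ)+1) - Real.log ((m:ℝ)+1) := by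
    rw [Finset.sum_Ico_eq_sub _ hmM, log_tel2, log_tel2]
  rw [e]; rw [h3] at h2; exact h2

-- conversions between am and Sp/Tp
lemma am_eq (f : ℕ → ℝ) (n : ℕ) : am f n = Sp f (n+1) / ((n:ℝ)+1) := rfl

lemma amam_eq (f : ℕ → ℝ) (n : ℕ) : am (am f) n = Tp f (n+1) / ((n:ℝ)+1) := by
  unfold am Tp
  congr 1

lemma bigO_am_of_Sp (f g : ℕ → ℝ)
    (h : ∃ C : ℝ, 0 < C ∧ ∀ m, 1 ≤ m → Sp f m ≤ C * Sp g m) : BigO (am f) (am g) := by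
  obtain ⟨C, hC, h⟩ := h
  refine ⟨C, hC, fun n => ?_⟩
  rw [am_eq, am_eq, ← mul_div_assoc]
  have hn : (0:ℝ) < (n:ℝ)+1 := by positivity
  exact (div_le_div_iff_of_pos_right hn).mpr (h (n+1) (by omega))

lemma Tp_le_of_bigO (f g : ℕ → ℝ) {C : ℝ} (h : ∀ n, am (am f) n ≤ C * am (am g) n) :
    ∀ m, 1 ≤ m → Tp f m ≤ C * Tp g m := by
  intro m hm
  obtain ⟨n, rfl⟩ : ∃ n, m = n + 1 := ⟨m - 1, by omega⟩
  have := h n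
  rw [amam_eq, amam_eq, ← mul_div_assoc] at this
  have hn : (0:ℝ) < (n:ℝ)+1 := by positivity
  exact (div_le_div_iff_of_pos_right hn).mp this

lemma extend_small (f g : ℕ → ℝ) (hf : Monotone f) (hg : Monotone g) (hg1 : 0 < g 1)
    (N₀ : ℕ) (hN₀ : 1 ≤ N₀) {C : ℝ} (hC : 0 < C) (h : ∀ m, N₀ ≤ m → f m ≤ C * g m) :
    ∃ C' : ℝ, 0 < C' ∧ ∀ m, 1 ≤ m → f m ≤ C' * g m := by
  refine ⟨max C (f N₀ / g 1 + 1), lt_of_lt_of_le hC (le_max_left _ _), fun m hm => ?_⟩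
  have hgm : g 1 ≤ g m := hg hm
  have hgm0 : 0 < g m := lt_of_lt_of_le hg1 hgm
  rcases le_or_gt N₀ m with h1 | h1
  · calc f m ≤ C * g m := h m h1
      _ ≤ max C (f N₀ / g 1 + 1) * g m :=
        mul_le_mul_of_nonneg_right (le_max_left _ _) hgm0.le
  · have hmax : max C (f N₀ / g 1 + 1) * g 1 ≥ (f N₀ / g 1 + 1) * g 1 :=
      mul_le_mul_of_nonneg_right (le_max_right _ _) hg1.le
    have he : (f N₀ / g 1 + 1) * g 1 = f N₀ + g 1 := by field_simp
    calc f m ≤ f N₀ := hf h1.le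
      _ ≤ (f N₀ / g 1 + 1) * g 1 := by rw [he]; linarith
      _ ≤ max C (f N₀ / g 1 + 1) * g 1 := hmax
      _ ≤ max C (f N₀ / g 1 + 1) * g m := by
          apply mul_le_mul_of_nonneg_left hgm
          exact le_of_lt (lt_of_lt_of_le hC (le_max_left _ _))

section caseB
variable {η ξ : ℕ → ℝ}

lemma Tp_le_K_Sp (hreg : ∃ K : ℝ, 1 ≤ K ∧ ∀ n : ℕ, Sp η (n+1) ≤ K * ((n:ℝ)+1) * η n) :
    ∃ K : ℝ, 1 ≤ K ∧ ∀ m, Tp η m ≤ K * Sp η m := by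
  obtain ⟨K, hK, h⟩ := hreg
  refine ⟨K, hK, fun m => ?_⟩
  rw [Tp, Sp, Finset.mul_sum]
  apply Finset.sum_le_sum
  intro k _
  have := h k
  have hp : (0:ℝ) < (k:ℝ)+1 := by positivity
  rw [div_le_iff₀ hp]
  calc Sp η (k+1) ≤ K * ((k:ℝ)+1) * η k := this
    _ = K * η k * ((k:ℝ)+1) := by ring

-- doubling from below
lemma Sp_reg_double (hη0 : ∀ n, 0 ≤ η n) (hηdec : ∀ n, η (n+1) ≤ η n)
    {K : ℝ} (hK : 1 ≤ K) (h : ∀ n : ℕ, Sp η (n+1) ≤ K * ((n:ℝ)+1) * η n)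
    {m : ℕ} (hm : 1 ≤ m) : Sp η m ≤ (1 - 1/(2*K)) * Sp η (2*m) := by
  have h2m : Sp η (2*m) = Sp η m + ∑ j ∈ Ico m (2*m), η j := Sp_sub m (2*m) (by omega)
  have htail : (m:ℝ) * η (2*m-1) ≤ ∑ j ∈ Ico m (2*m), η j := by
    have : ∀ j ∈ Ico m (2*m), η (2*m-1) ≤ η j := by
      intro j hj
      exact f_anti hηdec (by have := (Finset.mem_Ico.mp hj).2; omega)
    calc (m:ℝ) * η (2*m-1) = ∑ _j ∈ Ico m (2*m), η (2*m-1) := by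
          rw [Finset.sum_const, Nat.card_Ico, nsmul_eq_mul]
          congr 1
          push_cast [(by omega : 2*m - m = m)]
          norm_num
      _ ≤ _ := Finset.sum_le_sum this
  have hup : Sp η (2*m) ≤ K * (2*(m:ℝ)) * η (2*m-1) := by
    have := h (2*m-1)
    have e : 2*m - 1 + 1 = 2*m := by omega
    rw [e] at this
    have e2 : ((2*m-1 : ℕ):ℝ) + 1 = 2*(m:ℝ) := by
      push_cast [(by omega : 2*m - 1 = 2*m - 1)]
      have : (1:ℕ) ≤ 2*m := by omega
      push_cast [Nat.cast_sub this]
      ring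
    rw [e2] at this
    exact this
  have hKpos : (0:ℝ) < K := by linarith
  have hmpos : (0:ℝ) < m := by exact_mod_cast hm
  have hηpos' : 0 ≤ η (2*m-1) := hη0 _
  -- from hup : η(2m-1) ≥ Sp η (2m) / (2Km)
  have key : Sp η (2*m) / (2*K) ≤ (m:ℝ) * η (2*m-1) := by
    rw [div_le_iff₀ (by positivity)]
    nlinarith
  have : Sp η m + Sp η (2*m) / (2*K) ≤ Sp η (2*m) := by
    have h5 := le_trans key htail
    linarith
  have e3 : (1 - 1/(2*K)) * Sp η (2*m) = Sp η (2*m) - Sp η (2*m)/(2*K) := by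
    field_simp
  linarith [e3]

lemma Sp_reg_pow (hη0 : ∀ n, 0 ≤ η n) (hηdec : ∀ n, η (n+1) ≤ η n)
    {K : ℝ} (hK : 1 ≤ K) (h : ∀ n : ℕ, Sp η (n+1) ≤ K * ((n:ℝ)+1) * η n)
    (j : ℕ) : ∀ m : ℕ, 1 ≤ m → Sp η m ≤ (1 - 1/(2*K))^j * Sp η (2^j * m) := by
  induction j with
  | zero => intro m hm; simp
  | succ j ih =>
    intro m hm
    have hlam : 0 ≤ (1 - 1/(2*K)) := by
      have : 1/(2*K) ≤ 1/2 := by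
        apply div_le_div_of_nonneg_left <;> linarith
      linarith
    calc Sp η m ≤ (1 - 1/(2*K))^j * Sp η (2^j * m) := ih m hm
      _ ≤ (1 - 1/(2*K))^j * ((1 - 1/(2*K)) * Sp η (2*(2^j*m))) := by
          apply mul_le_mul_of_nonneg_left _ (pow_nonneg hlam j)
          exact Sp_reg_double hη0 hηdec hK h
            (Nat.one_le_iff_ne_zero.mpr (Nat.mul_ne_zero (Nat.pos_iff_ne_zero.mp (pow_pos (by norm_num) j)) (by omega)))
      _ = (1 - 1/(2*K))^(j+1) * Sp η (2^(j+1) * m) := by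
          have e : 2*(2^j*m) = 2^(j+1)*m := by ring
          rw [e, pow_succ]
          ring

lemma case_b_main
    (hη0 : ∀ n, 0 ≤ η n) (hηdec : ∀ n, η (n+1) ≤ η n)
    (hξ0 : ∀ n, 0 ≤ ξ n) (hξdec : ∀ n, ξ (n+1) ≤ ξ n)
    (hξpos : 0 < ξ 0)
    {K : ℝ} (hK : 1 ≤ K) (hreg : ∀ n : ℕ, Sp η (n+1) ≤ K * ((n:ℝ)+1) * η n)
    {C₁ C₂ : ℝ} (hC₁ : 0 < C₁) (hC₂ : 0 < C₂)
    (hT1 : ∀ m, 1 ≤ m → Tp ξ m ≤ C₁ * Tp η m)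
    (hT2 : ∀ m, 1 ≤ m → Tp η m ≤ C₂ * Tp ξ m) :
    (∃ C : ℝ, 0 < C ∧ ∀ m, 1 ≤ m → Sp ξ m ≤ C * Sp η m) ∧
    (∃ C : ℝ, 0 < C ∧ ∀ m, 1 ≤ m → Sp η m ≤ C * Sp ξ m) := by
  have hKpos : (0:ℝ) < K := by linarith
  have hTK : ∀ m, Tp η m ≤ K * Sp η m := by
    obtain ⟨K', hK', h'⟩ := Tp_le_K_Sp (η := η) ⟨K, hK, hreg⟩
    -- K' is literally K here; redo directly
    exact fun m => by
      rw [Tp, Sp, Finset.mul_sum]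
      apply Finset.sum_le_sum
      intro k _
      have hp : (0:ℝ) < (k:ℝ)+1 := by positivity
      rw [div_le_iff₀ hp]
      calc Sp η (k+1) ≤ K * ((k:ℝ)+1) * η k := hreg k
        _ = K * η k * ((k:ℝ)+1) := by ring
  constructor
  · -- easy direction
    refine ⟨C₁ * K, by positivity, fun m hm => ?_⟩
    calc Sp ξ m ≤ Tp ξ m := Sp_le_Tp hξ0 hξdec hm
      _ ≤ C₁ * Tp η m := hT1 m hm
      _ ≤ C₁ * (K * Sp η m) := mul_le_mul_of_nonneg_left (hTK m) hC₁.le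
      _ = C₁ * K * Sp η m := by ring
  · -- hard direction
    set lam : ℝ := 1 - 1/(2*K) with hlam_def
    have hlam0 : 0 ≤ lam := by
      have : 1/(2*K) ≤ 1/2 := by
        apply div_le_div_of_nonneg_left <;> linarith
      simp only [hlam_def]; linarith
    have hlam1 : lam < 1 := by
      have : 0 < 1/(2*K) := by positivity
      simp only [hlam_def]; linarith
    obtain ⟨j₀, hj₀⟩ := exists_pow_lt_of_lt_one
      (show (0:ℝ) < 1/(2*C₁*C₂*K) by positivity) hlam1
    set j : ℕ := j₀ + 1 with hj_def
    have hjlam : lam^j ≤ 1/(2*C₁*C₂*K) :=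
      le_trans (pow_le_pow_of_le_one hlam0 hlam1.le (by omega)) hj₀.le
    have hj1 : 1 ≤ j := by omega
    set p : ℕ := 2^j with hp_def
    have hp1 : 1 ≤ p := Nat.one_le_two_pow
    -- key estimate at N = p * m
    have key : ∀ m : ℕ, 1 ≤ m → Sp η (p*m) ≤ (2*j*C₂) * Sp ξ (p*m) := by
      intro m hm
      set N := p * m with hN_def
      have hN1 : 1 ≤ N := Nat.one_le_iff_ne_zero.mpr (Nat.mul_ne_zero (by omega) (by omega))
      have hmN : m ≤ N := Nat.le_mul_of_pos_left m (by omega)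
      have hSpN : 0 ≤ Sp η N := Sp_nonneg hη0 N
      have step1 : Sp η m ≤ Sp η N / (2*C₁*C₂*K) := by
        calc Sp η m ≤ lam^j * Sp η N := Sp_reg_pow hη0 hηdec hK hreg j m hm
          _ ≤ (1/(2*C₁*C₂*K)) * Sp η N := mul_le_mul_of_nonneg_right hjlam hSpN
          _ = Sp η N / (2*C₁*C₂*K) := by ring
      have step2 : Tp ξ m ≤ Tp ξ N / 2 := by
        have c1 : Tp ξ m ≤ C₁ * Tp η m := hT1 m hm
        have c2 : Tp η m ≤ K * Sp η m := hTK m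
        have c3 : Sp η N ≤ Tp η N := Sp_le_Tp hη0 hηdec hN1
        have c4 : Tp η N ≤ C₂ * Tp ξ N := hT2 N hN1
        have : Tp ξ m ≤ C₁ * K * (Sp η N / (2*C₁*C₂*K)) := by
          calc Tp ξ m ≤ C₁ * Tp η m := c1
            _ ≤ C₁ * (K * Sp η m) := mul_le_mul_of_nonneg_left c2 hC₁.le
            _ = C₁ * K * Sp η m := by ring
            _ ≤ C₁ * K * (Sp η N / (2*C₁*C₂*K)) :=
                mul_le_mul_of_nonneg_left step1 (by positivity)
        have e : C₁ * K * (Sp η N / (2*C₁*C₂*K)) = Sp η N / (2*C₂) := by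
          field_simp
        rw [e] at this
        calc Tp ξ m ≤ Sp η N / (2*C₂) := this
          _ ≤ Tp η N / (2*C₂) := by
              apply div_le_div_of_nonneg_right c3 (by positivity)
          _ ≤ (C₂ * Tp ξ N) / (2*C₂) := by
              apply div_le_div_of_nonneg_right c4 (by positivity)
          _ = Tp ξ N / 2 := by field_simp
      have step3 : Tp ξ N - Tp ξ m ≤ Sp ξ N * (j:ℝ) := by
        have h1 : Tp ξ N - Tp ξ m ≤ Sp ξ N * (Hp N - Hp m) := Tp_sub_le hξ0 hmN
        have h2 : Hp N - Hp m ≤ Real.log N - Real.log m := Hp_sub_le m N hm hmN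
        have h3 : Real.log N - Real.log m = (j:ℝ) * Real.log 2 := by
          have hm0 : (0:ℝ) < m := by exact_mod_cast hm
          have : ((N:ℕ):ℝ) = 2^j * (m:ℝ) := by
            rw [hN_def, hp_def]; push_cast; ring
          rw [this, Real.log_mul (by positivity) (by positivity), Real.log_pow]
          ring
        have h4 : (j:ℝ) * Real.log 2 ≤ (j:ℝ) := by
          have : Real.log 2 ≤ 1 := by
            have := Real.log_le_sub_one_of_pos (show (0:ℝ) < 2 by norm_num)
            linarith
          nlinarith [Nat.cast_nonneg (α := ℝ) j]
        have hSξ : 0 ≤ Sp ξ N := Sp_nonneg hξ0 N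
        calc Tp ξ N - Tp ξ m ≤ Sp ξ N * (Hp N - Hp m) := h1
          _ ≤ Sp ξ N * ((j:ℝ) * Real.log 2) := by
              apply mul_le_mul_of_nonneg_left _ hSξ
              linarith
          _ ≤ Sp ξ N * (j:ℝ) := mul_le_mul_of_nonneg_left h4 hSξ
      have step4 : Sp η N ≤ C₂ * Tp ξ N := by
        calc Sp η N ≤ Tp η N := Sp_le_Tp hη0 hηdec hN1
          _ ≤ C₂ * Tp ξ N := hT2 N hN1
      -- Tp ξ N ≤ 2 (Tp ξ N - Tp ξ m) ≤ 2 j Sp ξ N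
      have : Tp ξ N ≤ 2 * ((j:ℝ) * Sp ξ N) := by
        have := step2
        have := step3
        linarith
      calc Sp η N ≤ C₂ * Tp ξ N := step4
        _ ≤ C₂ * (2 * ((j:ℝ) * Sp ξ N)) := mul_le_mul_of_nonneg_left this hC₂.le
        _ = (2*(j:ℝ)*C₂) * Sp ξ N := by ring
    -- extend to all N ≥ p
    have gen : ∀ N, p ≤ N → Sp η N ≤ (4*(j:ℝ)*C₂) * Sp ξ N := by
      intro N hpN
      set m := N / p with hm_def
      have hm1 : 1 ≤ m := (Nat.one_le_div_iff (by omega)).mpr hpN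
      have hple : p * m ≤ N := by
        rw [hm_def, mul_comm]
        exact Nat.div_mul_le_self N p
      have hNle : N ≤ 2 * (p * m) := by
        have hmodlt : N % p < p := Nat.mod_lt N (by omega)
        have h3 : p ≤ p * m := Nat.le_mul_of_pos_right p (by omega)
        have hNlt : N < p * m + p := by
          conv_lhs => rw [← Nat.div_add_mod N p]
          exact Nat.add_lt_add_left hmodlt _
        calc N ≤ p * m + p := hNlt.le
          _ ≤ p * m + p * m := Nat.add_le_add_left h3 _
          _ = 2 * (p * m) := (two_mul _).symm
      have h1 : Sp η N ≤ Sp η (2*(p*m)) := Sp_mono hη0 hNle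
      have h2 : Sp η (2*(p*m)) ≤ 2 * Sp η (p*m) :=
        Sp_double hη0 hηdec (Nat.one_le_iff_ne_zero.mpr (by omega))
      have h3 := key m hm1
      have h4 : Sp ξ (p*m) ≤ Sp ξ N := Sp_mono hξ0 hple
      have hjc : (0:ℝ) < 2*(j:ℝ)*C₂ := by
        have : (1:ℝ) ≤ (j:ℝ) := by exact_mod_cast hj1
        positivity
      calc Sp η N ≤ 2 * Sp η (p*m) := le_trans h1 h2
        _ ≤ 2 * ((2*(j:ℝ)*C₂) * Sp ξ (p*m)) := by linarith
        _ = (4*(j:ℝ)*C₂) * Sp ξ (p*m) := by ring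
        _ ≤ (4*(j:ℝ)*C₂) * Sp ξ N := by
            apply mul_le_mul_of_nonneg_left h4
            have : (1:ℝ) ≤ (j:ℝ) := by exact_mod_cast hj1
            positivity
    have hj' : (1:ℝ) ≤ (j:ℝ) := by exact_mod_cast hj1
    exact extend_small (Sp η) (Sp ξ) (Sp_mono hη0) (Sp_mono hξ0)
      (Sp_pos hξ0 hξpos le_rfl) p hp1 (by positivity) gen

end caseB

section caseA
variable {η ξ : ℕ → ℝ}

-- single step: if log m ≥ (1 - c/2) log M then Sp M ≤ (2C/c) Sp m
lemma stepA (hη0 : ∀ n, 0 ≤ η n)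
    {c C : ℝ} (hc : 0 < c) (hc1 : c ≤ 1) (hC : 1 ≤ C)
    (ha : ∀ m : ℕ, 2 ≤ m → c * Real.log m * Sp η m ≤ Tp η m ∧
          Tp η m ≤ C * Real.log m * Sp η m)
    {m M : ℕ} (hm : 2 ≤ m) (hmM : m ≤ M)
    (hθ : (1 - c/2) * Real.log M ≤ Real.log m) :
    Sp η M ≤ (2*C/c) * Sp η m := by
  have hM : 2 ≤ M := le_trans hm hmM
  have hlogM : 0 < Real.log M := by
    apply Real.log_pos
    exact_mod_cast by omega
  have hlogm : 0 ≤ Real.log m := Real.log_nonneg (by exact_mod_cast by omega)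
  have hlogmM : Real.log m ≤ Real.log M :=
    Real.log_le_log (by positivity) (by exact_mod_cast hmM)
  have h1 : c * Real.log M * Sp η M ≤ Tp η M := (ha M hM).1
  have h2 : Tp η m ≤ C * Real.log m * Sp η m := (ha m hm).2
  have h3 : Tp η M - Tp η m ≤ Sp η M * (Hp M - Hp m) := Tp_sub_le hη0 hmM
  have h4 : Hp M - Hp m ≤ Real.log M - Real.log m := Hp_sub_le m M (by omega) hmM
  have hSM : 0 ≤ Sp η M := Sp_nonneg hη0 M
  have hSm : 0 ≤ Sp η m := Sp_nonneg hη0 m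
  have h5 : Real.log M - Real.log m ≤ (c/2) * Real.log M := by linarith
  -- chain
  have h6 : c * Real.log M * Sp η M ≤ C * Real.log m * Sp η m + Sp η M * ((c/2) * Real.log M) := by
    have : Sp η M * (Hp M - Hp m) ≤ Sp η M * ((c/2) * Real.log M) :=
      mul_le_mul_of_nonneg_left (le_trans h4 h5) hSM
    linarith
  have h7 : (c/2) * Real.log M * Sp η M ≤ C * Real.log M * Sp η m := by
    have : C * Real.log m * Sp η m ≤ C * Real.log M * Sp η m := by
      apply mul_le_mul_of_nonneg_right _ hSm
      nlinarith
    linarith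
  rw [div_mul_eq_mul_div, le_div_iff₀ hc]
  nlinarith

lemma claimA (hη0 : ∀ n, 0 ≤ η n)
    {c C : ℝ} (hc : 0 < c) (hc1 : c ≤ 1) (hC : 1 ≤ C)
    (ha : ∀ m : ℕ, 2 ≤ m → c * Real.log m * Sp η m ≤ Tp η m ∧
          Tp η m ≤ C * Real.log m * Sp η m) :
    ∀ t : ℕ, ∀ M n : ℕ, 2 ≤ n → n ≤ M →
      (1 - c/2)^t * Real.log M + (t:ℝ) ≤ Real.log n →
      Sp η M ≤ (2*C/c)^t * Sp η n := by
  have hθ0 : 0 ≤ 1 - c/2 := by linarith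
  have hθ1 : 1 - c/2 < 1 := by linarith
  have hB1 : (1:ℝ) ≤ 2*C/c := by
    rw [le_div_iff₀ hc]; nlinarith
  intro t
  induction t with
  | zero =>
    intro M n hn2 hnM hlog
    simp only [pow_zero, one_mul, Nat.cast_zero, add_zero] at hlog ⊢
    have hn0 : (0:ℝ) < n := by exact_mod_cast by omega
    have hM0 : (0:ℝ) < M := by
      have : (n:ℝ) ≤ M := by exact_mod_cast hnM
      linarith
    have hMn : M ≤ n := by
      exact_mod_cast (Real.log_le_log_iff hM0 hn0).mp hlog
    have : M = n := le_antisymm hMn hnM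
    rw [this]
  | succ t ih =>
    intro M n hn2 hnM hlog
    have hM2 : 2 ≤ M := le_trans hn2 hnM
    have hM0 : (0:ℝ) < M := by exact_mod_cast by omega
    have hn0 : (0:ℝ) < n := by exact_mod_cast by omega
    have hlogM0 : 0 ≤ Real.log M := Real.log_nonneg (by exact_mod_cast by omega)
    have hSn : 0 ≤ Sp η n := Sp_nonneg hη0 n
    have hBt : (1:ℝ) ≤ (2*C/c)^t := one_le_pow₀ hB1
    by_cases hcase : (1 - c/2) * Real.log M ≤ Real.log n
    · have h := stepA hη0 hc hc1 hC ha hn2 hnM hcase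
      calc Sp η M ≤ (2*C/c) * Sp η n := h
        _ ≤ (2*C/c)^(t+1) * Sp η n := by
            apply mul_le_mul_of_nonneg_right _ hSn
            calc (2*C/c) = (2*C/c) * 1 := by ring
              _ ≤ (2*C/c) * (2*C/c)^t := by
                  apply mul_le_mul_of_nonneg_left hBt (by linarith)
              _ = (2*C/c)^(t+1) := by rw [pow_succ]; ring
    · push_neg at hcase
      set θ : ℝ := 1 - c/2 with hθ_def
      set m : ℕ := ⌈(M:ℝ)^θ⌉₊ with hm_def
      have hrp1 : (1:ℝ) ≤ (M:ℝ)^θ := Real.one_le_rpow (by exact_mod_cast by omega) hθ0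
      have hrp_pos : (0:ℝ) < (M:ℝ)^θ := by linarith
      have hm_lb : (M:ℝ)^θ ≤ (m:ℝ) := Nat.le_ceil _
      have hm_pos : 1 ≤ m := Nat.one_le_ceil_iff.mpr hrp_pos
      have hlogm_lb : θ * Real.log M ≤ Real.log m := by
        calc θ * Real.log M = Real.log ((M:ℝ)^θ) := (Real.log_rpow hM0 θ).symm
          _ ≤ Real.log m := Real.log_le_log hrp_pos hm_lb
      have hnm : n < m := by
        have : Real.log n < Real.log m := lt_of_lt_of_le hcase hlogm_lb
        have hm0 : (0:ℝ) < m := by exact_mod_cast hm_pos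
        exact_mod_cast (Real.log_lt_log_iff hn0 hm0).mp this
      have hm2 : 2 ≤ m := by omega
      have hmM : m ≤ M := by
        rw [hm_def]
        apply Nat.ceil_le.mpr
        calc (M:ℝ)^θ ≤ (M:ℝ)^(1:ℝ) :=
            Real.rpow_le_rpow_of_exponent_le (by exact_mod_cast by omega) (by linarith)
          _ = (M:ℝ) := Real.rpow_one _
      have hlogm_ub : Real.log m ≤ θ * Real.log M + 1 := by
        have h1 : (m:ℝ) < (M:ℝ)^θ + 1 := Nat.ceil_lt_add_one hrp_pos.le
        have h2 : (M:ℝ)^θ + 1 ≤ 2 * (M:ℝ)^θ := by linarith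
        have hlog2 : Real.log 2 ≤ 1 := by
          have := Real.log_le_sub_one_of_pos (show (0:ℝ) < 2 by norm_num)
          linarith
        calc Real.log m ≤ Real.log (2 * (M:ℝ)^θ) := by
              apply Real.log_le_log (by exact_mod_cast hm_pos)
              linarith
          _ = Real.log 2 + θ * Real.log M := by
              rw [Real.log_mul (by norm_num) (by positivity), Real.log_rpow hM0]
          _ ≤ θ * Real.log M + 1 := by linarith
      have hstep := stepA hη0 hc hc1 hC ha hm2 hmM hlogm_lb
      have hih : Sp η m ≤ (2*C/c)^t * Sp η n := by
        apply ih m n hn2 (by omega)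
        have hθt1 : θ^t ≤ 1 := pow_le_one₀ hθ0 hθ1.le
        have hθt0 : 0 ≤ θ^t := pow_nonneg hθ0 t
        have key : θ^t * Real.log m ≤ θ^(t+1) * Real.log M + 1 := by
          calc θ^t * Real.log m ≤ θ^t * (θ * Real.log M + 1) :=
              mul_le_mul_of_nonneg_left hlogm_ub hθt0
            _ = θ^(t+1) * Real.log M + θ^t := by rw [pow_succ]; ring
            _ ≤ θ^(t+1) * Real.log M + 1 := by linarith
        push_cast at hlog ⊢
        linarith
      calc Sp η M ≤ (2*C/c) * Sp η m := hstep
        _ ≤ (2*C/c) * ((2*C/c)^t * Sp η n) :=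
            mul_le_mul_of_nonneg_left hih (by linarith)
        _ = (2*C/c)^(t+1) * Sp η n := by rw [pow_succ]; ring


lemma Tp_nonneg (hξ0 : ∀ n, 0 ≤ ξ n) (m : ℕ) : 0 ≤ Tp ξ m :=
  Finset.sum_nonneg fun k _ => div_nonneg (Sp_nonneg hξ0 _) (by positivity)

lemma case_a_main
    (hη0 : ∀ n, 0 ≤ η n) (hηdec : ∀ n, η (n+1) ≤ η n)
    (hξ0 : ∀ n, 0 ≤ ξ n) (hξdec : ∀ n, ξ (n+1) ≤ ξ n)
    (hηpos : 0 < η 0) (hξpos : 0 < ξ 0)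
    {c C : ℝ} (hc : 0 < c) (hc1 : c ≤ 1) (hC : 1 ≤ C)
    (ha : ∀ m : ℕ, 2 ≤ m → c * Real.log m * Sp η m ≤ Tp η m ∧
          Tp η m ≤ C * Real.log m * Sp η m)
    {C₁ C₂ : ℝ} (hC₁ : 0 < C₁) (hC₂ : 0 < C₂)
    (hT1 : ∀ m, 1 ≤ m → Tp ξ m ≤ C₁ * Tp η m)
    (hT2 : ∀ m, 1 ≤ m → Tp η m ≤ C₂ * Tp ξ m) :
    (∃ C' : ℝ, 0 < C' ∧ ∀ m, 1 ≤ m → Sp ξ m ≤ C' * Sp η m) ∧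
    (∃ C' : ℝ, 0 < C' ∧ ∀ m, 1 ≤ m → Sp η m ≤ C' * Sp ξ m) := by
  have hlog2 : (1:ℝ)/2 < Real.log 2 := by
    have := Real.log_two_gt_d9
    linarith
  constructor
  · -- hard direction: Sp ξ ≲ Sp η
    set θ : ℝ := 1 - c/2 with hθ_def
    have hθ0 : 0 ≤ θ := by simp only [hθ_def]; linarith
    have hθ1 : θ < 1 := by simp only [hθ_def]; linarith
    obtain ⟨t₀, ht₀⟩ := exists_pow_lt_of_lt_one (show (0:ℝ) < 1/6 by norm_num) hθ1
    set B : ℝ := 2*C/c with hB_def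
    have hB0 : 0 < B := by positivity
    set N₀ : ℕ := max 2 ⌈Real.exp (2*(t₀:ℝ))⌉₊ with hN₀_def
    have main : ∀ N, N₀ ≤ N → Sp ξ N ≤ (3*C₁*C*B^t₀) * Sp η N := by
      intro N hN
      have hN2 : 2 ≤ N := le_trans (le_max_left _ _) hN
      have hN0 : (0:ℝ) < N := by exact_mod_cast by omega
      have hN1 : (1:ℝ) ≤ N := by exact_mod_cast by omega
      have hlogN0 : 0 < Real.log N := Real.log_pos (by exact_mod_cast hN2)
      have hlogN : 2*(t₀:ℝ) ≤ Real.log N := by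
        have h1 : Real.exp (2*(t₀:ℝ)) ≤ (⌈Real.exp (2*(t₀:ℝ))⌉₊ : ℝ) := Nat.le_ceil _
        have h2 : (⌈Real.exp (2*(t₀:ℝ))⌉₊ : ℝ) ≤ N := by
          exact_mod_cast le_trans (le_max_right 2 _) hN
        calc 2*(t₀:ℝ) = Real.log (Real.exp (2*(t₀:ℝ))) := (Real.log_exp _).symm
          _ ≤ Real.log N := Real.log_le_log (Real.exp_pos _) (le_trans h1 h2)
      set M : ℕ := N^3 with hM_def
      have hNM : N ≤ M := Nat.le_self_pow (by norm_num) N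
      have hM2 : 2 ≤ M := le_trans hN2 hNM
      have hMcast : ((M:ℕ):ℝ) = (N:ℝ)^3 := by rw [hM_def]; push_cast; ring
      have hlogM : Real.log M = 3 * Real.log N := by
        rw [hMcast, Real.log_pow]
        norm_num
      -- claim application
      have hclaim : Sp η M ≤ B^t₀ * Sp η N := by
        apply claimA hη0 hc hc1 hC ha t₀ M N hN2 hNM
        rw [hlogM]
        have e1 : θ^t₀ * (3 * Real.log N) ≤ (1/6) * (3 * Real.log N) := by
          apply mul_le_mul_of_nonneg_right ht₀.le (by linarith)
        have e2 : (t₀:ℝ) ≤ Real.log N / 2 := by linarith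
        linarith
      -- lower bound on Hp M - Hp N
      have hHp : Real.log N ≤ Hp M - Hp N := by
        have h1 := Hp_sub_ge N M hNM
        have h2 : Real.log ((N:ℝ)+1) ≤ 2 * Real.log N := by
          have hN2r : (2:ℝ) ≤ N := by exact_mod_cast hN2
          have hsq : (N:ℝ)+1 ≤ (N:ℝ)^2 := by nlinarith
          calc Real.log ((N:ℝ)+1) ≤ Real.log ((N:ℝ)^2) :=
              Real.log_le_log (by linarith) hsq
            _ = 2 * Real.log N := by rw [Real.log_pow]; norm_num
        have h3 : Real.log ((M:ℝ)) ≤ Real.log ((M:ℝ)+1) :=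
          Real.log_le_log (by rw [hMcast]; positivity) (by linarith)
        rw [hlogM] at h3
        linarith
      have hSξN : 0 ≤ Sp ξ N := Sp_nonneg hξ0 N
      have hchain : Sp ξ N * Real.log N ≤ Tp ξ M := by
        calc Sp ξ N * Real.log N ≤ Sp ξ N * (Hp M - Hp N) :=
            mul_le_mul_of_nonneg_left hHp hSξN
          _ ≤ Tp ξ M - Tp ξ N := Tp_sub_ge hξ0 hNM
          _ ≤ Tp ξ M := by linarith [Tp_nonneg hξ0 N]
      have hup : Tp ξ M ≤ (3*C₁*C*B^t₀ * Sp η N) * Real.log N := by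
        calc Tp ξ M ≤ C₁ * Tp η M := hT1 M (by omega)
          _ ≤ C₁ * (C * Real.log M * Sp η M) :=
              mul_le_mul_of_nonneg_left (ha M hM2).2 hC₁.le
          _ = C₁ * C * (3 * Real.log N) * Sp η M := by rw [hlogM]; ring
          _ ≤ C₁ * C * (3 * Real.log N) * (B^t₀ * Sp η N) := by
              apply mul_le_mul_of_nonneg_left hclaim
              have hC0 : (0:ℝ) < C := by linarith
              have : (0:ℝ) ≤ 3 * Real.log N := by linarith
              positivity
          _ = (3*C₁*C*B^t₀ * Sp η N) * Real.log N := by ring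
      exact le_of_mul_le_mul_right (le_trans hchain hup) hlogN0
    have hCpos : (0:ℝ) < 3*C₁*C*B^t₀ := by
      have : (0:ℝ) < C := by linarith
      positivity
    exact extend_small (Sp ξ) (Sp η) (Sp_mono hξ0) (Sp_mono hη0)
      (Sp_pos hη0 hηpos le_rfl) N₀ (by omega) hCpos main
  · -- easy direction: Sp η ≲ Sp ξ
    have main : ∀ m, 2 ≤ m → Sp η m ≤ (3*C₂/c) * Sp ξ m := by
      intro m hm
      have hm0 : (0:ℝ) < m := by exact_mod_cast by omega
      have hlogm : Real.log 2 ≤ Real.log m :=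
        Real.log_le_log (by norm_num) (by exact_mod_cast hm)
      have hlogm0 : 0 < Real.log m := by linarith
      have hSξ : 0 ≤ Sp ξ m := Sp_nonneg hξ0 m
      have h1 : c * Real.log m * Sp η m ≤ Tp η m := (ha m hm).1
      have h2 : Tp η m ≤ C₂ * Tp ξ m := hT2 m (by omega)
      have h3 : Tp ξ m ≤ Sp ξ m * Hp m := Tp_le hξ0 m
      have h4 : Hp m ≤ 1 + Real.log m := Hp_le m (by omega)
      have h5 : 1 + Real.log m ≤ 3 * Real.log m := by linarith
      have h6 : c * Real.log m * Sp η m ≤ C₂ * (Sp ξ m * (3 * Real.log m)) := by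
        have : Sp ξ m * Hp m ≤ Sp ξ m * (3 * Real.log m) :=
          mul_le_mul_of_nonneg_left (le_trans h4 h5) hSξ
        nlinarith
      have h7 : (c * Sp η m) * Real.log m ≤ (3 * C₂ * Sp ξ m) * Real.log m := by
        nlinarith
      have h8 : c * Sp η m ≤ 3 * C₂ * Sp ξ m := le_of_mul_le_mul_right h7 hlogm0
      rw [div_mul_eq_mul_div, le_div_iff₀ hc]
      nlinarith
    exact extend_small (Sp η) (Sp ξ) (Sp_mono hη0) (Sp_mono hξ0)
      (Sp_pos hξ0 hξpos le_rfl) 2 (by omega) (by positivity) main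

end caseA

theorem stmt_12 (η : ℕ → ℝ) (hη : IsC0Star η) (hpos : 0 < η 0)
    (hcond :
      (∃ c C : ℝ, 0 < c ∧ 0 < C ∧ ∀ n : ℕ, 1 ≤ n →
        c * Real.log (n + 1) ≤ am (am η) n / am η n ∧
        am (am η) n / am η n ≤ C * Real.log (n + 1)) ∨
      BigO (am η) η) :
    ∀ ξ : ℕ → ℝ, IsC0Star ξ →
      (BigO (am (am ξ)) (am (am η)) ∧ BigO (am (am η)) (am (am ξ))) →
      (BigO (am ξ) (am η) ∧ BigO (am η) (am ξ)) := by
  obtain ⟨hη0, hηdec, -⟩ := hη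
  rintro ξ ⟨hξ0, hξdec, -⟩ ⟨h1, h2⟩
  obtain ⟨C₁, hC₁, hB1⟩ := h1
  obtain ⟨C₂, hC₂, hB2⟩ := h2
  have hT1 : ∀ m, 1 ≤ m → Tp ξ m ≤ C₁ * Tp η m := Tp_le_of_bigO ξ η hB1
  have hT2 : ∀ m, 1 ≤ m → Tp η m ≤ C₂ * Tp ξ m := Tp_le_of_bigO η ξ hB2
  have hξpos : 0 < ξ 0 := by
    have h := hT2 1 le_rfl
    have e1 : Tp η 1 = η 0 := by simp [Tp, Sp]
    have e2 : Tp ξ 1 = ξ 0 := by simp [Tp, Sp]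
    rw [e1, e2] at h
    nlinarith
  suffices h : (∃ C, 0 < C ∧ ∀ m, 1 ≤ m → Sp ξ m ≤ C * Sp η m) ∧
      (∃ C, 0 < C ∧ ∀ m, 1 ≤ m → Sp η m ≤ C * Sp ξ m) by
    exact ⟨bigO_am_of_Sp _ _ h.1, bigO_am_of_Sp _ _ h.2⟩
  rcases hcond with ⟨c, C, hc, hC, hcc⟩ | hreg
  · -- case (a)
    have hc' : 0 < min c 1 := lt_min hc one_pos
    have ha : ∀ m : ℕ, 2 ≤ m →
        (min c 1) * Real.log m * Sp η m ≤ Tp η m ∧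
        Tp η m ≤ (max C 1) * Real.log m * Sp η m := by
      intro m hm
      obtain ⟨n, rfl⟩ : ∃ n, m = n + 1 := ⟨m-1, by omega⟩
      have hn1 : 1 ≤ n := by omega
      have hcc' := hcc n hn1
      have hSpos : 0 < Sp η (n+1) := Sp_pos hη0 hpos (by omega)
      have hnn : ((n:ℝ)+1) ≠ 0 := by positivity
      have hratio : am (am η) n / am η n = Tp η (n+1) / Sp η (n+1) := by
        rw [amam_eq, am_eq, div_div_div_cancel_right₀]
        exact hnn
      rw [hratio] at hcc'
      have hcast : Real.log (((n+1:ℕ)):ℝ) = Real.log ((n:ℝ)+1) := by push_cast; ring_nf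
      have hlog0 : 0 ≤ Real.log ((n:ℝ)+1) := Real.log_nonneg (by
        have : (1:ℝ) ≤ (n:ℝ) := by exact_mod_cast hn1
        linarith)
      constructor
      · have hup : c * Real.log ((n:ℝ)+1) * Sp η (n+1) ≤ Tp η (n+1) :=
          (le_div_iff₀ hSpos).mp hcc'.1
        rw [hcast]
        calc (min c 1) * Real.log ((n:ℝ)+1) * Sp η (n+1)
            ≤ c * Real.log ((n:ℝ)+1) * Sp η (n+1) := by
              apply mul_le_mul_of_nonneg_right _ hSpos.le
              exact mul_le_mul_of_nonneg_right (min_le_left c 1) hlog0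
          _ ≤ Tp η (n+1) := hup
      · have hup : Tp η (n+1) ≤ C * Real.log ((n:ℝ)+1) * Sp η (n+1) :=
          (div_le_iff₀ hSpos).mp hcc'.2
        rw [hcast]
        calc Tp η (n+1) ≤ C * Real.log ((n:ℝ)+1) * Sp η (n+1) := hup
          _ ≤ (max C 1) * Real.log ((n:ℝ)+1) * Sp η (n+1) := by
              apply mul_le_mul_of_nonneg_right _ hSpos.le
              exact mul_le_mul_of_nonneg_right (le_max_left C 1) hlog0
    exact case_a_main hη0 hηdec hξ0 hξdec hpos hξpos hc' (min_le_right c 1)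
      (le_max_right C 1) ha hC₁ hC₂ hT1 hT2
  · -- case (b)
    obtain ⟨K, hK, hKb⟩ := hreg
    have hreg' : ∀ n : ℕ, Sp η (n+1) ≤ (max K 1) * ((n:ℝ)+1) * η n := by
      intro n
      have h := hKb n
      rw [am_eq] at h
      have hnn : (0:ℝ) < (n:ℝ)+1 := by positivity
      have hb : Sp η (n+1) ≤ K * η n * ((n:ℝ)+1) := (div_le_iff₀ hnn).mp h
      calc Sp η (n+1) ≤ K * η n * ((n:ℝ)+1) := hb
        _ ≤ (max K 1) * η n * ((n:ℝ)+1) := by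
            apply mul_le_mul_of_nonneg_right _ hnn.le
            exact mul_le_mul_of_nonneg_right (le_max_left K 1) (hη0 n)
        _ = (max K 1) * ((n:ℝ)+1) * η n := by ring
    exact case_b_main hη0 hηdec hξ0 hξdec hξpos (le_max_right K 1) hreg' hC₁ hC₂ hT1 hT2
end
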